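/- arXiv:1503.01335 — 6 statements merged into one kernel-verified Lean document; each statement's English description precedes it below -/
import Mathlib

section
/- For every t > 0 and every Λ ∈ ℝ, the determinant of the multiplier symbols vanishes if and only if the dispersion cubic vanishes: m¹¹(t,Λ)·m²²(t,Λ) − m¹²(t,Λ)·m²¹(t,Λ) = 0 if and only if Λ³ + A(t)·Λ² + B(t)·Λ + C(t) = 0. -/
open Real Filter Asymptotics

/-- The coefficient `A(t)` of the dispersion cubic. -/
noncomputable def funA (d₁ d₂ γ₁ γ₂ t : ℝ) : ℝ :=
  -(1 / t) * (γ₂ * (t * d₂ + Real.sinh (t * d₂) * Real.cosh (t * d₁) / Real.cosh (t * (d₁ + d₂)))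
    + γ₁ * Real.sinh (t * d₁) * Real.cosh (t * d₂) / Real.cosh (t * (d₁ + d₂)))

/-- The coefficient `B(t)` of the dispersion cubic. -/
noncomputable def funB (d₁ d₂ g γ₁ γ₂ t : ℝ) : ℝ :=
  Real.tanh (t * (d₁ + d₂)) * ((γ₂ ^ 2 * d₂ - g) / t
    + γ₂ * (γ₁ - γ₂) * Real.sinh (t * d₁) * Real.sinh (t * d₂) /
        (t ^ 2 * Real.sinh (t * (d₁ + d₂))))

/-- The coefficient `C(t)` of the dispersion cubic. -/
noncomputable def funC (d₁ d₂ g γ₁ γ₂ t : ℝ) : ℝ :=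
  (g * Real.tanh (t * (d₁ + d₂)) / t ^ 2) *
    ((γ₁ - γ₂) * Real.sinh (t * d₁) * Real.sinh (t * d₂) / Real.sinh (t * (d₁ + d₂))
      + γ₂ * d₂ * t)

/-- The dispersion cubic `φ(t,Λ)`. -/
noncomputable def phi (d₁ d₂ g γ₁ γ₂ t Λ : ℝ) : ℝ :=
  Λ ^ 3 + funA d₁ d₂ γ₁ γ₂ t * Λ ^ 2 + funB d₁ d₂ g γ₁ γ₂ t * Λ + funC d₁ d₂ g γ₁ γ₂ t

/-- The multiplier symbol `m¹¹(t,Λ)`. -/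
noncomputable def m11 (d₂ γ₂ t Λ : ℝ) : ℝ := -2 * Λ * (γ₂ * d₂ - Λ) * t / Real.sinh (t * d₂)

/-- The multiplier symbol `m¹²(t,Λ)`. -/
noncomputable def m12 (d₂ g γ₂ t Λ : ℝ) : ℝ :=
  2 * (g + γ₂ * Λ - Λ ^ 2 * t / Real.tanh (t * d₂))

/-- The multiplier symbol `m²¹(t,Λ)`. -/
noncomputable def m21 (d₁ d₂ γ₁ γ₂ t Λ : ℝ) : ℝ :=
  γ₂ - γ₁ + (Λ - γ₂ * d₂) * (t / Real.tanh (t * d₁) + t / Real.tanh (t * d₂))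

/-- The multiplier symbol `m²²(t,Λ)`. -/
noncomputable def m22 (d₂ t Λ : ℝ) : ℝ := -Λ * t / Real.sinh (t * d₂)


private lemma det_key (t Λ g γ₁ γ₂ d₂ s1 c1 s2 c2 : ℝ)
    (hs1 : 0 < s1) (hs2 : 0 < s2) (hc1 : 0 < c1) (hc2 : 0 < c2)
    (ht : 0 < t)
    (hsd : 0 < s1 * c2 + c1 * s2) (hcd : 0 < c1 * c2 + s1 * s2)
    (h : c2 ^ 2 = s2 ^ 2 + 1) :
    -2 * Λ * (γ₂ * d₂ - Λ) * t / s2 * (-Λ * t / s2) -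
      2 * (g + γ₂ * Λ - Λ ^ 2 * t / (s2 / c2)) *
        (γ₂ - γ₁ + (Λ - γ₂ * d₂) * (t / (s1 / c1) + t / (s2 / c2))) =
    (2 * t ^ 2 * (c1 * c2 + s1 * s2) / (s1 * s2)) *
      (Λ ^ 3
        + (-(1 / t) * (γ₂ * (t * d₂ + s2 * c1 / (c1 * c2 + s1 * s2))
            + γ₁ * s1 * c2 / (c1 * c2 + s1 * s2))) * Λ ^ 2
        + ((s1 * c2 + c1 * s2) / (c1 * c2 + s1 * s2) * ((γ₂ ^ 2 * d₂ - g) / t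
            + γ₂ * (γ₁ - γ₂) * s1 * s2 / (t ^ 2 * (s1 * c2 + c1 * s2)))) * Λ
        + (g * ((s1 * c2 + c1 * s2) / (c1 * c2 + s1 * s2)) / t ^ 2) *
            ((γ₁ - γ₂) * s1 * s2 / (s1 * c2 + c1 * s2) + γ₂ * d₂ * t)) := by
  have hs1' := hs1.ne'
  have hs2' := hs2.ne'
  have hsd' := hsd.ne'
  have hcd' := hcd.ne'
  have ht' := ht.ne'
  field_simp
  linear_combination (Λ ^ 2 * t ^ 2 * s1 * (Λ - γ₂ * d₂)) * h

/-- the determinant of the multiplier symbols vanishes iff the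
dispersion cubic vanishes. -/
theorem det_symbols_eq_zero_iff_dispersion
    (d₁ d₂ g γ₁ γ₂ : ℝ) (hd₁ : 0 < d₁) (hd₂ : 0 < d₂) (hg : 0 < g) :
    ∀ t > (0 : ℝ), ∀ Λ : ℝ,
      m11 d₂ γ₂ t Λ * m22 d₂ t Λ - m12 d₂ g γ₂ t Λ * m21 d₁ d₂ γ₁ γ₂ t Λ = 0 ↔
        phi d₁ d₂ g γ₁ γ₂ t Λ = 0 := by
  intro t ht Λ
  have hs1 : 0 < Real.sinh (t * d₁) := by positivity
  have hs2 : 0 < Real.sinh (t * d₂) := by positivity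
  have hc1 : 0 < Real.cosh (t * d₁) := Real.cosh_pos _
  have hc2 : 0 < Real.cosh (t * d₂) := Real.cosh_pos _
  have hsd : 0 < Real.sinh (t * d₁) * Real.cosh (t * d₂)
      + Real.cosh (t * d₁) * Real.sinh (t * d₂) := by positivity
  have hcd : 0 < Real.cosh (t * d₁) * Real.cosh (t * d₂)
      + Real.sinh (t * d₁) * Real.sinh (t * d₂) := by positivity
  have harg : t * (d₁ + d₂) = t * d₁ + t * d₂ := by ring
  have key : m11 d₂ γ₂ t Λ * m22 d₂ t Λ - m12 d₂ g γ₂ t Λ * m21 d₁ d₂ γ₁ γ₂ t Λ =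
      (2 * t ^ 2 * (Real.cosh (t * d₁) * Real.cosh (t * d₂)
          + Real.sinh (t * d₁) * Real.sinh (t * d₂)) /
        (Real.sinh (t * d₁) * Real.sinh (t * d₂))) * phi d₁ d₂ g γ₁ γ₂ t Λ := by
    unfold m11 m12 m21 m22 phi funA funB funC
    rw [Real.tanh_eq_sinh_div_cosh, Real.tanh_eq_sinh_div_cosh, Real.tanh_eq_sinh_div_cosh,
      harg, Real.sinh_add, Real.cosh_add]
    exact det_key t Λ g γ₁ γ₂ d₂ _ _ _ _ hs1 hs2 hc1 hc2 ht hsd hcd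
      (Real.cosh_sq _)
  rw [key, mul_eq_zero]
  have hKne : (2 * t ^ 2 * (Real.cosh (t * d₁) * Real.cosh (t * d₂)
      + Real.sinh (t * d₁) * Real.sinh (t * d₂)) /
        (Real.sinh (t * d₁) * Real.sinh (t * d₂))) ≠ 0 := by positivity
  exact or_iff_right hKne
end

section
/- Assume γ₂ > 0 and γ₁ ≠ γ₂. Then there exist t₀ > 0 and functions Λ₁, Λ₂, Λ₃ : [t₀,∞) → ℝ such that for every t ≥ t₀: Λ₃(t) < Λ₂(t) < Λ₁(t) are precisely the three real roots of the cubic φ(t,·) (i.e. φ(t,Λ) = (Λ − Λ₁(t))(Λ − Λ₂(t))(Λ − Λ₃(t)) for all Λ ∈ ℝ), Λ₂(t) > 0 > Λ₃(t), and moreover Λ₁(t) → γ₂d₂, Λ₂(t) → 0, and Λ₃(t) → 0 as t → ∞. -/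
open Real Filter Asymptotics

lemma aux_ratio1 (x y : ℝ) (hx : 0 ≤ x) (hy : 0 ≤ y) :
    0 ≤ Real.sinh x * Real.cosh y / Real.cosh (x + y) ∧
    Real.sinh x * Real.cosh y / Real.cosh (x + y) ≤ 1 := by
  have h1 : 0 < Real.cosh (x + y) := Real.cosh_pos _
  have hsx : 0 ≤ Real.sinh x := Real.sinh_nonneg_iff.mpr hx
  have hsy : 0 ≤ Real.sinh y := Real.sinh_nonneg_iff.mpr hy
  constructor
  · exact div_nonneg (mul_nonneg hsx (Real.cosh_pos y).le) h1.le
  · rw [div_le_one h1, Real.cosh_add]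
    nlinarith [Real.sinh_lt_cosh x, Real.cosh_pos y]

lemma aux_ratio2 (x y : ℝ) (hx : 0 < x) (hy : 0 < y) :
    0 ≤ Real.sinh x * Real.sinh y / Real.sinh (x + y) ∧
    Real.sinh x * Real.sinh y / Real.sinh (x + y) ≤ 1 := by
  have h1 : 0 < Real.sinh (x + y) := Real.sinh_pos_iff.mpr (by linarith)
  have hsx : 0 ≤ Real.sinh x := Real.sinh_nonneg_iff.mpr hx.le
  have hsy : 0 ≤ Real.sinh y := Real.sinh_nonneg_iff.mpr hy.le
  constructor
  · exact div_nonneg (mul_nonneg hsx hsy) h1.le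
  · rw [div_le_one h1, Real.sinh_add]
    nlinarith [Real.sinh_lt_cosh x, Real.sinh_lt_cosh y]

lemma aux_abs_tanh_le_one (x : ℝ) : |Real.tanh x| ≤ 1 := by
  rw [Real.tanh_eq_sinh_div_cosh, abs_div, abs_of_pos (Real.cosh_pos x),
    div_le_one (Real.cosh_pos x)]
  rw [abs_le]
  constructor
  · have := Real.sinh_lt_cosh (-x)
    rw [Real.sinh_neg, Real.cosh_neg] at this; linarith
  · exact (Real.sinh_lt_cosh x).le

lemma aux_tanh_pos {x : ℝ} (hx : 0 < x) : 0 < Real.tanh x := by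
  rw [Real.tanh_eq_sinh_div_cosh]
  exact div_pos (Real.sinh_pos_iff.mpr hx) (Real.cosh_pos x)

lemma aux_cubic_factor (a b c r₁ r₂ r₃ : ℝ) (h12 : r₂ < r₁) (h23 : r₃ < r₂)
    (e1 : r₁ ^ 3 + a * r₁ ^ 2 + b * r₁ + c = 0)
    (e2 : r₂ ^ 3 + a * r₂ ^ 2 + b * r₂ + c = 0)
    (e3 : r₃ ^ 3 + a * r₃ ^ 2 + b * r₃ + c = 0) :
    ∀ x : ℝ, x ^ 3 + a * x ^ 2 + b * x + c = (x - r₁) * (x - r₂) * (x - r₃) := by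
  have h12' : r₁ - r₂ ≠ 0 := sub_ne_zero.mpr h12.ne'
  have h13' : r₁ - r₃ ≠ 0 := sub_ne_zero.mpr (h23.trans h12).ne'
  have h23' : r₂ - r₃ ≠ 0 := sub_ne_zero.mpr h23.ne'
  have E12 : r₁ ^ 2 + r₁ * r₂ + r₂ ^ 2 + a * (r₁ + r₂) + b = 0 := by
    have h : (r₁ - r₂) * (r₁ ^ 2 + r₁ * r₂ + r₂ ^ 2 + a * (r₁ + r₂) + b) = 0 := by
      linear_combination e1 - e2
    exact (mul_eq_zero.mp h).resolve_left h12'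
  have E13 : r₁ ^ 2 + r₁ * r₃ + r₃ ^ 2 + a * (r₁ + r₃) + b = 0 := by
    have h : (r₁ - r₃) * (r₁ ^ 2 + r₁ * r₃ + r₃ ^ 2 + a * (r₁ + r₃) + b) = 0 := by
      linear_combination e1 - e3
    exact (mul_eq_zero.mp h).resolve_left h13'
  have ha : a = -(r₁ + r₂ + r₃) := by
    have h : (r₂ - r₃) * (r₁ + r₂ + r₃ + a) = 0 := by linear_combination E12 - E13
    have := (mul_eq_zero.mp h).resolve_left h23'
    linarith
  subst ha
  have hb : b = r₁ * r₂ + r₁ * r₃ + r₂ * r₃ := by linear_combination E12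
  subst hb
  intro x
  linear_combination e1

/-- for `γ₂ > 0`, `γ₁ ≠ γ₂`, for large `t` the dispersion cubic has
three real roots `Λ₃(t) < Λ₂(t) < Λ₁(t)` with `Λ₂ > 0 > Λ₃`,
`Λ₁(t) → γ₂d₂` and `Λ₂(t), Λ₃(t) → 0`. -/
theorem three_roots_of_dispersion
    (d₁ d₂ g γ₁ γ₂ : ℝ) (hd₁ : 0 < d₁) (hd₂ : 0 < d₂) (hg : 0 < g)
    (hγ₂ : 0 < γ₂) (hne : γ₁ ≠ γ₂) :
    ∃ t₀ > (0 : ℝ), ∃ Λ₁ Λ₂ Λ₃ : ℝ → ℝ,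
      (∀ t ≥ t₀,
        Λ₃ t < Λ₂ t ∧ Λ₂ t < Λ₁ t ∧ 0 < Λ₂ t ∧ Λ₃ t < 0 ∧
        ∀ Λ : ℝ, phi d₁ d₂ g γ₁ γ₂ t Λ = (Λ - Λ₁ t) * (Λ - Λ₂ t) * (Λ - Λ₃ t)) ∧
      Tendsto Λ₁ atTop (nhds (γ₂ * d₂)) ∧
      Tendsto Λ₂ atTop (nhds 0) ∧
      Tendsto Λ₃ atTop (nhds 0) := by
  set κ := γ₂ * d₂ with hκdef
  have hκ : 0 < κ := mul_pos hγ₂ hd₂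
  have hd : 0 < d₁ + d₂ := by linarith
  -- basic limits
  have hdiv : ∀ C : ℝ, Tendsto (fun t : ℝ => C / t) atTop (nhds 0) :=
    fun C => tendsto_const_nhds.div_atTop tendsto_id
  have hdiv2 : ∀ C : ℝ, Tendsto (fun t : ℝ => C / t ^ 2) atTop (nhds 0) :=
    fun C => tendsto_const_nhds.div_atTop (tendsto_pow_atTop two_ne_zero)
  -- limit of A
  have hA : Tendsto (fun t => funA d₁ d₂ γ₁ γ₂ t) atTop (nhds (-κ)) := by
    rw [← tendsto_sub_nhds_zero_iff]
    apply squeeze_zero_norm' ?_ (hdiv (|γ₂| + |γ₁|))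
    filter_upwards [eventually_gt_atTop (0 : ℝ)] with t ht
    have ht' : t ≠ 0 := ne_of_gt ht
    set ch := Real.cosh (t * (d₁ + d₂)) with hch
    set X := Real.sinh (t * d₂) * Real.cosh (t * d₁) / ch with hXdef
    set Y := Real.sinh (t * d₁) * Real.cosh (t * d₂) / ch with hYdef
    have hX : 0 ≤ X ∧ X ≤ 1 := by
      rw [hXdef, hch, show t * (d₁ + d₂) = t * d₂ + t * d₁ by ring]
      exact aux_ratio1 _ _ (by positivity) (by positivity)
    have hY : 0 ≤ Y ∧ Y ≤ 1 := by
      rw [hYdef, hch, show t * (d₁ + d₂) = t * d₁ + t * d₂ by ring]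
      exact aux_ratio1 _ _ (by positivity) (by positivity)
    have hXb : |X| ≤ 1 := abs_le.mpr ⟨by linarith [hX.1], hX.2⟩
    have hYb : |Y| ≤ 1 := abs_le.mpr ⟨by linarith [hY.1], hY.2⟩
    have hfa : funA d₁ d₂ γ₁ γ₂ t = -(1 / t) * (γ₂ * (t * d₂ + X) + γ₁ * Y) := by
      rw [funA, hXdef, hYdef, hch]; ring
    have key : funA d₁ d₂ γ₁ γ₂ t - -κ = -((γ₂ * X + γ₁ * Y) / t) := by
      rw [hfa, hκdef]; field_simp; ring
    rw [key, Real.norm_eq_abs, abs_neg, abs_div, abs_of_pos ht]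
    have h1 : |γ₂ * X + γ₁ * Y| ≤ |γ₂| + |γ₁| := by
      refine (abs_add_le _ _).trans ?_
      rw [abs_mul, abs_mul]
      nlinarith [abs_nonneg γ₂, abs_nonneg γ₁]
    exact div_le_div_of_nonneg_right h1 ht.le
  -- limit of B
  have hB : Tendsto (fun t => funB d₁ d₂ g γ₁ γ₂ t) atTop (nhds 0) := by
    apply squeeze_zero_norm'
      ?_ (by simpa using (hdiv (|γ₂ ^ 2 * d₂ - g|)).add (hdiv2 (|γ₂ * (γ₁ - γ₂)|)))
    filter_upwards [eventually_gt_atTop (0 : ℝ)] with t ht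
    set S := Real.sinh (t * d₁) * Real.sinh (t * d₂) / Real.sinh (t * (d₁ + d₂)) with hSdef
    have hS : 0 ≤ S ∧ S ≤ 1 := by
      rw [hSdef, show t * (d₁ + d₂) = t * d₁ + t * d₂ by ring]
      exact aux_ratio2 _ _ (by positivity) (by positivity)
    have hSb : |S| ≤ 1 := abs_le.mpr ⟨by linarith [hS.1], hS.2⟩
    have hfb : funB d₁ d₂ g γ₁ γ₂ t =
        Real.tanh (t * (d₁ + d₂)) * ((γ₂ ^ 2 * d₂ - g) / t + γ₂ * (γ₁ - γ₂) / t ^ 2 * S) := by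
      rw [funB, hSdef]; ring
    rw [hfb, Real.norm_eq_abs, abs_mul]
    have htn : |Real.tanh (t * (d₁ + d₂))| ≤ 1 := aux_abs_tanh_le_one _
    have h1 : |(γ₂ ^ 2 * d₂ - g) / t + γ₂ * (γ₁ - γ₂) / t ^ 2 * S|
        ≤ |γ₂ ^ 2 * d₂ - g| / t + |γ₂ * (γ₁ - γ₂)| / t ^ 2 := by
      refine (abs_add_le _ _).trans ?_
      rw [abs_div, abs_of_pos ht, abs_mul, abs_div, abs_of_pos (pow_pos ht 2)]
      have : |γ₂ * (γ₁ - γ₂)| / t ^ 2 * |S| ≤ |γ₂ * (γ₁ - γ₂)| / t ^ 2 :=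
        mul_le_of_le_one_right (by positivity) hSb
      linarith
    calc |Real.tanh (t * (d₁ + d₂))| * |(γ₂ ^ 2 * d₂ - g) / t + γ₂ * (γ₁ - γ₂) / t ^ 2 * S|
        ≤ 1 * (|γ₂ ^ 2 * d₂ - g| / t + |γ₂ * (γ₁ - γ₂)| / t ^ 2) := by
          apply mul_le_mul htn h1 (abs_nonneg _) one_pos.le
      _ = |γ₂ ^ 2 * d₂ - g| / t + |γ₂ * (γ₁ - γ₂)| / t ^ 2 := one_mul _
      _ = |γ₂ ^ 2 * d₂ - g| / t + |γ₂| * |γ₁ - γ₂| / t ^ 2 := by rw [abs_mul]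
  -- limit of C
  have hC : Tendsto (fun t => funC d₁ d₂ g γ₁ γ₂ t) atTop (nhds 0) := by
    apply squeeze_zero_norm'
      ?_ (by simpa using (hdiv2 (g * |γ₁ - γ₂|)).add (hdiv (g * κ)))
    filter_upwards [eventually_gt_atTop (0 : ℝ)] with t ht
    have ht' : t ≠ 0 := ne_of_gt ht
    set S := Real.sinh (t * d₁) * Real.sinh (t * d₂) / Real.sinh (t * (d₁ + d₂)) with hSdef
    have hS : 0 ≤ S ∧ S ≤ 1 := by
      rw [hSdef, show t * (d₁ + d₂) = t * d₁ + t * d₂ by ring]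
      exact aux_ratio2 _ _ (by positivity) (by positivity)
    have hSb : |S| ≤ 1 := abs_le.mpr ⟨by linarith [hS.1], hS.2⟩
    have hfc : funC d₁ d₂ g γ₁ γ₂ t =
        g * Real.tanh (t * (d₁ + d₂)) / t ^ 2 * ((γ₁ - γ₂) * S + κ * t) := by
      rw [funC, hSdef, hκdef]; ring
    rw [hfc, Real.norm_eq_abs, abs_mul]
    have htn : |Real.tanh (t * (d₁ + d₂))| ≤ 1 := aux_abs_tanh_le_one _
    have h0 : |g * Real.tanh (t * (d₁ + d₂)) / t ^ 2| ≤ g / t ^ 2 := by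
      rw [abs_div, abs_of_pos (pow_pos ht 2), abs_mul, abs_of_pos hg]
      apply div_le_div_of_nonneg_right ?_ (pow_pos ht 2).le
      nlinarith [abs_nonneg (Real.tanh (t * (d₁ + d₂)))]
    have h1 : |(γ₁ - γ₂) * S + κ * t| ≤ |γ₁ - γ₂| + κ * t := by
      refine (abs_add_le _ _).trans ?_
      rw [abs_mul, abs_of_pos (mul_pos hκ ht)]
      have : |γ₁ - γ₂| * |S| ≤ |γ₁ - γ₂| := mul_le_of_le_one_right (abs_nonneg _) hSb
      linarith
    calc |g * Real.tanh (t * (d₁ + d₂)) / t ^ 2| * |(γ₁ - γ₂) * S + κ * t|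
        ≤ g / t ^ 2 * (|γ₁ - γ₂| + κ * t) := by
          apply mul_le_mul h0 h1 (abs_nonneg _) (by positivity)
      _ = g * |γ₁ - γ₂| / t ^ 2 + g * κ / t := by field_simp
  -- eventual positivity of C
  have hCpos : ∀ᶠ t in atTop, 0 < funC d₁ d₂ g γ₁ γ₂ t := by
    filter_upwards [eventually_gt_atTop (0 : ℝ), eventually_gt_atTop (|γ₁ - γ₂| / κ)]
      with t ht ht2
    set S := Real.sinh (t * d₁) * Real.sinh (t * d₂) / Real.sinh (t * (d₁ + d₂)) with hSdef
    have hS : 0 ≤ S ∧ S ≤ 1 := by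
      rw [hSdef, show t * (d₁ + d₂) = t * d₁ + t * d₂ by ring]
      exact aux_ratio2 _ _ (by positivity) (by positivity)
    have hSb : |S| ≤ 1 := abs_le.mpr ⟨by linarith [hS.1], hS.2⟩
    have hfc : funC d₁ d₂ g γ₁ γ₂ t =
        g * Real.tanh (t * (d₁ + d₂)) / t ^ 2 * ((γ₁ - γ₂) * S + κ * t) := by
      rw [funC, hSdef, hκdef]; ring
    rw [hfc]
    have hth : 0 < Real.tanh (t * (d₁ + d₂)) := aux_tanh_pos (by positivity)
    have hlt : |γ₁ - γ₂| < κ * t := by rwa [div_lt_iff₀ hκ, mul_comm] at ht2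
    have hge : -|γ₁ - γ₂| ≤ (γ₁ - γ₂) * S := by
      have := neg_abs_le ((γ₁ - γ₂) * S)
      rw [abs_mul] at this
      nlinarith [abs_nonneg (γ₁ - γ₂)]
    have : 0 < (γ₁ - γ₂) * S + κ * t := by linarith
    positivity
  -- pointwise limit of phi
  have hphi : ∀ x : ℝ, Tendsto (fun t => phi d₁ d₂ g γ₁ γ₂ t x) atTop
      (nhds (x ^ 3 - κ * x ^ 2)) := by
    intro x
    have h := ((((tendsto_const_nhds : Tendsto (fun _ : ℝ => x ^ 3) atTop _).add
      (hA.mul_const (x ^ 2))).add (hB.mul_const x)).add hC)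
    have e : x ^ 3 + -κ * x ^ 2 + 0 * x + 0 = x ^ 3 - κ * x ^ 2 := by ring
    rw [e] at h
    exact h
  -- eventual sign pattern
  have key : ∀ ε : ℝ, 0 < ε → ε ≤ κ / 2 → ∀ᶠ t in atTop,
      0 < funC d₁ d₂ g γ₁ γ₂ t ∧ phi d₁ d₂ g γ₁ γ₂ t (-ε) < 0 ∧
      phi d₁ d₂ g γ₁ γ₂ t ε < 0 ∧ phi d₁ d₂ g γ₁ γ₂ t (κ - ε) < 0 ∧
      0 < phi d₁ d₂ g γ₁ γ₂ t (κ + ε) := by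
    intro ε h1 h2
    have hκε : 0 < κ - ε := by linarith
    have l1 : (-ε) ^ 3 - κ * (-ε) ^ 2 < 0 := by nlinarith [mul_pos h1 (mul_pos h1 h1), mul_pos hκ (mul_pos h1 h1)]
    have l2 : ε ^ 3 - κ * ε ^ 2 < 0 := by nlinarith [mul_pos h1 (mul_pos h1 h1), mul_pos hκε (mul_pos h1 h1)]
    have l3 : (κ - ε) ^ 3 - κ * (κ - ε) ^ 2 < 0 := by nlinarith [mul_pos h1 (mul_pos hκε hκε)]
    have l4 : 0 < (κ + ε) ^ 3 - κ * (κ + ε) ^ 2 := by nlinarith [mul_pos h1 (mul_pos (add_pos hκ h1) (add_pos hκ h1))]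
    filter_upwards [hCpos, (hphi (-ε)).eventually_lt_const l1,
      (hphi ε).eventually_lt_const l2, (hphi (κ - ε)).eventually_lt_const l3,
      (hphi (κ + ε)).eventually_const_lt l4] with t a b c' d' e'
    exact ⟨a, b, c', d', e'⟩
  -- eventual existence of three located roots
  have root_step : ∀ ε : ℝ, 0 < ε → ε ≤ κ / 2 → ∀ᶠ t in atTop,
      ∃ r₁ r₂ r₃ : ℝ, (κ - ε < r₁ ∧ r₁ < κ + ε) ∧ (0 < r₂ ∧ r₂ < ε) ∧
        (-ε < r₃ ∧ r₃ < 0) ∧ phi d₁ d₂ g γ₁ γ₂ t r₁ = 0 ∧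
        phi d₁ d₂ g γ₁ γ₂ t r₂ = 0 ∧ phi d₁ d₂ g γ₁ γ₂ t r₃ = 0 := by
    intro ε h1 h2
    filter_upwards [key ε h1 h2] with t hsign
    obtain ⟨hc, hneg, hpos', hkm, hkp⟩ := hsign
    have hcont : Continuous fun x : ℝ => phi d₁ d₂ g γ₁ γ₂ t x := by
      unfold phi; fun_prop
    have hphi0 : 0 < phi d₁ d₂ g γ₁ γ₂ t 0 := by simpa [phi] using hc
    obtain ⟨r₃, hm3, hr₃⟩ := intermediate_value_Ioo (by linarith : -ε ≤ (0:ℝ))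
      hcont.continuousOn (Set.mem_Ioo.mpr ⟨hneg, hphi0⟩)
    obtain ⟨r₂, hm2, hr₂⟩ := intermediate_value_Ioo' (by linarith : (0:ℝ) ≤ ε)
      hcont.continuousOn (Set.mem_Ioo.mpr ⟨hpos', hphi0⟩)
    obtain ⟨r₁, hm1, hr₁⟩ := intermediate_value_Ioo (by linarith : κ - ε ≤ κ + ε)
      hcont.continuousOn (Set.mem_Ioo.mpr ⟨hkm, hkp⟩)
    exact ⟨r₁, r₂, r₃, ⟨hm1.1, hm1.2⟩, ⟨hm2.1, hm2.2⟩, ⟨hm3.1, hm3.2⟩, hr₁, hr₂, hr₃⟩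
  obtain ⟨t₀', hstep⟩ := eventually_atTop.mp (root_step (κ / 2) (by linarith) le_rfl)
  set t₀ : ℝ := max t₀' 1 with ht₀def
  refine ⟨t₀, lt_of_lt_of_le one_pos (le_max_right _ _), ?_⟩
  have hex : ∀ t : ℝ, ∃ r : ℝ × ℝ × ℝ, t₀ ≤ t →
      (r.2.2 < r.2.1 ∧ r.2.1 < r.1 ∧ 0 < r.2.1 ∧ r.2.2 < 0 ∧
        ∀ Λ : ℝ, phi d₁ d₂ g γ₁ γ₂ t Λ = (Λ - r.1) * (Λ - r.2.1) * (Λ - r.2.2)) := by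
    intro t
    by_cases h : t₀ ≤ t
    · obtain ⟨r₁, r₂, r₃, hm1, hm2, hm3, e1, e2, e3⟩ :=
        hstep t (le_trans (le_max_left _ _) h)
      have h12 : r₂ < r₁ := by
        have : κ - κ / 2 = κ / 2 := by ring
        calc r₂ < κ / 2 := hm2.2
          _ = κ - κ / 2 := by ring
          _ < r₁ := hm1.1
      have h23 : r₃ < r₂ := lt_trans hm3.2 hm2.1
      have fact := aux_cubic_factor (funA d₁ d₂ γ₁ γ₂ t) (funB d₁ d₂ g γ₁ γ₂ t)
        (funC d₁ d₂ g γ₁ γ₂ t) r₁ r₂ r₃ h12 h23 e1 e2 e3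
      exact ⟨(r₁, r₂, r₃), fun _ => ⟨h23, h12, hm2.1, hm3.2, fact⟩⟩
    · exact ⟨(0, 0, 0), fun ht => absurd ht h⟩
  choose F hF using hex
  have bounds : ∀ ε : ℝ, 0 < ε → ∀ᶠ t in atTop,
      |(F t).1 - κ| < ε ∧ |(F t).2.1| < ε ∧ |(F t).2.2| < ε := by
    intro ε hε
    set ε' := min ε (κ / 2) with hε'def
    have hε'0 : 0 < ε' := lt_min hε (by linarith)
    have hε'2 : ε' ≤ κ / 2 := min_le_right _ _
    have hε'ε : ε' ≤ ε := min_le_left _ _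
    filter_upwards [key ε' hε'0 hε'2, eventually_ge_atTop t₀] with t hsign hT
    obtain ⟨hc, hneg, hpos', hkm, hkp⟩ := hsign
    obtain ⟨h23, h12, h2pos, h3neg, fact⟩ := hF t hT
    rw [fact] at hneg hpos' hkm hkp
    have hb2 : (F t).2.1 < ε' := by
      by_contra hcon; push_neg at hcon
      have f1 : ε' - (F t).1 ≤ 0 := by linarith
      have f2 : ε' - (F t).2.1 ≤ 0 := by linarith
      have f3 : 0 ≤ ε' - (F t).2.2 := by linarith
      have h0 : 0 ≤ (ε' - (F t).1) * (ε' - (F t).2.1) * (ε' - (F t).2.2) :=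
        mul_nonneg (mul_nonneg_of_nonpos_of_nonpos f1 f2) f3
      linarith
    have hb3 : -ε' < (F t).2.2 := by
      by_contra hcon; push_neg at hcon
      have f1 : -ε' - (F t).1 ≤ 0 := by linarith
      have f2 : -ε' - (F t).2.1 ≤ 0 := by linarith
      have f3 : 0 ≤ -ε' - (F t).2.2 := by linarith
      have h0 : 0 ≤ (-ε' - (F t).1) * (-ε' - (F t).2.1) * (-ε' - (F t).2.2) :=
        mul_nonneg (mul_nonneg_of_nonpos_of_nonpos f1 f2) f3
      linarith
    have hb1l : κ - ε' < (F t).1 := by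
      by_contra hcon; push_neg at hcon
      have f1 : 0 ≤ κ - ε' - (F t).1 := by linarith
      have f2 : 0 ≤ κ - ε' - (F t).2.1 := by linarith
      have f3 : 0 ≤ κ - ε' - (F t).2.2 := by linarith
      have h0 : 0 ≤ (κ - ε' - (F t).1) * (κ - ε' - (F t).2.1) * (κ - ε' - (F t).2.2) :=
        mul_nonneg (mul_nonneg f1 f2) f3
      linarith
    have hb1r : (F t).1 < κ + ε' := by
      by_contra hcon; push_neg at hcon
      have f1 : κ + ε' - (F t).1 ≤ 0 := by linarith
      have f2 : 0 ≤ κ + ε' - (F t).2.1 := by linarith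
      have f3 : 0 ≤ κ + ε' - (F t).2.2 := by linarith
      have h0 : (κ + ε' - (F t).1) * (κ + ε' - (F t).2.1) * (κ + ε' - (F t).2.2) ≤ 0 :=
        mul_nonpos_of_nonpos_of_nonneg (mul_nonpos_of_nonpos_of_nonneg f1 f2) f3
      linarith
    refine ⟨?_, ?_, ?_⟩ <;> rw [abs_lt] <;> constructor <;> linarith
  refine ⟨fun t => (F t).1, fun t => (F t).2.1, fun t => (F t).2.2,
    fun t ht => hF t ht, ?_, ?_, ?_⟩
  · rw [Metric.tendsto_nhds]
    intro ε hε
    filter_upwards [bounds ε hε] with t h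
    rw [Real.dist_eq]
    exact h.1
  · rw [Metric.tendsto_nhds]
    intro ε hε
    filter_upwards [bounds ε hε] with t h
    rw [Real.dist_eq, sub_zero]
    exact h.2.1
  · rw [Metric.tendsto_nhds]
    intro ε hε
    filter_upwards [bounds ε hε] with t h
    rw [Real.dist_eq, sub_zero]
    exact h.2.2
end

section
/- Assume γ₂ > 0, γ₁ ≠ γ₂, and let Λ₁(t) denote the largest real root of φ(t,·). Then, for all sufficiently large t: if γ₁ < γ₂ the stagnation condition for the layer adjacent to the surface holds, Λ₁(t)·(Λ₁(t) − γ₂d₂) ≤ 0; and if γ₁ > γ₂ the stagnation condition for the bottom layer holds, (Λ₁(t) − γ₂d₂)·(Λ₁(t) − γ₁d₁ − γ₂d₂) ≤ 0. -/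
set_option maxHeartbeats 1000000

open Real Filter Asymptotics

private lemma phi_sub_aux (d₁ d₂ g γ₁ γ₂ t x y : ℝ) :
    phi d₁ d₂ g γ₁ γ₂ t y - phi d₁ d₂ g γ₁ γ₂ t x
      = (y - x) * (x ^ 2 + x * y + y ^ 2 + funA d₁ d₂ γ₁ γ₂ t * (x + y)
          + funB d₁ d₂ g γ₁ γ₂ t) := by
  unfold phi; ring

private lemma term_le_abs (a u v : ℝ) (hu : 0 ≤ u) (huv : u ≤ v) : a * u ≤ |a| * v := by
  nlinarith [le_abs_self a, neg_abs_le a, abs_nonneg a]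

private lemma neg_abs_le_term (a u v : ℝ) (hu : 0 ≤ u) (huv : u ≤ v) : -(|a| * v) ≤ a * u := by
  nlinarith [le_abs_self a, neg_abs_le a, abs_nonneg a]

private lemma eventual_facts (d₁ d₂ g γ₁ γ₂ : ℝ) (hd₁ : 0 < d₁) (hd₂ : 0 < d₂)
    (hg : 0 < g) (hγ₂ : 0 < γ₂) :
    ∀ᶠ t in atTop,
      ((γ₁ < γ₂ → 0 < phi d₁ d₂ g γ₁ γ₂ t (γ₂ * d₂)) ∧
       (γ₂ < γ₁ → phi d₁ d₂ g γ₁ γ₂ t (γ₂ * d₂) < 0)) ∧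
      phi d₁ d₂ g γ₁ γ₂ t (γ₂ * d₂ / 2) < 0 ∧
      (γ₂ < γ₁ → 0 < phi d₁ d₂ g γ₁ γ₂ t (γ₁ * d₁ + γ₂ * d₂)) ∧
      ∀ x y : ℝ, γ₂ * d₂ ≤ x → x < y →
        phi d₁ d₂ g γ₁ γ₂ t x < phi d₁ d₂ g γ₁ γ₂ t y := by
  set m : ℝ := γ₂ * d₂ with hmdef
  have hm : 0 < m := by rw [hmdef]; positivity
  set K₁ : ℝ := |γ₁| + |γ₂| with hK₁def
  set K₂ : ℝ := |γ₂ ^ 2 * d₂ - g| + |γ₂ * (γ₁ - γ₂)| with hK₂def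
  set K₃ : ℝ := g * |γ₁ - γ₂| + g * m with hK₃def
  set M : ℝ := γ₁ * d₁ + m with hMdef
  set X3 : ℝ := m ^ 2 * K₁ / 4 + K₂ * m / 2 + K₃ with hX3def
  set X4 : ℝ := K₁ * M ^ 2 + K₂ * M + K₃ with hX4def
  clear_value m K₁ K₂ K₃ M X3 X4
  have hK₁0 : 0 ≤ K₁ := by rw [hK₁def]; positivity
  have hK₂0 : 0 ≤ K₂ := by rw [hK₂def]; positivity
  have hK₃0 : 0 ≤ K₃ := by rw [hK₃def, hmdef]; positivity
  have hX30 : 0 ≤ X3 := by rw [hX3def]; nlinarith only [hK₁0, hK₂0, hK₃0, hm, sq_nonneg m]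
  set T : ℝ := 1 + 4 * K₁ / m + (m * γ₂ + g) / m ^ 2 + X3 / (m ^ 3 / 8)
      + 4 * K₂ / m ^ 2 + |X4 / (M ^ 2 * (γ₁ * d₁))| with hTdef
  filter_upwards [eventually_ge_atTop T] with t htT
  rw [hTdef] at htT
  have hq1 : 0 ≤ 4 * K₁ / m := by positivity
  have hq2 : 0 ≤ (m * γ₂ + g) / m ^ 2 := by positivity
  have hq3 : 0 ≤ X3 / (m ^ 3 / 8) := by positivity
  have hq4 : 0 ≤ 4 * K₂ / m ^ 2 := by positivity
  have hq5 : 0 ≤ |X4 / (M ^ 2 * (γ₁ * d₁))| := abs_nonneg _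
  have ht1 : 1 ≤ t := by linarith
  have ht0 : 0 < t := by linarith
  have hta : 4 * K₁ < m * t := by
    have h1 : 4 * K₁ / m < t := by linarith
    rw [div_lt_iff₀ hm] at h1; linarith
  have htb : m * γ₂ + g < t * m ^ 2 := by
    have h1 : (m * γ₂ + g) / m ^ 2 < t := by linarith
    rw [div_lt_iff₀ (by positivity : (0:ℝ) < m ^ 2)] at h1; linarith
  have htc : X3 < t * (m ^ 3 / 8) := by
    have h1 : X3 / (m ^ 3 / 8) < t := by linarith
    rw [div_lt_iff₀ (by positivity : (0:ℝ) < m ^ 3 / 8)] at h1; linarith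
  have htd : 4 * K₂ < m ^ 2 * t := by
    have h1 : 4 * K₂ / m ^ 2 < t := by linarith
    rw [div_lt_iff₀ (by positivity : (0:ℝ) < m ^ 2)] at h1; linarith
  have hte : X4 / (M ^ 2 * (γ₁ * d₁)) < t := by
    have := le_abs_self (X4 / (M ^ 2 * (γ₁ * d₁)))
    linarith
  clear htT hq1 hq2 hq3 hq4 hq5
  -- hyperbolic abbrev facts (written in full)
  have hs1 : 0 < Real.sinh (t * d₁) := Real.sinh_pos_iff.2 (by positivity)
  have hs2 : 0 < Real.sinh (t * d₂) := Real.sinh_pos_iff.2 (by positivity)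
  have hc1 : 0 < Real.cosh (t * d₁) := Real.cosh_pos _
  have hc2 : 0 < Real.cosh (t * d₂) := Real.cosh_pos _
  have hsc1 : Real.sinh (t * d₁) < Real.cosh (t * d₁) := Real.sinh_lt_cosh _
  have hsc2 : Real.sinh (t * d₂) < Real.cosh (t * d₂) := Real.sinh_lt_cosh _
  have hCc : 0 < Real.cosh (t * d₁) * Real.cosh (t * d₂)
      + Real.sinh (t * d₁) * Real.sinh (t * d₂) := by positivity
  have hS : 0 < Real.sinh (t * d₁) * Real.cosh (t * d₂)
      + Real.cosh (t * d₁) * Real.sinh (t * d₂) := by positivity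
  have hs2c1 : Real.sinh (t * d₂) * Real.cosh (t * d₁)
      ≤ Real.cosh (t * d₁) * Real.cosh (t * d₂)
        + Real.sinh (t * d₁) * Real.sinh (t * d₂) := by
    nlinarith only [mul_pos hc1 (sub_pos.2 hsc2), mul_pos hs1 hs2]
  have hs1c2 : Real.sinh (t * d₁) * Real.cosh (t * d₂)
      ≤ Real.cosh (t * d₁) * Real.cosh (t * d₂)
        + Real.sinh (t * d₁) * Real.sinh (t * d₂) := by
    nlinarith only [mul_pos hc2 (sub_pos.2 hsc1), mul_pos hs1 hs2]
  have hSCc : Real.sinh (t * d₁) * Real.cosh (t * d₂)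
        + Real.cosh (t * d₁) * Real.sinh (t * d₂)
      ≤ Real.cosh (t * d₁) * Real.cosh (t * d₂)
        + Real.sinh (t * d₁) * Real.sinh (t * d₂) := by
    nlinarith only [mul_pos (sub_pos.2 hsc1) (sub_pos.2 hsc2)]
  have hss : Real.sinh (t * d₁) * Real.sinh (t * d₂)
      ≤ Real.cosh (t * d₁) * Real.cosh (t * d₂)
        + Real.sinh (t * d₁) * Real.sinh (t * d₂) := by
    nlinarith only [mul_pos hc1 hc2]
  -- the three coefficients as single fractions (multiplied form)
  have heqA : (funA d₁ d₂ γ₁ γ₂ t + m) * (t * (Real.cosh (t * d₁) * Real.cosh (t * d₂)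
        + Real.sinh (t * d₁) * Real.sinh (t * d₂)))
      = -(γ₂ * (Real.sinh (t * d₂) * Real.cosh (t * d₁))
          + γ₁ * (Real.sinh (t * d₁) * Real.cosh (t * d₂))) := by
    rw [hmdef]
    unfold funA
    rw [show t * (d₁ + d₂) = t * d₁ + t * d₂ from by ring, Real.cosh_add]
    field_simp
    ring
  have heqB : funB d₁ d₂ g γ₁ γ₂ t * (t ^ 2 * (Real.cosh (t * d₁) * Real.cosh (t * d₂)
        + Real.sinh (t * d₁) * Real.sinh (t * d₂)))
      = (γ₂ ^ 2 * d₂ - g) * (t * (Real.sinh (t * d₁) * Real.cosh (t * d₂)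
          + Real.cosh (t * d₁) * Real.sinh (t * d₂)))
        + γ₂ * (γ₁ - γ₂) * (Real.sinh (t * d₁) * Real.sinh (t * d₂)) := by
    unfold funB
    rw [Real.tanh_eq_sinh_div_cosh, show t * (d₁ + d₂) = t * d₁ + t * d₂ from by ring,
      Real.sinh_add, Real.cosh_add]
    field_simp
  have heqC : funC d₁ d₂ g γ₁ γ₂ t * (t ^ 2 * (Real.cosh (t * d₁) * Real.cosh (t * d₂)
        + Real.sinh (t * d₁) * Real.sinh (t * d₂)))
      = g * ((γ₁ - γ₂) * (Real.sinh (t * d₁) * Real.sinh (t * d₂))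
          + m * (t * (Real.sinh (t * d₁) * Real.cosh (t * d₂)
            + Real.cosh (t * d₁) * Real.sinh (t * d₂)))) := by
    rw [hmdef]
    unfold funC
    rw [Real.tanh_eq_sinh_div_cosh, show t * (d₁ + d₂) = t * d₁ + t * d₂ from by ring,
      Real.sinh_add, Real.cosh_add]
    field_simp
  -- abbreviations for the generic bounds
  have hTS : t * (Real.sinh (t * d₁) * Real.cosh (t * d₂)
        + Real.cosh (t * d₁) * Real.sinh (t * d₂))
      ≤ t * (Real.cosh (t * d₁) * Real.cosh (t * d₂)
        + Real.sinh (t * d₁) * Real.sinh (t * d₂)) :=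
    mul_le_mul_of_nonneg_left hSCc ht0.le
  have hssT : Real.sinh (t * d₁) * Real.sinh (t * d₂)
      ≤ t * (Real.cosh (t * d₁) * Real.cosh (t * d₂)
        + Real.sinh (t * d₁) * Real.sinh (t * d₂)) := by
    have h1 : Real.cosh (t * d₁) * Real.cosh (t * d₂)
        + Real.sinh (t * d₁) * Real.sinh (t * d₂)
        ≤ t * (Real.cosh (t * d₁) * Real.cosh (t * d₂)
          + Real.sinh (t * d₁) * Real.sinh (t * d₂)) := le_mul_of_one_le_left hCc.le ht1
    linarith only [hss, h1]
  -- bounds on t * funA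
  have hAup' : t * funA d₁ d₂ γ₁ γ₂ t ≤ -(t * m) + K₁ := by
    have h1 : γ₂ * (Real.sinh (t * d₂) * Real.cosh (t * d₁))
        ≤ |γ₂| * (Real.cosh (t * d₁) * Real.cosh (t * d₂)
          + Real.sinh (t * d₁) * Real.sinh (t * d₂)) :=
      term_le_abs _ _ _ (by positivity) hs2c1
    have h2 : γ₁ * (Real.sinh (t * d₁) * Real.cosh (t * d₂))
        ≤ |γ₁| * (Real.cosh (t * d₁) * Real.cosh (t * d₂)
          + Real.sinh (t * d₁) * Real.sinh (t * d₂)) :=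
      term_le_abs _ _ _ (by positivity) hs1c2
    have h3 : -(|γ₂| * (Real.cosh (t * d₁) * Real.cosh (t * d₂)
          + Real.sinh (t * d₁) * Real.sinh (t * d₂)))
        ≤ γ₂ * (Real.sinh (t * d₂) * Real.cosh (t * d₁)) :=
      neg_abs_le_term _ _ _ (by positivity) hs2c1
    have h4 : -(|γ₁| * (Real.cosh (t * d₁) * Real.cosh (t * d₂)
          + Real.sinh (t * d₁) * Real.sinh (t * d₂)))
        ≤ γ₁ * (Real.sinh (t * d₁) * Real.cosh (t * d₂)) :=
      neg_abs_le_term _ _ _ (by positivity) hs1c2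
    nlinarith only [heqA, hCc, ht0, h1, h2, h3, h4, hK₁def]
  have hAlo' : -(t * m) - K₁ ≤ t * funA d₁ d₂ γ₁ γ₂ t := by
    have h1 : γ₂ * (Real.sinh (t * d₂) * Real.cosh (t * d₁))
        ≤ |γ₂| * (Real.cosh (t * d₁) * Real.cosh (t * d₂)
          + Real.sinh (t * d₁) * Real.sinh (t * d₂)) :=
      term_le_abs _ _ _ (by positivity) hs2c1
    have h2 : γ₁ * (Real.sinh (t * d₁) * Real.cosh (t * d₂))
        ≤ |γ₁| * (Real.cosh (t * d₁) * Real.cosh (t * d₂)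
          + Real.sinh (t * d₁) * Real.sinh (t * d₂)) :=
      term_le_abs _ _ _ (by positivity) hs1c2
    have h3 : -(|γ₂| * (Real.cosh (t * d₁) * Real.cosh (t * d₂)
          + Real.sinh (t * d₁) * Real.sinh (t * d₂)))
        ≤ γ₂ * (Real.sinh (t * d₂) * Real.cosh (t * d₁)) :=
      neg_abs_le_term _ _ _ (by positivity) hs2c1
    have h4 : -(|γ₁| * (Real.cosh (t * d₁) * Real.cosh (t * d₂)
          + Real.sinh (t * d₁) * Real.sinh (t * d₂)))
        ≤ γ₁ * (Real.sinh (t * d₁) * Real.cosh (t * d₂)) :=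
      neg_abs_le_term _ _ _ (by positivity) hs1c2
    nlinarith only [heqA, hCc, ht0, h1, h2, h3, h4, hK₁def]
  -- bounds on t * funB
  have hBup' : t * funB d₁ d₂ g γ₁ γ₂ t ≤ K₂ := by
    have h1 : (γ₂ ^ 2 * d₂ - g) * (t * (Real.sinh (t * d₁) * Real.cosh (t * d₂)
          + Real.cosh (t * d₁) * Real.sinh (t * d₂)))
        ≤ |γ₂ ^ 2 * d₂ - g| * (t * (Real.cosh (t * d₁) * Real.cosh (t * d₂)
          + Real.sinh (t * d₁) * Real.sinh (t * d₂))) :=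
      term_le_abs _ _ _ (by positivity) hTS
    have h2 : γ₂ * (γ₁ - γ₂) * (Real.sinh (t * d₁) * Real.sinh (t * d₂))
        ≤ |γ₂ * (γ₁ - γ₂)| * (t * (Real.cosh (t * d₁) * Real.cosh (t * d₂)
          + Real.sinh (t * d₁) * Real.sinh (t * d₂))) :=
      term_le_abs _ _ _ (by positivity) hssT
    nlinarith only [heqB, mul_pos ht0 hCc, ht0, h1, h2, hK₂def]
  have hBlo' : -K₂ ≤ t * funB d₁ d₂ g γ₁ γ₂ t := by
    have h1 : -(|γ₂ ^ 2 * d₂ - g| * (t * (Real.cosh (t * d₁) * Real.cosh (t * d₂)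
          + Real.sinh (t * d₁) * Real.sinh (t * d₂))))
        ≤ (γ₂ ^ 2 * d₂ - g) * (t * (Real.sinh (t * d₁) * Real.cosh (t * d₂)
          + Real.cosh (t * d₁) * Real.sinh (t * d₂))) :=
      neg_abs_le_term _ _ _ (by positivity) hTS
    have h2 : -(|γ₂ * (γ₁ - γ₂)| * (t * (Real.cosh (t * d₁) * Real.cosh (t * d₂)
          + Real.sinh (t * d₁) * Real.sinh (t * d₂))))
        ≤ γ₂ * (γ₁ - γ₂) * (Real.sinh (t * d₁) * Real.sinh (t * d₂)) :=
      neg_abs_le_term _ _ _ (by positivity) hssT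
    nlinarith only [heqB, mul_pos ht0 hCc, ht0, h1, h2, hK₂def]
  -- bounds on t * funC
  have hCup' : t * funC d₁ d₂ g γ₁ γ₂ t ≤ K₃ := by
    have h2 : (γ₁ - γ₂) * (Real.sinh (t * d₁) * Real.sinh (t * d₂))
        ≤ |γ₁ - γ₂| * (t * (Real.cosh (t * d₁) * Real.cosh (t * d₂)
          + Real.sinh (t * d₁) * Real.sinh (t * d₂))) :=
      term_le_abs _ _ _ (by positivity) hssT
    nlinarith only [heqC, mul_pos ht0 hCc, ht0, hK₃def,
      mul_le_mul_of_nonneg_left h2 hg.le,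
      mul_le_mul_of_nonneg_left (mul_le_mul_of_nonneg_left hTS hm.le) hg.le]
  have hClo' : -K₃ ≤ t * funC d₁ d₂ g γ₁ γ₂ t := by
    have h2 : -(|γ₁ - γ₂| * (t * (Real.cosh (t * d₁) * Real.cosh (t * d₂)
          + Real.sinh (t * d₁) * Real.sinh (t * d₂))))
        ≤ (γ₁ - γ₂) * (Real.sinh (t * d₁) * Real.sinh (t * d₂)) :=
      neg_abs_le_term _ _ _ (by positivity) hssT
    nlinarith only [heqC, mul_pos ht0 hCc, ht0, hK₃def,
      mul_le_mul_of_nonneg_left h2 hg.le,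
      mul_le_mul_of_nonneg_left (mul_nonneg (mul_nonneg hm.le ht0.le) hS.le) hg.le,
      mul_nonneg (mul_nonneg hg.le hm.le) (mul_pos ht0 hCc).le]
  -- the exact value of φ at m = γ₂ d₂
  have hphim : phi d₁ d₂ g γ₁ γ₂ t m *
      (t ^ 2 * (Real.cosh (t * d₁) * Real.cosh (t * d₂)
        + Real.sinh (t * d₁) * Real.sinh (t * d₂)))
      = (γ₂ - γ₁) * Real.sinh (t * d₁) *
          (m ^ 2 * Real.cosh (t * d₂) * t - (m * γ₂ + g) * Real.sinh (t * d₂)) := by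
    rw [hmdef]
    unfold phi funA funB funC
    rw [Real.tanh_eq_sinh_div_cosh, show t * (d₁ + d₂) = t * d₁ + t * d₂ from by ring,
      Real.sinh_add, Real.cosh_add]
    field_simp
    ring
  have hbr : 0 < m ^ 2 * Real.cosh (t * d₂) * t - (m * γ₂ + g) * Real.sinh (t * d₂) := by
    nlinarith only [htb, hs2, hc2, hsc2, hm, hg, mul_pos hm hγ₂, ht0]
  have hPpos : 0 < t ^ 2 * (Real.cosh (t * d₁) * Real.cosh (t * d₂)
      + Real.sinh (t * d₁) * Real.sinh (t * d₂)) := by positivity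
  refine ⟨⟨?_, ?_⟩, ?_, ?_, ?_⟩
  · -- γ₁ < γ₂ → 0 < φ(m)
    intro h
    nlinarith only [hphim, hPpos, mul_pos (mul_pos (sub_pos.2 h) hs1) hbr]
  · -- γ₂ < γ₁ → φ(m) < 0
    intro h
    have : (γ₂ - γ₁) * Real.sinh (t * d₁) *
        (m ^ 2 * Real.cosh (t * d₂) * t - (m * γ₂ + g) * Real.sinh (t * d₂)) < 0 := by
      nlinarith only [mul_pos (mul_pos (sub_pos.2 h) hs1) hbr]
    nlinarith only [hphim, hPpos, this]
  · -- φ(m/2) < 0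
    have hmul : t * phi d₁ d₂ g γ₁ γ₂ t (m / 2)
        = t * (m / 2) ^ 3 + (t * funA d₁ d₂ γ₁ γ₂ t) * ((m / 2) ^ 2)
          + (t * funB d₁ d₂ g γ₁ γ₂ t) * (m / 2) + t * funC d₁ d₂ g γ₁ γ₂ t := by
      unfold phi; ring
    have p1 : (t * funA d₁ d₂ γ₁ γ₂ t) * ((m / 2) ^ 2)
        ≤ (-(t * m) + K₁) * ((m / 2) ^ 2) :=
      mul_le_mul_of_nonneg_right hAup' (by positivity)
    have p2 : (t * funB d₁ d₂ g γ₁ γ₂ t) * (m / 2) ≤ K₂ * (m / 2) :=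
      mul_le_mul_of_nonneg_right hBup' (by positivity)
    have hneg : t * phi d₁ d₂ g γ₁ γ₂ t (m / 2) < 0 := by
      have htc' : m ^ 2 * K₁ / 4 + K₂ * m / 2 + K₃ < t * (m ^ 3 / 8) := by
        rw [hX3def] at htc; exact htc
      rw [hmul]; nlinarith only [p1, p2, hCup', htc', hm, ht0]
    nlinarith only [hneg, ht0]
  · -- γ₂ < γ₁ → 0 < φ(M)
    intro h
    have hγ₁ : 0 < γ₁ := lt_trans hγ₂ h
    have hM : 0 < M := by rw [hMdef]; positivity
    have hbig4 : X4 < t * (M ^ 2 * (γ₁ * d₁)) := by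
      have hden : 0 < M ^ 2 * (γ₁ * d₁) := by positivity
      have h4t := hte
      rw [div_lt_iff₀ hden] at h4t; linarith
    have hmul : t * phi d₁ d₂ g γ₁ γ₂ t M
        = t * M ^ 3 + (t * funA d₁ d₂ γ₁ γ₂ t) * (M ^ 2)
          + (t * funB d₁ d₂ g γ₁ γ₂ t) * M + t * funC d₁ d₂ g γ₁ γ₂ t := by
      unfold phi; ring
    have p1 : (-(t * m) - K₁) * (M ^ 2) ≤ (t * funA d₁ d₂ γ₁ γ₂ t) * (M ^ 2) :=
      mul_le_mul_of_nonneg_right hAlo' (by positivity)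
    have p2 : (-K₂) * M ≤ (t * funB d₁ d₂ g γ₁ γ₂ t) * M :=
      mul_le_mul_of_nonneg_right hBlo' hM.le
    have hpos : 0 < t * phi d₁ d₂ g γ₁ γ₂ t M := by
      rw [hmul]
      have hM3 : t * M ^ 3 - t * m * M ^ 2 = t * (M ^ 2 * (γ₁ * d₁)) := by
        rw [hMdef]; ring
      have hbig4' : K₁ * M ^ 2 + K₂ * M + K₃ < t * (M ^ 2 * (γ₁ * d₁)) := by
        rw [hX4def] at hbig4; exact hbig4
      nlinarith only [p1, p2, hClo', hbig4', ht0, hM3]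
    nlinarith only [hpos, ht0]
  · -- monotonicity beyond m
    intro x y hx hxy
    have hA4 : -(m + m / 4) ≤ funA d₁ d₂ γ₁ γ₂ t := by
      nlinarith only [hAlo', ht0, hta, hm]
    have hB4 : -(m ^ 2 / 4) ≤ funB d₁ d₂ g γ₁ γ₂ t := by
      nlinarith only [hBlo', ht0, htd, hm]
    have hy : m ≤ y := le_of_lt (lt_of_le_of_lt hx hxy)
    have hxy0 : 0 < x + y := by nlinarith only [hx, hy, hm]
    have hq : 0 < x ^ 2 + x * y + y ^ 2 + funA d₁ d₂ γ₁ γ₂ t * (x + y)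
        + funB d₁ d₂ g γ₁ γ₂ t := by
      nlinarith only [mul_nonneg (sub_nonneg.2 hx) (sub_nonneg.2 hy),
        mul_nonneg hm.le (sub_nonneg.2 hx), mul_nonneg hm.le (sub_nonneg.2 hy),
        sq_nonneg (x - m), sq_nonneg (y - m),
        mul_le_mul_of_nonneg_right hA4 hxy0.le, hB4, hm, mul_pos hm hm]
    nlinarith only [phi_sub_aux d₁ d₂ g γ₁ γ₂ t x y, mul_pos (sub_pos.2 hxy) hq]

/-- for large `t`, the largest root `Λ₁(t)` satisfies the
stagnation condition of the top layer if `γ₁ < γ₂` and of the bottom layer if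
`γ₁ > γ₂`. -/
theorem largest_root_stagnation
    (d₁ d₂ g γ₁ γ₂ : ℝ) (hd₁ : 0 < d₁) (hd₂ : 0 < d₂) (hg : 0 < g)
    (hγ₂ : 0 < γ₂) (hne : γ₁ ≠ γ₂) (Λ₁ : ℝ → ℝ)
    (hΛ₁ : ∀ᶠ t in atTop,
      phi d₁ d₂ g γ₁ γ₂ t (Λ₁ t) = 0 ∧
      ∀ Λ : ℝ, phi d₁ d₂ g γ₁ γ₂ t Λ = 0 → Λ ≤ Λ₁ t) :
    (γ₁ < γ₂ → ∀ᶠ t in atTop, Λ₁ t * (Λ₁ t - γ₂ * d₂) ≤ 0) ∧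
    (γ₂ < γ₁ → ∀ᶠ t in atTop,
      (Λ₁ t - γ₂ * d₂) * (Λ₁ t - γ₁ * d₁ - γ₂ * d₂) ≤ 0) := by
  have hm : 0 < γ₂ * d₂ := by positivity
  constructor
  · intro h12
    filter_upwards [hΛ₁, eventual_facts d₁ d₂ g γ₁ γ₂ hd₁ hd₂ hg hγ₂] with t hroot hfacts
    obtain ⟨⟨hf1, _⟩, hf3, _, hmono⟩ := hfacts
    have hphim := hf1 h12
    have hub : Λ₁ t ≤ γ₂ * d₂ := by
      by_contra hcon
      push_neg at hcon
      have := hmono (γ₂ * d₂) (Λ₁ t) le_rfl hcon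
      rw [hroot.1] at this
      linarith
    have hcont : ContinuousOn (fun Λ : ℝ => phi d₁ d₂ g γ₁ γ₂ t Λ)
        (Set.Icc (γ₂ * d₂ / 2) (γ₂ * d₂)) := by
      apply Continuous.continuousOn
      unfold phi
      fun_prop
    have hsub := intermediate_value_Icc (by linarith : γ₂ * d₂ / 2 ≤ γ₂ * d₂) hcont
    obtain ⟨c, hcmem, hc0⟩ := hsub ⟨hf3.le, hphim.le⟩
    have hlb : γ₂ * d₂ / 2 ≤ Λ₁ t := le_trans hcmem.1 (hroot.2 c hc0)
    nlinarith
  · intro h21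
    filter_upwards [hΛ₁, eventual_facts d₁ d₂ g γ₁ γ₂ hd₁ hd₂ hg hγ₂] with t hroot hfacts
    obtain ⟨⟨_, hf2⟩, _, hf4, hmono⟩ := hfacts
    have hphim := hf2 h21
    have hphiM := hf4 h21
    have hγ₁ : 0 < γ₁ := lt_trans hγ₂ h21
    have hmM : γ₂ * d₂ ≤ γ₁ * d₁ + γ₂ * d₂ := by nlinarith
    have hub : Λ₁ t ≤ γ₁ * d₁ + γ₂ * d₂ := by
      by_contra hcon
      push_neg at hcon
      have := hmono (γ₁ * d₁ + γ₂ * d₂) (Λ₁ t) hmM hcon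
      rw [hroot.1] at this
      linarith
    have hcont : ContinuousOn (fun Λ : ℝ => phi d₁ d₂ g γ₁ γ₂ t Λ)
        (Set.Icc (γ₂ * d₂) (γ₁ * d₁ + γ₂ * d₂)) := by
      apply Continuous.continuousOn
      unfold phi
      fun_prop
    have hsub := intermediate_value_Icc hmM hcont
    obtain ⟨c, hcmem, hc0⟩ := hsub ⟨hphim.le, hphiM.le⟩
    have hlb : γ₂ * d₂ ≤ Λ₁ t := le_trans hcmem.1 (hroot.2 c hc0)
    nlinarith
end

section
/- Assume γ₂ > 0, γ₁ ≠ γ₂, and let Λ₃(t) < Λ₂(t) < Λ₁(t) denote the three real roots of φ(t,·) for large t. Then ∂Λφ(t,Λ₁(t)) = (Λ₁(t) − Λ₂(t))·(Λ₁(t) − Λ₃(t)) > 0 for all sufficiently large t, and t²·∂tφ(t,Λ₁(t)) = t²·(A′(t)·Λ₁(t)² + B′(t)·Λ₁(t) + C′(t)) → (γ₂d₂)²·(γ₁ − γ₂)/2 as t → ∞. -/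
open Real Filter Asymptotics

section Helpers

lemma hda_sinh (c t : ℝ) : HasDerivAt (fun s : ℝ => Real.sinh (s*c)) (Real.cosh (t*c) * c) t := by
  exact (Real.hasDerivAt_sinh (t*c)).comp t (hasDerivAt_mul_const c)

lemma hda_cosh (c t : ℝ) : HasDerivAt (fun s : ℝ => Real.cosh (s*c)) (Real.sinh (t*c) * c) t := by
  exact (Real.hasDerivAt_cosh (t*c)).comp t (hasDerivAt_mul_const c)

lemma aux_sc (a b c : ℝ) (hc : c = a + b) (t : ℝ) :
    HasDerivAt (fun s : ℝ => Real.sinh (s*a) * Real.cosh (s*b) / Real.cosh (s*c))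
      ((c + (a-b)*Real.cosh (t*c)*Real.cosh (t*(a-b))
        - c*Real.sinh (t*c)*Real.sinh (t*(a-b))) / (2*Real.cosh (t*c)^2)) t := by
  subst hc
  have h := ((hda_sinh a t).mul (hda_cosh b t)).div (hda_cosh (a+b) t) (Real.cosh_pos (t*(a+b))).ne'
  refine h.congr_deriv (Eq.symm ?_)
  have e1 : Real.exp (t*a) ≠ 0 := Real.exp_ne_zero _
  have e2 : Real.exp (t*b) ≠ 0 := Real.exp_ne_zero _
  have p1 : Real.exp (t*a)^2 * Real.exp (t*b)^2 + 1 ≠ 0 := by positivity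
  simp only [Pi.mul_apply, Real.sinh_eq, Real.cosh_eq, mul_add, mul_sub, Real.exp_add, Real.exp_sub, Real.exp_neg]
  field_simp
  ring

lemma aux_ss (a b c : ℝ) (hc : c = a + b) (t : ℝ) (hs : Real.sinh (t*c) ≠ 0) :
    HasDerivAt (fun s : ℝ => Real.sinh (s*a) * Real.sinh (s*b) / Real.sinh (s*c))
      ((-c - (a-b)*Real.sinh (t*(a-b))*Real.sinh (t*c)
        + c*Real.cosh (t*(a-b))*Real.cosh (t*c)) / (2*Real.sinh (t*c)^2)) t := by
  subst hc
  have h := ((hda_sinh a t).mul (hda_sinh b t)).div (hda_sinh (a+b) t) hs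
  refine h.congr_deriv (Eq.symm ?_)
  have e1 : Real.exp (t*a) ≠ 0 := Real.exp_ne_zero _
  have e2 : Real.exp (t*b) ≠ 0 := Real.exp_ne_zero _
  have q1 : Real.exp (t*a)^2 * Real.exp (t*b)^2 - 1 ≠ 0 := by
    intro h0
    apply hs
    rw [mul_add, Real.sinh_eq, Real.exp_add, Real.exp_neg, Real.exp_add]
    field_simp
    linear_combination h0
  simp only [Pi.mul_apply, Real.sinh_eq, Real.cosh_eq, mul_add, mul_sub, Real.exp_add, Real.exp_sub, Real.exp_neg]
  field_simp
  ring

lemma aux_th (c t : ℝ) :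
    HasDerivAt (fun s : ℝ => Real.sinh (s*c) / Real.cosh (s*c)) (c / Real.cosh (t*c)^2) t := by
  have h := (hda_sinh c t).div (hda_cosh c t) (Real.cosh_pos (t*c)).ne'
  refine h.congr_deriv (Eq.symm ?_)
  rw [div_eq_div_iff (by positivity) (by positivity)]
  linear_combination (-(c * Real.cosh (t*c)^2)) * Real.cosh_sq_sub_sinh_sq (t*c)

lemma lim_aux (n : ℕ) (c : ℝ) (hc : 0 < c) :
    Tendsto (fun t : ℝ => t^n * Real.exp (-(c*t))) atTop (nhds 0) := by
  have h2 : Tendsto (fun t : ℝ => (c*t)^n * Real.exp (-(c*t))) atTop (nhds 0) :=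
    (tendsto_pow_mul_exp_neg_atTop_nhds_zero n).comp (tendsto_id.const_mul_atTop hc)
  have h3 := h2.const_mul ((c^n)⁻¹)
  rw [mul_zero] at h3
  refine h3.congr fun t => ?_
  rw [mul_pow]
  field_simp

lemma lim_cosh (n : ℕ) (a b : ℝ) (h : |a| < b) :
    Tendsto (fun t : ℝ => t^n * Real.cosh (t*a) / Real.cosh (t*b)) atTop (nhds 0) := by
  have hb : 0 < b := (abs_nonneg a).trans_lt h
  have hc : 0 < b - |a| := sub_pos.2 h
  have hg : Tendsto (fun t : ℝ => 2 * (t^n * Real.exp (-((b-|a|)*t)))) atTop (nhds 0) := by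
    simpa using (lim_aux n _ hc).const_mul 2
  apply squeeze_zero_norm' ?_ hg
  filter_upwards [eventually_ge_atTop (0:ℝ)] with t ht
  have h1 : Real.cosh (t*a) ≤ Real.exp (t*|a|) := by
    rw [← Real.cosh_abs, abs_mul, abs_of_nonneg ht, Real.cosh_eq]
    have h2 : Real.exp (-(t*|a|)) ≤ Real.exp (t*|a|) :=
      Real.exp_le_exp.2 (by nlinarith [abs_nonneg a])
    linarith
  have h2 : Real.exp (t*b)/2 ≤ Real.cosh (t*b) := by
    rw [Real.cosh_eq]
    nlinarith [(Real.exp_pos (-(t*b))).le]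
  have h4 : 0 ≤ t^n * Real.cosh (t*a) / Real.cosh (t*b) := by
    have := (Real.cosh_pos (t*a)).le
    have := (Real.cosh_pos (t*b)).le
    positivity
  rw [Real.norm_eq_abs, abs_of_nonneg h4]
  calc t^n * Real.cosh (t*a) / Real.cosh (t*b)
      ≤ (t^n * Real.exp (t*|a|)) / (Real.exp (t*b)/2) := by
        apply div_le_div₀ (by positivity)
          (mul_le_mul_of_nonneg_left h1 (by positivity)) (by positivity) h2
    _ = 2 * (t^n * Real.exp (-((b-|a|)*t))) := by
        rw [show -((b-|a|)*t) = t*|a| - t*b by ring, Real.exp_sub]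
        field_simp

lemma lim_sinh (n : ℕ) (a b : ℝ) (h : |a| < b) :
    Tendsto (fun t : ℝ => t^n * Real.sinh (t*a) / Real.cosh (t*b)) atTop (nhds 0) := by
  apply squeeze_zero_norm' ?_ (lim_cosh n a b h)
  filter_upwards [eventually_ge_atTop (0:ℝ)] with t ht
  have hs : |Real.sinh (t*a)| ≤ Real.cosh (t*a) := by
    rw [Real.abs_sinh, ← Real.cosh_abs]
    exact (Real.sinh_lt_cosh _).le
  rw [Real.norm_eq_abs, abs_div, abs_mul, abs_of_nonneg (pow_nonneg ht n),
    abs_of_pos (Real.cosh_pos _)]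
  gcongr

lemma lim_tanh (b : ℝ) (hb : 0 < b) :
    Tendsto (fun t : ℝ => Real.sinh (t*b) / Real.cosh (t*b)) atTop (nhds 1) := by
  have hE : Tendsto (fun t : ℝ => Real.exp (-(2*b*t))) atTop (nhds 0) := by
    simpa using lim_aux 0 (2*b) (by linarith)
  have h := (((tendsto_const_nhds : Tendsto (fun _ : ℝ => (1:ℝ)) atTop (nhds 1)).sub hE).div
    ((tendsto_const_nhds : Tendsto (fun _ : ℝ => (1:ℝ)) atTop (nhds 1)).add hE)
    (by norm_num : (1:ℝ) + 0 ≠ 0))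
  norm_num at h
  refine h.congr fun t => ?_
  simp only [Pi.div_apply]
  have h1 : Real.exp (-(2*b*t)) = (Real.exp (t*b))⁻¹ * (Real.exp (t*b))⁻¹ := by
    rw [← Real.exp_neg, ← Real.exp_add]; congr 1; ring
  rw [Real.sinh_eq, Real.cosh_eq, h1, Real.exp_neg]
  have := Real.exp_ne_zero (t*b)
  field_simp

lemma lim_coth (b : ℝ) (hb : 0 < b) :
    Tendsto (fun t : ℝ => Real.cosh (t*b) / Real.sinh (t*b)) atTop (nhds 1) := by
  have := (lim_tanh b hb).inv₀ one_ne_zero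
  simpa [inv_div] using this

lemma div_mul_div_trans (x c s : ℝ) (hc : c ≠ 0) : (x/c)*(c/s) = x/s := by
  rcases eq_or_ne s 0 with h|h
  · simp [h]
  · field_simp

lemma lim_cosh_div_sinh (a b : ℝ) (h : |a| < b) :
    Tendsto (fun t : ℝ => Real.cosh (t*a) / Real.sinh (t*b)) atTop (nhds 0) := by
  have hb : 0 < b := (abs_nonneg a).trans_lt h
  have h1 := (lim_cosh 0 a b h).mul (lim_coth b hb)
  rw [zero_mul] at h1
  refine h1.congr fun t => ?_
  rw [pow_zero, one_mul, div_mul_div_trans _ _ _ (Real.cosh_pos _).ne']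

lemma lim_sinh_div_sinh (a b : ℝ) (h : |a| < b) :
    Tendsto (fun t : ℝ => Real.sinh (t*a) / Real.sinh (t*b)) atTop (nhds 0) := by
  have hb : 0 < b := (abs_nonneg a).trans_lt h
  have h1 := (lim_sinh 0 a b h).mul (lim_coth b hb)
  rw [zero_mul] at h1
  refine h1.congr fun t => ?_
  rw [pow_zero, one_mul, div_mul_div_trans _ _ _ (Real.cosh_pos _).ne']

lemma lim_inv_cosh (b : ℝ) (hb : 0 < b) :
    Tendsto (fun t : ℝ => 1 / Real.cosh (t*b)) atTop (nhds 0) := by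
  have := lim_cosh 0 0 b (by simpa using hb)
  simpa using this

lemma lim_t_div_cosh (b : ℝ) (hb : 0 < b) :
    Tendsto (fun t : ℝ => t / Real.cosh (t*b)) atTop (nhds 0) := by
  have := lim_cosh 1 0 b (by simpa using hb)
  simpa using this

lemma lim_t_div_coshsq (b : ℝ) (hb : 0 < b) :
    Tendsto (fun t : ℝ => t / Real.cosh (t*b)^2) atTop (nhds 0) := by
  have h := (lim_t_div_cosh b hb).mul (lim_inv_cosh b hb)
  rw [zero_mul] at h
  refine h.congr fun t => ?_
  rw [div_mul_div_comm, mul_one, ← pow_two]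

lemma lim_t_cosh_div_cosh (a b : ℝ) (h : |a| < b) :
    Tendsto (fun t : ℝ => t * Real.cosh (t*a) / Real.cosh (t*b)) atTop (nhds 0) := by
  simpa using lim_cosh 1 a b h

lemma lim_t_sinh_div_cosh (a b : ℝ) (h : |a| < b) :
    Tendsto (fun t : ℝ => t * Real.sinh (t*a) / Real.cosh (t*b)) atTop (nhds 0) := by
  simpa using lim_sinh 1 a b h

lemma lim_sinh_div_cosh (a b : ℝ) (h : |a| < b) :
    Tendsto (fun t : ℝ => Real.sinh (t*a) / Real.cosh (t*b)) atTop (nhds 0) := by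
  simpa using lim_sinh 0 a b h

lemma lim_inv_coshsq (b : ℝ) (hb : 0 < b) :
    Tendsto (fun t : ℝ => 1 / Real.cosh (t*b)^2) atTop (nhds 0) := by
  have h := (lim_inv_cosh b hb).mul (lim_inv_cosh b hb)
  rw [zero_mul] at h
  refine h.congr fun t => ?_
  rw [div_mul_div_comm, one_mul, ← pow_two]

lemma lim_inv_sinhsq (b : ℝ) (hb : 0 < b) :
    Tendsto (fun t : ℝ => 1 / Real.sinh (t*b)^2) atTop (nhds 0) := by
  have h := ((lim_coth b hb).mul (lim_coth b hb)).mul (lim_inv_coshsq b hb)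
  norm_num at h
  apply h.congr'
  filter_upwards [eventually_gt_atTop (0:ℝ)] with t ht
  have hS : Real.sinh (t*b) ≠ 0 := (Real.sinh_pos_iff.2 (by positivity)).ne'
  have hC : Real.cosh (t*b) ≠ 0 := (Real.cosh_pos _).ne'
  field_simp

lemma lim_inv_t : Tendsto (fun t : ℝ => 1/t) atTop (nhds 0) := by
  simpa [one_div] using (tendsto_inv_atTop_zero : Tendsto (fun x : ℝ => x⁻¹) atTop (nhds 0))

lemma lim_W (a b c : ℝ) (ha : 0 < a) (hb : 0 < b) (hc : c = a + b) :
    Tendsto (fun t : ℝ => Real.sinh (t*a) * Real.cosh (t*b) / Real.cosh (t*c)) atTop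
      (nhds (1/2)) := by
  subst hc
  have habs : |a - b| < a + b := abs_lt.2 ⟨by linarith, by linarith⟩
  have h := ((lim_tanh (a+b) (by linarith)).add (lim_sinh_div_cosh (a-b) (a+b) habs)).div_const 2
  norm_num at h
  refine h.congr fun t => ?_
  have e1 : Real.sinh (t*(a+b))
      = Real.sinh (t*a) * Real.cosh (t*b) + Real.cosh (t*a) * Real.sinh (t*b) := by
    rw [show t*(a+b) = t*a + t*b by ring, Real.sinh_add]
  have e2 : Real.sinh (t*(a-b))
      = Real.sinh (t*a) * Real.cosh (t*b) - Real.cosh (t*a) * Real.sinh (t*b) := by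
    rw [show t*(a-b) = t*a - t*b by ring, Real.sinh_sub]
  rw [e1, e2]
  have hC : Real.cosh (t*(a+b)) ≠ 0 := (Real.cosh_pos _).ne'
  field_simp
  ring

lemma lim_R (a b c : ℝ) (ha : 0 < a) (hb : 0 < b) (hc : c = a + b) :
    Tendsto (fun t : ℝ => Real.sinh (t*a) * Real.sinh (t*b) / Real.sinh (t*c)) atTop
      (nhds (1/2)) := by
  subst hc
  have habs : |a - b| < a + b := abs_lt.2 ⟨by linarith, by linarith⟩
  have h := ((lim_coth (a+b) (by linarith)).sub (lim_cosh_div_sinh (a-b) (a+b) habs)).div_const 2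
  norm_num at h
  refine h.congr fun t => ?_
  have e : Real.cosh (t*(a+b)) - Real.cosh (t*(a-b))
      = 2 * (Real.sinh (t*a) * Real.sinh (t*b)) := by
    rw [show t*(a+b) = t*a + t*b by ring, show t*(a-b) = t*a - t*b by ring,
      Real.cosh_add, Real.cosh_sub]
    ring
  rw [div_sub_div_same, e]
  ring

lemma tendsto_value_congr {α : Type*} {l : Filter α} {f : α → ℝ} {a b : ℝ}
    (hf : Filter.Tendsto f l (nhds a)) (h : a = b) : Filter.Tendsto f l (nhds b) := h ▸ hf

end Helpers
open Real Filter Asymptotics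

set_option maxHeartbeats 2000000 in
/-- at the largest root `Λ₁`, `∂Λφ(t,Λ₁(t)) = (Λ₁−Λ₂)(Λ₁−Λ₃) > 0`
eventually, and `t²·∂tφ(t,Λ₁(t)) → (γ₂d₂)²(γ₁−γ₂)/2`. -/
theorem partial_derivatives_at_largest_root
    (d₁ d₂ g γ₁ γ₂ : ℝ) (hd₁ : 0 < d₁) (hd₂ : 0 < d₂) (hg : 0 < g)
    (hγ₂ : 0 < γ₂) (hne : γ₁ ≠ γ₂) (Λ₁ Λ₂ Λ₃ : ℝ → ℝ)
    (hroots : ∀ᶠ t in atTop,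
      Λ₃ t < Λ₂ t ∧ Λ₂ t < Λ₁ t ∧
      ∀ Λ : ℝ, phi d₁ d₂ g γ₁ γ₂ t Λ = (Λ - Λ₁ t) * (Λ - Λ₂ t) * (Λ - Λ₃ t))
    (hlim1 : Tendsto Λ₁ atTop (nhds (γ₂ * d₂)))
    (hlim2 : Tendsto Λ₂ atTop (nhds 0))
    (hlim3 : Tendsto Λ₃ atTop (nhds 0)) :
    (∀ᶠ t in atTop,
      3 * Λ₁ t ^ 2 + 2 * funA d₁ d₂ γ₁ γ₂ t * Λ₁ t + funB d₁ d₂ g γ₁ γ₂ t =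
        (Λ₁ t - Λ₂ t) * (Λ₁ t - Λ₃ t) ∧
      0 < (Λ₁ t - Λ₂ t) * (Λ₁ t - Λ₃ t)) ∧
    Tendsto (fun t : ℝ =>
        t ^ 2 * (deriv (funA d₁ d₂ γ₁ γ₂) t * Λ₁ t ^ 2
          + deriv (funB d₁ d₂ g γ₁ γ₂) t * Λ₁ t + deriv (funC d₁ d₂ g γ₁ γ₂) t))
      atTop (nhds ((γ₂ * d₂) ^ 2 * (γ₁ - γ₂) / 2)) := by

  have hd : (0:ℝ) < d₁ + d₂ := by linarith
  have hab12 : |d₁ - d₂| < d₁ + d₂ := abs_lt.2 ⟨by linarith, by linarith⟩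
  have hab21 : |d₂ - d₁| < d₁ + d₂ := abs_lt.2 ⟨by linarith, by linarith⟩
  constructor
  · filter_upwards [hroots] with t ht
    obtain ⟨h32, h21, hfac⟩ := ht
    have h0 := hfac 0
    have h1 := hfac 1
    have hm := hfac (-1)
    simp only [phi] at h0 h1 hm
    refine ⟨?_, mul_pos (by linarith) (by linarith)⟩
    linear_combination (-2*Λ₁ t) * h0 + (Λ₁ t + 1/2) * h1 + (Λ₁ t - 1/2) * hm
  · -- Rewrite the three coefficient functions in sinh/cosh form
    have hfA : funA d₁ d₂ γ₁ γ₂ = fun t => -(1/t) * (γ₂*(t*d₂)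
        + γ₂ * (Real.sinh (t*d₂) * Real.cosh (t*d₁) / Real.cosh (t*(d₁+d₂)))
        + γ₁ * (Real.sinh (t*d₁) * Real.cosh (t*d₂) / Real.cosh (t*(d₁+d₂)))) := by
      funext t; rw [funA]; ring
    have hfB : funB d₁ d₂ g γ₁ γ₂ = fun t =>
        (Real.sinh (t*(d₁+d₂)) / Real.cosh (t*(d₁+d₂))) * ((γ₂^2*d₂ - g)/t
          + (γ₂*(γ₁-γ₂)) * (Real.sinh (t*d₁) * Real.sinh (t*d₂) / Real.sinh (t*(d₁+d₂))) / t^2) := by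
      funext t; rw [funB, Real.tanh_eq_sinh_div_cosh]; ring
    have hfC : funC d₁ d₂ g γ₁ γ₂ = fun t =>
        (g * (Real.sinh (t*(d₁+d₂)) / Real.cosh (t*(d₁+d₂))) / t^2) *
          ((γ₁-γ₂) * (Real.sinh (t*d₁) * Real.sinh (t*d₂) / Real.sinh (t*(d₁+d₂))) + γ₂*d₂*t) := by
      funext t; rw [funC, Real.tanh_eq_sinh_div_cosh]; ring
    -- the A limit
    have limA : Tendsto (fun t : ℝ => t^2 * deriv (funA d₁ d₂ γ₁ γ₂) t) atTop
        (nhds ((γ₁+γ₂)/2)) := by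
      have hEA : Tendsto (fun t : ℝ =>
          γ₂ * (Real.sinh (t*d₂) * Real.cosh (t*d₁) / Real.cosh (t*(d₁+d₂)))
          + γ₁ * (Real.sinh (t*d₁) * Real.cosh (t*d₂) / Real.cosh (t*(d₁+d₂)))
          - γ₂ * (((d₁+d₂)/2) * (t / Real.cosh (t*(d₁+d₂))^2)
              + ((d₂-d₁)/2) * (t * Real.cosh (t*(d₂-d₁)) / Real.cosh (t*(d₁+d₂)))
              - ((d₁+d₂)/2) * ((Real.sinh (t*(d₁+d₂)) / Real.cosh (t*(d₁+d₂)))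
                  * (t * Real.sinh (t*(d₂-d₁)) / Real.cosh (t*(d₁+d₂)))))
          - γ₁ * (((d₁+d₂)/2) * (t / Real.cosh (t*(d₁+d₂))^2)
              + ((d₁-d₂)/2) * (t * Real.cosh (t*(d₁-d₂)) / Real.cosh (t*(d₁+d₂)))
              - ((d₁+d₂)/2) * ((Real.sinh (t*(d₁+d₂)) / Real.cosh (t*(d₁+d₂)))
                  * (t * Real.sinh (t*(d₁-d₂)) / Real.cosh (t*(d₁+d₂)))))) atTop
          (nhds ((γ₁+γ₂)/2)) := by
        have htmp := (((((lim_W d₂ d₁ (d₁+d₂) hd₂ hd₁ (by ring)).const_mul γ₂).add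
          ((lim_W d₁ d₂ (d₁+d₂) hd₁ hd₂ rfl).const_mul γ₁)).sub
          (((((lim_t_div_coshsq (d₁+d₂) hd).const_mul ((d₁+d₂)/2)).add
            ((lim_t_cosh_div_cosh (d₂-d₁) (d₁+d₂) hab21).const_mul ((d₂-d₁)/2))).sub
            (((lim_tanh (d₁+d₂) hd).mul
              (lim_t_sinh_div_cosh (d₂-d₁) (d₁+d₂) hab21)).const_mul ((d₁+d₂)/2))).const_mul γ₂)).sub
          (((((lim_t_div_coshsq (d₁+d₂) hd).const_mul ((d₁+d₂)/2)).add
            ((lim_t_cosh_div_cosh (d₁-d₂) (d₁+d₂) hab12).const_mul ((d₁-d₂)/2))).sub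
            (((lim_tanh (d₁+d₂) hd).mul
              (lim_t_sinh_div_cosh (d₁-d₂) (d₁+d₂) hab12)).const_mul ((d₁+d₂)/2))).const_mul γ₁))
        exact tendsto_value_congr htmp (by ring)
      refine hEA.congr' ?_
      filter_upwards [eventually_gt_atTop (0:ℝ)] with t ht
      have hC : Real.cosh (t*(d₁+d₂)) ≠ 0 := (Real.cosh_pos _).ne'
      have hderiv : deriv (funA d₁ d₂ γ₁ γ₂) t =
          1/t^2 * (γ₂*(t*d₂)
            + γ₂ * (Real.sinh (t*d₂) * Real.cosh (t*d₁) / Real.cosh (t*(d₁+d₂)))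
            + γ₁ * (Real.sinh (t*d₁) * Real.cosh (t*d₂) / Real.cosh (t*(d₁+d₂))))
          + -(1/t) * (γ₂*d₂
            + γ₂ * (((d₁+d₂) + (d₂-d₁)*Real.cosh (t*(d₁+d₂))*Real.cosh (t*(d₂-d₁))
                - (d₁+d₂)*Real.sinh (t*(d₁+d₂))*Real.sinh (t*(d₂-d₁))) / (2*Real.cosh (t*(d₁+d₂))^2))
            + γ₁ * (((d₁+d₂) + (d₁-d₂)*Real.cosh (t*(d₁+d₂))*Real.cosh (t*(d₁-d₂))
                - (d₁+d₂)*Real.sinh (t*(d₁+d₂))*Real.sinh (t*(d₁-d₂))) / (2*Real.cosh (t*(d₁+d₂))^2))) := by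
        rw [hfA]
        have hInv : HasDerivAt (fun s : ℝ => -(1/s)) (1/t^2) t := by
          have h := (hasDerivAt_inv ht.ne').neg; simp only [neg_neg, one_div] at h ⊢; exact h
        have hN : HasDerivAt (fun s : ℝ => γ₂*(s*d₂)
            + γ₂ * (Real.sinh (s*d₂) * Real.cosh (s*d₁) / Real.cosh (s*(d₁+d₂)))
            + γ₁ * (Real.sinh (s*d₁) * Real.cosh (s*d₂) / Real.cosh (s*(d₁+d₂))))
            (γ₂*d₂
            + γ₂ * (((d₁+d₂) + (d₂-d₁)*Real.cosh (t*(d₁+d₂))*Real.cosh (t*(d₂-d₁))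
                - (d₁+d₂)*Real.sinh (t*(d₁+d₂))*Real.sinh (t*(d₂-d₁))) / (2*Real.cosh (t*(d₁+d₂))^2))
            + γ₁ * (((d₁+d₂) + (d₁-d₂)*Real.cosh (t*(d₁+d₂))*Real.cosh (t*(d₁-d₂))
                - (d₁+d₂)*Real.sinh (t*(d₁+d₂))*Real.sinh (t*(d₁-d₂))) / (2*Real.cosh (t*(d₁+d₂))^2))) t :=
          (((hasDerivAt_mul_const d₂).const_mul γ₂).add
            ((aux_sc d₂ d₁ (d₁+d₂) (by ring) t).const_mul γ₂)).add
            ((aux_sc d₁ d₂ (d₁+d₂) rfl t).const_mul γ₁)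
        exact (hInv.mul hN).deriv
      rw [hderiv]
      field_simp
      ring
    -- the B limit
    have limB : Tendsto (fun t : ℝ => t^2 * deriv (funB d₁ d₂ g γ₁ γ₂) t) atTop
        (nhds (g - γ₂^2*d₂)) := by
      have hEB : Tendsto (fun t : ℝ =>
          ((d₁+d₂)*(γ₂^2*d₂-g)) * (t / Real.cosh (t*(d₁+d₂))^2)
          + ((γ₂*(γ₁-γ₂))*(d₁+d₂)) * ((Real.sinh (t*d₁) * Real.sinh (t*d₂) / Real.sinh (t*(d₁+d₂)))
              * (1 / Real.cosh (t*(d₁+d₂))^2))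
          + (Real.sinh (t*(d₁+d₂)) / Real.cosh (t*(d₁+d₂))) * ((-(γ₂^2*d₂-g)
              + (γ₂*(γ₁-γ₂)) * ((-((d₁+d₂)/2)) * (1 / Real.sinh (t*(d₁+d₂))^2)
                  - ((d₁-d₂)/2) * (Real.sinh (t*(d₁-d₂)) / Real.sinh (t*(d₁+d₂)))
                  + ((d₁+d₂)/2) * ((Real.cosh (t*(d₁-d₂)) / Real.sinh (t*(d₁+d₂)))
                      * (Real.cosh (t*(d₁+d₂)) / Real.sinh (t*(d₁+d₂))))))
              - (2*(γ₂*(γ₁-γ₂))) * ((Real.sinh (t*d₁) * Real.sinh (t*d₂) / Real.sinh (t*(d₁+d₂)))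
                  * (1/t)))) atTop (nhds (g - γ₂^2*d₂)) := by
        have htmp := (((lim_t_div_coshsq (d₁+d₂) hd).const_mul ((d₁+d₂)*(γ₂^2*d₂-g))).add
          (((lim_R d₁ d₂ (d₁+d₂) hd₁ hd₂ rfl).mul
            (lim_inv_coshsq (d₁+d₂) hd)).const_mul ((γ₂*(γ₁-γ₂))*(d₁+d₂)))).add
          ((lim_tanh (d₁+d₂) hd).mul
            (((tendsto_const_nhds : Tendsto (fun _ : ℝ => -(γ₂^2*d₂-g)) atTop (nhds (-(γ₂^2*d₂-g)))).add
              (((((lim_inv_sinhsq (d₁+d₂) hd).const_mul (-((d₁+d₂)/2))).sub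
                ((lim_sinh_div_sinh (d₁-d₂) (d₁+d₂) hab12).const_mul ((d₁-d₂)/2))).add
                (((lim_cosh_div_sinh (d₁-d₂) (d₁+d₂) hab12).mul
                  (lim_coth (d₁+d₂) hd)).const_mul ((d₁+d₂)/2))).const_mul (γ₂*(γ₁-γ₂)))).sub
              (((lim_R d₁ d₂ (d₁+d₂) hd₁ hd₂ rfl).mul lim_inv_t).const_mul (2*(γ₂*(γ₁-γ₂))))))
        exact tendsto_value_congr htmp (by ring)
      refine hEB.congr' ?_
      filter_upwards [eventually_gt_atTop (0:ℝ)] with t ht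
      have hC : Real.cosh (t*(d₁+d₂)) ≠ 0 := (Real.cosh_pos _).ne'
      have hS : Real.sinh (t*(d₁+d₂)) ≠ 0 := (Real.sinh_pos_iff.2 (by positivity)).ne'
      have hpow : HasDerivAt (fun s : ℝ => s^2) (2*t) t := by simpa using hasDerivAt_pow 2 t
      have hderiv : deriv (funB d₁ d₂ g γ₁ γ₂) t =
          ((d₁+d₂) / Real.cosh (t*(d₁+d₂))^2) * ((γ₂^2*d₂ - g)/t
            + (γ₂*(γ₁-γ₂)) * (Real.sinh (t*d₁) * Real.sinh (t*d₂) / Real.sinh (t*(d₁+d₂))) / t^2)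
          + (Real.sinh (t*(d₁+d₂)) / Real.cosh (t*(d₁+d₂))) *
            ((0 * t - (γ₂^2*d₂ - g) * 1)/t^2
              + (((γ₂*(γ₁-γ₂)) * ((-(d₁+d₂) - (d₁-d₂)*Real.sinh (t*(d₁-d₂))*Real.sinh (t*(d₁+d₂))
                    + (d₁+d₂)*Real.cosh (t*(d₁-d₂))*Real.cosh (t*(d₁+d₂))) / (2*Real.sinh (t*(d₁+d₂))^2))) * t^2
                - ((γ₂*(γ₁-γ₂)) * (Real.sinh (t*d₁) * Real.sinh (t*d₂) / Real.sinh (t*(d₁+d₂)))) * (2*t))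
                / (t^2)^2) := by
        rw [hfB]
        exact ((aux_th (d₁+d₂) t).mul
          (((hasDerivAt_const t (γ₂^2*d₂ - g)).div (hasDerivAt_id t) ht.ne').add
            (((aux_ss d₁ d₂ (d₁+d₂) rfl t hS).const_mul (γ₂*(γ₁-γ₂))).div hpow
              (by positivity)))).deriv
      rw [hderiv]
      field_simp
      ring
    -- the C limit
    have limC : Tendsto (fun t : ℝ => t^2 * deriv (funC d₁ d₂ g γ₁ γ₂) t) atTop
        (nhds (-(g*(γ₂*d₂)))) := by
      have hEC : Tendsto (fun t : ℝ =>
          (g*((d₁+d₂)*(γ₁-γ₂))) * ((Real.sinh (t*d₁) * Real.sinh (t*d₂) / Real.sinh (t*(d₁+d₂)))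
              * (1 / Real.cosh (t*(d₁+d₂))^2))
          + (g*((d₁+d₂)*(γ₂*d₂))) * (t / Real.cosh (t*(d₁+d₂))^2)
          - (2*g*(γ₁-γ₂)) * ((Real.sinh (t*(d₁+d₂)) / Real.cosh (t*(d₁+d₂)))
              * ((Real.sinh (t*d₁) * Real.sinh (t*d₂) / Real.sinh (t*(d₁+d₂))) * (1/t)))
          - (2*g*(γ₂*d₂)) * (Real.sinh (t*(d₁+d₂)) / Real.cosh (t*(d₁+d₂)))
          + g * ((Real.sinh (t*(d₁+d₂)) / Real.cosh (t*(d₁+d₂)))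
              * ((γ₁-γ₂) * ((-((d₁+d₂)/2)) * (1 / Real.sinh (t*(d₁+d₂))^2)
                  - ((d₁-d₂)/2) * (Real.sinh (t*(d₁-d₂)) / Real.sinh (t*(d₁+d₂)))
                  + ((d₁+d₂)/2) * ((Real.cosh (t*(d₁-d₂)) / Real.sinh (t*(d₁+d₂)))
                      * (Real.cosh (t*(d₁+d₂)) / Real.sinh (t*(d₁+d₂)))))
                + γ₂*d₂))) atTop (nhds (-(g*(γ₂*d₂)))) := by
        have htmp := (((((((lim_R d₁ d₂ (d₁+d₂) hd₁ hd₂ rfl).mul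
          (lim_inv_coshsq (d₁+d₂) hd)).const_mul (g*((d₁+d₂)*(γ₁-γ₂)))).add
          ((lim_t_div_coshsq (d₁+d₂) hd).const_mul (g*((d₁+d₂)*(γ₂*d₂))))).sub
          (((lim_tanh (d₁+d₂) hd).mul
            ((lim_R d₁ d₂ (d₁+d₂) hd₁ hd₂ rfl).mul lim_inv_t)).const_mul (2*g*(γ₁-γ₂)))).sub
          ((lim_tanh (d₁+d₂) hd).const_mul (2*g*(γ₂*d₂)))).add
          (((lim_tanh (d₁+d₂) hd).mul
            ((((((lim_inv_sinhsq (d₁+d₂) hd).const_mul (-((d₁+d₂)/2))).sub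
              ((lim_sinh_div_sinh (d₁-d₂) (d₁+d₂) hab12).const_mul ((d₁-d₂)/2))).add
              (((lim_cosh_div_sinh (d₁-d₂) (d₁+d₂) hab12).mul
                (lim_coth (d₁+d₂) hd)).const_mul ((d₁+d₂)/2))).const_mul (γ₁-γ₂)).add
              (tendsto_const_nhds : Tendsto (fun _ : ℝ => γ₂*d₂) atTop (nhds (γ₂*d₂))))).const_mul g))
        exact tendsto_value_congr htmp (by ring)
      refine hEC.congr' ?_
      filter_upwards [eventually_gt_atTop (0:ℝ)] with t ht
      have hC : Real.cosh (t*(d₁+d₂)) ≠ 0 := (Real.cosh_pos _).ne'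
      have hS : Real.sinh (t*(d₁+d₂)) ≠ 0 := (Real.sinh_pos_iff.2 (by positivity)).ne'
      have hpow : HasDerivAt (fun s : ℝ => s^2) (2*t) t := by simpa using hasDerivAt_pow 2 t
      have hderiv : deriv (funC d₁ d₂ g γ₁ γ₂) t =
          (((g * ((d₁+d₂) / Real.cosh (t*(d₁+d₂))^2)) * t^2
            - (g * (Real.sinh (t*(d₁+d₂)) / Real.cosh (t*(d₁+d₂)))) * (2*t)) / (t^2)^2) *
            ((γ₁-γ₂) * (Real.sinh (t*d₁) * Real.sinh (t*d₂) / Real.sinh (t*(d₁+d₂))) + γ₂*d₂*t)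
          + (g * (Real.sinh (t*(d₁+d₂)) / Real.cosh (t*(d₁+d₂))) / t^2) *
            ((γ₁-γ₂) * ((-(d₁+d₂) - (d₁-d₂)*Real.sinh (t*(d₁-d₂))*Real.sinh (t*(d₁+d₂))
                + (d₁+d₂)*Real.cosh (t*(d₁-d₂))*Real.cosh (t*(d₁+d₂))) / (2*Real.sinh (t*(d₁+d₂))^2))
              + γ₂*d₂*1) := by
        rw [hfC]
        exact ((((aux_th (d₁+d₂) t).const_mul g).div hpow (by positivity)).mul
          (((aux_ss d₁ d₂ (d₁+d₂) rfl t hS).const_mul (γ₁-γ₂)).add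
            (by simpa using (hasDerivAt_id t).const_mul (γ₂*d₂)))).deriv
      rw [hderiv]
      field_simp
      ring
    have hfinal := ((limA.mul (hlim1.pow 2)).add (limB.mul hlim1)).add limC
    rw [show (γ₁+γ₂)/2 * (γ₂*d₂)^2 + (g - γ₂^2*d₂)*(γ₂*d₂) + -(g*(γ₂*d₂))
      = (γ₂*d₂)^2 * (γ₁-γ₂)/2 by ring] at hfinal
    exact hfinal.congr fun t => by ring
end

section
/- Assume γ₂ > 0, γ₁ ≠ γ₂, and let Λ₂(t) denote the middle real root of φ(t,·) for large t. Then ∂Λφ(t,Λ₂(t)) < 0 for all sufficiently large t, t²·∂tφ(t,Λ₂(t)) → −g·γ₂d₂ as t → ∞, and there exists t₀ > 0 such that Λ₂ is strictly decreasing on [t₀,∞). -/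
open Real Filter Asymptotics

namespace DispAux


/-- Master squeeze lemma: exponentially small functions beat powers of `t`. -/
lemma master (n : ℕ) {a : ℝ} (K : ℝ) (ha : 0 < a) (F : ℝ → ℝ)
    (h : ∀ᶠ t in atTop, |F t| ≤ K * Real.exp (-(a * t))) :
    Tendsto (fun t => t ^ n * F t) atTop (nhds 0) := by
  have hat : Tendsto (fun t : ℝ => a * t) atTop atTop :=
    Tendsto.const_mul_atTop ha tendsto_id
  have h2 : Tendsto (fun t : ℝ => K / a ^ n * ((a * t) ^ n * Real.exp (-(a * t))))
      atTop (nhds 0) := by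
    have := (tendsto_pow_mul_exp_neg_atTop_nhds_zero n).comp hat
    simpa using this.const_mul (K / a ^ n)
  apply squeeze_zero_norm' _ h2
  filter_upwards [h, eventually_ge_atTop (0:ℝ)] with t ht ht0
  calc ‖t ^ n * F t‖ = t ^ n * |F t| := by
        rw [norm_mul, Real.norm_eq_abs, Real.norm_eq_abs, abs_pow, abs_of_nonneg ht0]
    _ ≤ t ^ n * (K * Real.exp (-(a*t))) := mul_le_mul_of_nonneg_left ht (by positivity)
    _ = K / a ^ n * ((a * t) ^ n * Real.exp (-(a * t))) := by
        field_simp; ring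

lemma master0 {a : ℝ} (K : ℝ) (ha : 0 < a) (F : ℝ → ℝ)
    (h : ∀ᶠ t in atTop, |F t| ≤ K * Real.exp (-(a * t))) :
    Tendsto F atTop (nhds 0) := by
  have := master 0 K ha F h
  simpa using this

lemma exp_le_two_cosh (y : ℝ) : Real.exp y ≤ 2 * Real.cosh y := by
  rw [Real.cosh_eq]; have := Real.exp_pos (-y); linarith

lemma cosh_le_exp_abs (y : ℝ) : Real.cosh y ≤ Real.exp |y| := by
  rw [Real.cosh_eq]
  have h1 := Real.exp_le_exp.mpr (le_abs_self y)
  have h2 := Real.exp_le_exp.mpr (neg_le_abs y)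
  linarith

lemma abs_sinh_le_cosh (y : ℝ) : |Real.sinh y| ≤ Real.cosh y := by
  refine abs_le.mpr ⟨?_, ?_⟩
  · have := Real.cosh_add_sinh y; have := Real.exp_pos y; linarith
  · have := Real.cosh_sub_sinh y; have := Real.exp_pos (-y); linarith

lemma abs_sinh_le_exp_abs (y : ℝ) : |Real.sinh y| ≤ Real.exp |y| :=
  (abs_sinh_le_cosh y).trans (cosh_le_exp_abs y)

lemma two_sinh_mul_cosh (x y : ℝ) :
    2 * Real.sinh x * Real.cosh y = Real.sinh (x + y) + Real.sinh (x - y) := by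
  rw [Real.sinh_add, Real.sinh_sub]; ring

lemma two_cosh_mul_cosh (x y : ℝ) :
    2 * Real.cosh x * Real.cosh y = Real.cosh (x + y) + Real.cosh (x - y) := by
  rw [Real.cosh_add, Real.cosh_sub]; ring

lemma two_sinh_mul_sinh (x y : ℝ) :
    2 * Real.sinh x * Real.sinh y = Real.cosh (x + y) - Real.cosh (x - y) := by
  rw [Real.cosh_add, Real.cosh_sub]; ring

lemma abs_div_two_cosh_le (num x y : ℝ) (hnum : |num| ≤ Real.exp x) :
    |num / (2 * Real.cosh y)| ≤ Real.exp (x - y) := by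
  have hc := Real.cosh_pos y
  rw [abs_div, abs_of_pos (by linarith : (0:ℝ) < 2 * Real.cosh y), Real.exp_sub]
  exact div_le_div₀ (Real.exp_pos x).le hnum (by linarith [exp_le_two_cosh y, Real.exp_pos y])
    (exp_le_two_cosh y)

lemma abs_div_two_sinh_le (num x y : ℝ) (hnum : |num| ≤ Real.exp x)
    (hy : Real.exp y ≤ 4 * Real.sinh y) :
    |num / (2 * Real.sinh y)| ≤ 2 * Real.exp (x - y) := by
  have hey := Real.exp_pos y
  have hs : 0 < Real.sinh y := by linarith
  rw [abs_div, abs_of_pos (by linarith : (0:ℝ) < 2 * Real.sinh y), Real.exp_sub]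
  rw [div_le_iff₀ (by linarith : (0:ℝ) < 2 * Real.sinh y)]
  have h1 : |num| * Real.exp y ≤ 4 * Real.exp x * Real.sinh y := by
    nlinarith [mul_le_mul hnum hy hey.le (Real.exp_pos x).le]
  have h2 : Real.exp x / Real.exp y * Real.exp y = Real.exp x :=
    div_mul_cancel₀ _ (ne_of_gt hey)
  nlinarith [h1, h2, hey]

lemma eventually_exp_le_four_sinh {d : ℝ} (hd : 0 < d) :
    ∀ᶠ t : ℝ in atTop, Real.exp (t * d) ≤ 4 * Real.sinh (t * d) := by
  have h : Tendsto (fun t : ℝ => t * d) atTop atTop := Tendsto.atTop_mul_const hd tendsto_id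
  filter_upwards [h.eventually_ge_atTop 1] with t ht
  rw [Real.sinh_eq, Real.exp_neg]
  have h2 : (2:ℝ) ≤ Real.exp (t*d) := by have := Real.add_one_le_exp (t*d); linarith
  have h3 := Real.exp_pos (t*d)
  have h4 : (Real.exp (t*d))⁻¹ * Real.exp (t*d) = 1 := inv_mul_cancel₀ (ne_of_gt h3)
  have h5 : (Real.exp (t*d))⁻¹ ≤ 1/2 := by nlinarith [inv_pos.mpr h3]
  nlinarith


section Blocks
variable (d₁ d₂ : ℝ)

noncomputable def q1 (t : ℝ) : ℝ := Real.cosh (t*d₁) * Real.cosh (t*d₂) / Real.cosh (t*(d₁+d₂))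
noncomputable def q2 (t : ℝ) : ℝ := Real.sinh (t*d₁) * Real.sinh (t*d₂) / Real.cosh (t*(d₁+d₂))
noncomputable def p1 (t : ℝ) : ℝ := Real.sinh (t*d₂) * Real.cosh (t*d₁) / Real.cosh (t*(d₁+d₂))
noncomputable def p2 (t : ℝ) : ℝ := Real.sinh (t*d₁) * Real.cosh (t*d₂) / Real.cosh (t*(d₁+d₂))
noncomputable def tu (t : ℝ) : ℝ := Real.sinh (t*(d₁+d₂)) / Real.cosh (t*(d₁+d₂))
noncomputable def u1 (t : ℝ) : ℝ := Real.sinh (t*d₂) * Real.cosh (t*d₁) / Real.sinh (t*(d₁+d₂))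
noncomputable def u2 (t : ℝ) : ℝ := Real.sinh (t*d₁) * Real.cosh (t*d₂) / Real.sinh (t*(d₁+d₂))
noncomputable def rr (t : ℝ) : ℝ := Real.sinh (t*d₁) * Real.sinh (t*d₂) / Real.sinh (t*(d₁+d₂))
noncomputable def cth (t : ℝ) : ℝ := Real.cosh (t*(d₁+d₂)) / Real.sinh (t*(d₁+d₂))
noncomputable def dp1 (t : ℝ) : ℝ := d₂ * q1 d₁ d₂ t + d₁ * q2 d₁ d₂ t - (d₁+d₂) * p1 d₁ d₂ t * tu d₁ d₂ t
noncomputable def dp2 (t : ℝ) : ℝ := d₁ * q1 d₁ d₂ t + d₂ * q2 d₁ d₂ t - (d₁+d₂) * p2 d₁ d₂ t * tu d₁ d₂ t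
noncomputable def drr (t : ℝ) : ℝ := d₁ * u1 d₁ d₂ t + d₂ * u2 d₁ d₂ t - (d₁+d₂) * rr d₁ d₂ t * cth d₁ d₂ t
noncomputable def dtu (t : ℝ) : ℝ := (d₁+d₂) / Real.cosh (t*(d₁+d₂)) ^ 2

end Blocks

section Bounds
variable {d₁ d₂ : ℝ} (hd₁ : 0 < d₁) (hd₂ : 0 < d₂)

include hd₁ hd₂ in
lemma min_pos : 0 < min d₁ d₂ := lt_min hd₁ hd₂

include hd₁ hd₂ in
lemma exp_exponent_le (t : ℝ) (ht : 0 ≤ t) :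
    |t*d₁ - t*d₂| + 1 - t*(d₁+d₂) ≤ 1 - min d₁ d₂ * t := by
  rcases le_total d₁ d₂ with h2 | h2
  · rw [min_eq_left h2]
    have := mul_le_mul_of_nonneg_left h2 ht
    rcases abs_cases (t*d₁ - t*d₂) with ⟨h, _⟩ | ⟨h, _⟩ <;> rw [h] <;>
      nlinarith [mul_nonneg ht hd₂.le, mul_nonneg ht hd₁.le]
  · rw [min_eq_right h2]
    have := mul_le_mul_of_nonneg_left h2 ht
    rcases abs_cases (t*d₁ - t*d₂) with ⟨h, _⟩ | ⟨h, _⟩ <;> rw [h] <;>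
      nlinarith [mul_nonneg ht hd₂.le, mul_nonneg ht hd₁.le]

include hd₁ hd₂ in
lemma bound_q1 :
    ∀ᶠ t in atTop, |q1 d₁ d₂ t - 1/2| ≤ Real.exp 1 * Real.exp (-(min d₁ d₂ * t)) := by
  filter_upwards [eventually_ge_atTop (0:ℝ)] with t ht
  have hcD := Real.cosh_pos (t*(d₁+d₂))
  have key : 2 * Real.cosh (t*d₁) * Real.cosh (t*d₂)
      = Real.cosh (t*(d₁+d₂)) + Real.cosh (t*d₁ - t*d₂) := by
    have := two_cosh_mul_cosh (t*d₁) (t*d₂); rw [← mul_add] at this; exact this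
  have hdiff : q1 d₁ d₂ t - 1/2 = Real.cosh (t*d₁ - t*d₂) / (2 * Real.cosh (t*(d₁+d₂))) := by
    unfold q1; field_simp
    linear_combination (norm := ring_nf) key
  rw [hdiff]
  calc |Real.cosh (t*d₁ - t*d₂) / (2 * Real.cosh (t*(d₁+d₂)))|
      ≤ Real.exp (|t*d₁ - t*d₂| + 1 - t*(d₁+d₂)) := by
        refine abs_div_two_cosh_le _ _ _ ?_
        rw [abs_of_pos (Real.cosh_pos _)]
        calc Real.cosh (t*d₁ - t*d₂) ≤ Real.exp |t*d₁ - t*d₂| := cosh_le_exp_abs _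
          _ ≤ Real.exp (|t*d₁ - t*d₂| + 1) := by
              apply Real.exp_le_exp.mpr; linarith
    _ ≤ Real.exp (1 - min d₁ d₂ * t) := Real.exp_le_exp.mpr (exp_exponent_le hd₁ hd₂ t ht)
    _ = Real.exp 1 * Real.exp (-(min d₁ d₂ * t)) := by rw [← Real.exp_add]; ring_nf

lemma num_helper {n x : ℝ} (h : |n| ≤ 2 * Real.exp x) : |n| ≤ Real.exp (x+1) := by
  rw [Real.exp_add]; nlinarith [Real.add_one_le_exp 1, Real.exp_pos x]

include hd₁ hd₂ in
lemma bound_q2 :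
    ∀ᶠ t in atTop, |q2 d₁ d₂ t - 1/2| ≤ Real.exp 1 * Real.exp (-(min d₁ d₂ * t)) := by
  filter_upwards [eventually_ge_atTop (0:ℝ)] with t ht
  have hcD := Real.cosh_pos (t*(d₁+d₂))
  have key : 2 * Real.sinh (t*d₁) * Real.sinh (t*d₂)
      = Real.cosh (t*(d₁+d₂)) - Real.cosh (t*d₁ - t*d₂) := by
    have := two_sinh_mul_sinh (t*d₁) (t*d₂); rw [← mul_add] at this; exact this
  have hdiff : q2 d₁ d₂ t - 1/2 = -Real.cosh (t*d₁ - t*d₂) / (2 * Real.cosh (t*(d₁+d₂))) := by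
    unfold q2; field_simp
    linear_combination (norm := ring_nf) key
  rw [hdiff]
  calc |(-Real.cosh (t*d₁ - t*d₂)) / (2 * Real.cosh (t*(d₁+d₂)))|
      ≤ Real.exp (|t*d₁ - t*d₂| + 1 - t*(d₁+d₂)) := by
        refine abs_div_two_cosh_le _ _ _ ?_
        rw [abs_neg, abs_of_pos (Real.cosh_pos _)]
        refine (cosh_le_exp_abs _).trans (Real.exp_le_exp.mpr (by linarith))
    _ ≤ Real.exp (1 - min d₁ d₂ * t) := Real.exp_le_exp.mpr (exp_exponent_le hd₁ hd₂ t ht)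
    _ = Real.exp 1 * Real.exp (-(min d₁ d₂ * t)) := by rw [← Real.exp_add]; ring_nf

include hd₁ hd₂ in
lemma bound_p1 :
    ∀ᶠ t in atTop, |p1 d₁ d₂ t - 1/2| ≤ Real.exp 1 * Real.exp (-(min d₁ d₂ * t)) := by
  filter_upwards [eventually_ge_atTop (0:ℝ)] with t ht
  have hcD := Real.cosh_pos (t*(d₁+d₂))
  have key : 2 * Real.sinh (t*d₂) * Real.cosh (t*d₁)
      = Real.sinh (t*(d₁+d₂)) + Real.sinh (t*d₂ - t*d₁) := by
    have := two_sinh_mul_cosh (t*d₂) (t*d₁)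
    rw [show t*d₂ + t*d₁ = t*(d₁+d₂) by ring] at this; exact this
  have hdiff : p1 d₁ d₂ t - 1/2 =
      (Real.sinh (t*d₂ - t*d₁) - Real.exp (-(t*(d₁+d₂)))) / (2 * Real.cosh (t*(d₁+d₂))) := by
    unfold p1; field_simp
    linear_combination (norm := ring_nf) key
      - Real.cosh_sub_sinh (t*(d₁+d₂))
  rw [hdiff]
  calc |(Real.sinh (t*d₂ - t*d₁) - Real.exp (-(t*(d₁+d₂)))) / (2 * Real.cosh (t*(d₁+d₂)))|
      ≤ Real.exp (|t*d₁ - t*d₂| + 1 - t*(d₁+d₂)) := by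
        refine abs_div_two_cosh_le _ _ _ (num_helper ?_)
        rw [abs_sub_comm (t*d₁) (t*d₂)]
        have h1 := abs_sinh_le_exp_abs (t*d₂ - t*d₁)
        have h2 : Real.exp (-(t*(d₁+d₂))) ≤ 1 :=
          Real.exp_le_one_iff.mpr (by nlinarith)
        have h3 : (1:ℝ) ≤ Real.exp |t*d₂ - t*d₁| := Real.one_le_exp (abs_nonneg _)
        calc |Real.sinh (t*d₂ - t*d₁) - Real.exp (-(t*(d₁+d₂)))|
            ≤ |Real.sinh (t*d₂ - t*d₁)| + |Real.exp (-(t*(d₁+d₂)))| := abs_sub _ _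
          _ ≤ 2 * Real.exp |t*d₂ - t*d₁| := by
              rw [abs_of_pos (Real.exp_pos _)]; linarith
    _ ≤ Real.exp (1 - min d₁ d₂ * t) := Real.exp_le_exp.mpr (exp_exponent_le hd₁ hd₂ t ht)
    _ = Real.exp 1 * Real.exp (-(min d₁ d₂ * t)) := by rw [← Real.exp_add]; ring_nf

include hd₁ hd₂ in
lemma bound_p2 :
    ∀ᶠ t in atTop, |p2 d₁ d₂ t - 1/2| ≤ Real.exp 1 * Real.exp (-(min d₁ d₂ * t)) := by
  filter_upwards [eventually_ge_atTop (0:ℝ)] with t ht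
  have hcD := Real.cosh_pos (t*(d₁+d₂))
  have key : 2 * Real.sinh (t*d₁) * Real.cosh (t*d₂)
      = Real.sinh (t*(d₁+d₂)) + Real.sinh (t*d₁ - t*d₂) := by
    have := two_sinh_mul_cosh (t*d₁) (t*d₂)
    rw [show t*d₁ + t*d₂ = t*(d₁+d₂) by ring] at this; exact this
  have hdiff : p2 d₁ d₂ t - 1/2 =
      (Real.sinh (t*d₁ - t*d₂) - Real.exp (-(t*(d₁+d₂)))) / (2 * Real.cosh (t*(d₁+d₂))) := by
    unfold p2; field_simp
    linear_combination (norm := ring_nf) key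
      - Real.cosh_sub_sinh (t*(d₁+d₂))
  rw [hdiff]
  calc |(Real.sinh (t*d₁ - t*d₂) - Real.exp (-(t*(d₁+d₂)))) / (2 * Real.cosh (t*(d₁+d₂)))|
      ≤ Real.exp (|t*d₁ - t*d₂| + 1 - t*(d₁+d₂)) := by
        refine abs_div_two_cosh_le _ _ _ (num_helper ?_)
        have h1 := abs_sinh_le_exp_abs (t*d₁ - t*d₂)
        have h2 : Real.exp (-(t*(d₁+d₂))) ≤ 1 :=
          Real.exp_le_one_iff.mpr (by nlinarith)
        have h3 : (1:ℝ) ≤ Real.exp |t*d₁ - t*d₂| := Real.one_le_exp (abs_nonneg _)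
        calc |Real.sinh (t*d₁ - t*d₂) - Real.exp (-(t*(d₁+d₂)))|
            ≤ |Real.sinh (t*d₁ - t*d₂)| + |Real.exp (-(t*(d₁+d₂)))| := abs_sub _ _
          _ ≤ 2 * Real.exp |t*d₁ - t*d₂| := by
              rw [abs_of_pos (Real.exp_pos _)]; linarith
    _ ≤ Real.exp (1 - min d₁ d₂ * t) := Real.exp_le_exp.mpr (exp_exponent_le hd₁ hd₂ t ht)
    _ = Real.exp 1 * Real.exp (-(min d₁ d₂ * t)) := by rw [← Real.exp_add]; ring_nf

include hd₁ hd₂ in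
lemma bound_tu :
    ∀ᶠ t in atTop, |tu d₁ d₂ t - 1| ≤ Real.exp 1 * Real.exp (-(min d₁ d₂ * t)) := by
  filter_upwards [eventually_ge_atTop (0:ℝ)] with t ht
  have hcD := Real.cosh_pos (t*(d₁+d₂))
  have hdiff : tu d₁ d₂ t - 1 = (-(2*Real.exp (-(t*(d₁+d₂))))) / (2 * Real.cosh (t*(d₁+d₂))) := by
    unfold tu; field_simp; linear_combination (norm := ring_nf) -(Real.cosh_sub_sinh (t*(d₁+d₂)))
  rw [hdiff]
  calc |(-(2*Real.exp (-(t*(d₁+d₂))))) / (2 * Real.cosh (t*(d₁+d₂)))|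
      ≤ Real.exp (|t*d₁ - t*d₂| + 1 - t*(d₁+d₂)) := by
        refine abs_div_two_cosh_le _ _ _ (num_helper ?_)
        rw [abs_neg, abs_of_pos (by positivity : (0:ℝ) < 2*Real.exp (-(t*(d₁+d₂))))]
        have h2 : Real.exp (-(t*(d₁+d₂))) ≤ 1 := Real.exp_le_one_iff.mpr (by nlinarith)
        have h3 : (1:ℝ) ≤ Real.exp |t*d₁ - t*d₂| := Real.one_le_exp (abs_nonneg _)
        linarith
    _ ≤ Real.exp (1 - min d₁ d₂ * t) := Real.exp_le_exp.mpr (exp_exponent_le hd₁ hd₂ t ht)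
    _ = Real.exp 1 * Real.exp (-(min d₁ d₂ * t)) := by rw [← Real.exp_add]; ring_nf

include hd₁ hd₂ in
lemma bound_dtu :
    ∀ᶠ t in atTop, |dtu d₁ d₂ t| ≤ (4*(d₁+d₂)) * Real.exp (-(min d₁ d₂ * t)) := by
  filter_upwards [eventually_ge_atTop (0:ℝ)] with t ht
  have hcD := Real.cosh_pos (t*(d₁+d₂))
  have hle : Real.exp (t*(d₁+d₂)) ≤ 2 * Real.cosh (t*(d₁+d₂)) := exp_le_two_cosh _
  have hd : 0 < d₁ + d₂ := by linarith
  unfold dtu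
  rw [abs_of_pos (by positivity)]
  have he1 : Real.exp (-(2*(t*(d₁+d₂)))) * Real.exp (2*(t*(d₁+d₂))) = 1 := by
    rw [← Real.exp_add]; simp
  have he2 : Real.exp (2*(t*(d₁+d₂))) = Real.exp (t*(d₁+d₂)) ^ 2 := by
    rw [two_mul, Real.exp_add, sq]
  have h2 : (d₁+d₂) / Real.cosh (t*(d₁+d₂)) ^ 2
      ≤ 4*(d₁+d₂) * Real.exp (-(2*(t*(d₁+d₂)))) := by
    rw [div_le_iff₀ (by positivity)]
    have hc2 : Real.exp (2*(t*(d₁+d₂))) ≤ 4 * Real.cosh (t*(d₁+d₂))^2 := by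
      rw [he2]; nlinarith [Real.exp_pos (t*(d₁+d₂))]
    have fact1 := mul_le_mul_of_nonneg_left hc2
      (mul_nonneg hd.le (Real.exp_pos (-(2*(t*(d₁+d₂))))).le)
    have he1' : (d₁+d₂) * (Real.exp (-(2*(t*(d₁+d₂)))) * Real.exp (2*(t*(d₁+d₂))))
        = (d₁+d₂) := by rw [he1, mul_one]
    nlinarith [fact1, he1']
  refine h2.trans ?_
  have h3 : Real.exp (-(2*(t*(d₁+d₂)))) ≤ Real.exp (-(min d₁ d₂ * t)) := by
    apply Real.exp_le_exp.mpr
    rcases min_cases d₁ d₂ with ⟨h4, _⟩ | ⟨h4, _⟩ <;> rw [h4] <;> nlinarith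
  nlinarith [Real.exp_pos (-(2*(t*(d₁+d₂))))]

include hd₁ hd₂ in
lemma bound_u1 :
    ∀ᶠ t in atTop, |u1 d₁ d₂ t - 1/2| ≤ (2*Real.exp 1) * Real.exp (-(min d₁ d₂ * t)) := by
  have hd : 0 < d₁ + d₂ := by linarith
  filter_upwards [eventually_ge_atTop (0:ℝ), eventually_exp_le_four_sinh hd,
    (Tendsto.atTop_mul_const hd (tendsto_id (α := ℝ))).eventually_gt_atTop 0] with t ht hs hspos
  have hsD : (0:ℝ) < Real.sinh (t*(d₁+d₂)) := by
    rw [show (0:ℝ) = Real.sinh 0 by simp]; exact Real.sinh_lt_sinh.mpr hspos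
  have key : 2 * Real.sinh (t*d₂) * Real.cosh (t*d₁)
      = Real.sinh (t*(d₁+d₂)) + Real.sinh (t*d₂ - t*d₁) := by
    have := two_sinh_mul_cosh (t*d₂) (t*d₁)
    rw [show t*d₂ + t*d₁ = t*(d₁+d₂) by ring] at this; exact this
  have hdiff : u1 d₁ d₂ t - 1/2 = Real.sinh (t*d₂ - t*d₁) / (2 * Real.sinh (t*(d₁+d₂))) := by
    unfold u1; field_simp
    linear_combination (norm := ring_nf) key
  rw [hdiff]
  calc |Real.sinh (t*d₂ - t*d₁) / (2 * Real.sinh (t*(d₁+d₂)))|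
      ≤ 2 * Real.exp (|t*d₁ - t*d₂| + 1 - t*(d₁+d₂)) := by
        refine abs_div_two_sinh_le _ _ _ ?_ hs
        rw [abs_sub_comm (t*d₁) (t*d₂)]
        refine (abs_sinh_le_exp_abs _).trans (Real.exp_le_exp.mpr (by linarith))
    _ ≤ 2 * Real.exp (1 - min d₁ d₂ * t) := by
        have := Real.exp_le_exp.mpr (exp_exponent_le hd₁ hd₂ t ht); linarith
    _ = (2*Real.exp 1) * Real.exp (-(min d₁ d₂ * t)) := by
        rw [mul_assoc, ← Real.exp_add]; ring_nf

include hd₁ hd₂ in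
lemma bound_u2 :
    ∀ᶠ t in atTop, |u2 d₁ d₂ t - 1/2| ≤ (2*Real.exp 1) * Real.exp (-(min d₁ d₂ * t)) := by
  have hd : 0 < d₁ + d₂ := by linarith
  filter_upwards [eventually_ge_atTop (0:ℝ), eventually_exp_le_four_sinh hd,
    (Tendsto.atTop_mul_const hd (tendsto_id (α := ℝ))).eventually_gt_atTop 0] with t ht hs hspos
  have hsD : (0:ℝ) < Real.sinh (t*(d₁+d₂)) := by
    rw [show (0:ℝ) = Real.sinh 0 by simp]; exact Real.sinh_lt_sinh.mpr hspos
  have key : 2 * Real.sinh (t*d₁) * Real.cosh (t*d₂)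
      = Real.sinh (t*(d₁+d₂)) + Real.sinh (t*d₁ - t*d₂) := by
    have := two_sinh_mul_cosh (t*d₁) (t*d₂)
    rw [show t*d₁ + t*d₂ = t*(d₁+d₂) by ring] at this; exact this
  have hdiff : u2 d₁ d₂ t - 1/2 = Real.sinh (t*d₁ - t*d₂) / (2 * Real.sinh (t*(d₁+d₂))) := by
    unfold u2; field_simp
    linear_combination (norm := ring_nf) key
  rw [hdiff]
  calc |Real.sinh (t*d₁ - t*d₂) / (2 * Real.sinh (t*(d₁+d₂)))|
      ≤ 2 * Real.exp (|t*d₁ - t*d₂| + 1 - t*(d₁+d₂)) := by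
        refine abs_div_two_sinh_le _ _ _ ?_ hs
        refine (abs_sinh_le_exp_abs _).trans (Real.exp_le_exp.mpr (by linarith))
    _ ≤ 2 * Real.exp (1 - min d₁ d₂ * t) := by
        have := Real.exp_le_exp.mpr (exp_exponent_le hd₁ hd₂ t ht); linarith
    _ = (2*Real.exp 1) * Real.exp (-(min d₁ d₂ * t)) := by
        rw [mul_assoc, ← Real.exp_add]; ring_nf

include hd₁ hd₂ in
lemma bound_rr :
    ∀ᶠ t in atTop, |rr d₁ d₂ t - 1/2| ≤ (2*Real.exp 1) * Real.exp (-(min d₁ d₂ * t)) := by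
  have hd : 0 < d₁ + d₂ := by linarith
  filter_upwards [eventually_ge_atTop (0:ℝ), eventually_exp_le_four_sinh hd,
    (Tendsto.atTop_mul_const hd (tendsto_id (α := ℝ))).eventually_gt_atTop 0] with t ht hs hspos
  have hsD : (0:ℝ) < Real.sinh (t*(d₁+d₂)) := by
    rw [show (0:ℝ) = Real.sinh 0 by simp]; exact Real.sinh_lt_sinh.mpr hspos
  have key : 2 * Real.sinh (t*d₁) * Real.sinh (t*d₂)
      = Real.cosh (t*(d₁+d₂)) - Real.cosh (t*d₁ - t*d₂) := by
    have := two_sinh_mul_sinh (t*d₁) (t*d₂); rw [← mul_add] at this; exact this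
  have hdiff : rr d₁ d₂ t - 1/2 =
      (Real.exp (-(t*(d₁+d₂))) - Real.cosh (t*d₁ - t*d₂)) / (2 * Real.sinh (t*(d₁+d₂))) := by
    unfold rr; field_simp
    linear_combination (norm := ring_nf) key
      + Real.cosh_sub_sinh (t*(d₁+d₂))
  rw [hdiff]
  calc |(Real.exp (-(t*(d₁+d₂))) - Real.cosh (t*d₁ - t*d₂)) / (2 * Real.sinh (t*(d₁+d₂)))|
      ≤ 2 * Real.exp (|t*d₁ - t*d₂| + 1 - t*(d₁+d₂)) := by
        refine abs_div_two_sinh_le _ _ _ (num_helper ?_) hs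
        have h1 := cosh_le_exp_abs (t*d₁ - t*d₂)
        have h2 : Real.exp (-(t*(d₁+d₂))) ≤ 1 := Real.exp_le_one_iff.mpr (by nlinarith)
        have h3 : (1:ℝ) ≤ Real.exp |t*d₁ - t*d₂| := Real.one_le_exp (abs_nonneg _)
        calc |Real.exp (-(t*(d₁+d₂))) - Real.cosh (t*d₁ - t*d₂)|
            ≤ |Real.exp (-(t*(d₁+d₂)))| + |Real.cosh (t*d₁ - t*d₂)| := abs_sub _ _
          _ ≤ 2 * Real.exp |t*d₁ - t*d₂| := by
              rw [abs_of_pos (Real.exp_pos _), abs_of_pos (Real.cosh_pos _)]; linarith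
    _ ≤ 2 * Real.exp (1 - min d₁ d₂ * t) := by
        have := Real.exp_le_exp.mpr (exp_exponent_le hd₁ hd₂ t ht); linarith
    _ = (2*Real.exp 1) * Real.exp (-(min d₁ d₂ * t)) := by
        rw [mul_assoc, ← Real.exp_add]; ring_nf

include hd₁ hd₂ in
lemma bound_cth :
    ∀ᶠ t in atTop, |cth d₁ d₂ t - 1| ≤ (2*Real.exp 1) * Real.exp (-(min d₁ d₂ * t)) := by
  have hd : 0 < d₁ + d₂ := by linarith
  filter_upwards [eventually_ge_atTop (0:ℝ), eventually_exp_le_four_sinh hd,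
    (Tendsto.atTop_mul_const hd (tendsto_id (α := ℝ))).eventually_gt_atTop 0] with t ht hs hspos
  have hsD : (0:ℝ) < Real.sinh (t*(d₁+d₂)) := by
    rw [show (0:ℝ) = Real.sinh 0 by simp]; exact Real.sinh_lt_sinh.mpr hspos
  have hdiff : cth d₁ d₂ t - 1 = (2*Real.exp (-(t*(d₁+d₂)))) / (2 * Real.sinh (t*(d₁+d₂))) := by
    unfold cth; field_simp; linear_combination (norm := ring_nf) Real.cosh_sub_sinh (t*(d₁+d₂))
  rw [hdiff]
  calc |(2*Real.exp (-(t*(d₁+d₂)))) / (2 * Real.sinh (t*(d₁+d₂)))|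
      ≤ 2 * Real.exp (|t*d₁ - t*d₂| + 1 - t*(d₁+d₂)) := by
        refine abs_div_two_sinh_le _ _ _ (num_helper ?_) hs
        rw [abs_of_pos (by positivity : (0:ℝ) < 2*Real.exp (-(t*(d₁+d₂))))]
        have h2 : Real.exp (-(t*(d₁+d₂))) ≤ 1 := Real.exp_le_one_iff.mpr (by nlinarith)
        have h3 : (1:ℝ) ≤ Real.exp |t*d₁ - t*d₂| := Real.one_le_exp (abs_nonneg _)
        linarith
    _ ≤ 2 * Real.exp (1 - min d₁ d₂ * t) := by
        have := Real.exp_le_exp.mpr (exp_exponent_le hd₁ hd₂ t ht); linarith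
    _ = (2*Real.exp 1) * Real.exp (-(min d₁ d₂ * t)) := by
        rw [mul_assoc, ← Real.exp_add]; ring_nf

include hd₁ hd₂ in
lemma T_p1 : Tendsto (p1 d₁ d₂) atTop (nhds (1/2)) := by
  have h := master0 (Real.exp 1) (min_pos hd₁ hd₂) _ (bound_p1 hd₁ hd₂)
  have h2 := h.add_const (1/2); rw [zero_add] at h2
  exact h2.congr (fun t => by ring)

include hd₁ hd₂ in
lemma T_p2 : Tendsto (p2 d₁ d₂) atTop (nhds (1/2)) := by
  have h := master0 (Real.exp 1) (min_pos hd₁ hd₂) _ (bound_p2 hd₁ hd₂)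
  have h2 := h.add_const (1/2); rw [zero_add] at h2
  exact h2.congr (fun t => by ring)

include hd₁ hd₂ in
lemma T_tu : Tendsto (tu d₁ d₂) atTop (nhds 1) := by
  have h := master0 (Real.exp 1) (min_pos hd₁ hd₂) _ (bound_tu hd₁ hd₂)
  have h2 := h.add_const 1; rw [zero_add] at h2
  exact h2.congr (fun t => by ring)

include hd₁ hd₂ in
lemma T_u1 : Tendsto (u1 d₁ d₂) atTop (nhds (1/2)) := by
  have h := master0 (2*Real.exp 1) (min_pos hd₁ hd₂) _ (bound_u1 hd₁ hd₂)
  have h2 := h.add_const (1/2); rw [zero_add] at h2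
  exact h2.congr (fun t => by ring)

include hd₁ hd₂ in
lemma T_u2 : Tendsto (u2 d₁ d₂) atTop (nhds (1/2)) := by
  have h := master0 (2*Real.exp 1) (min_pos hd₁ hd₂) _ (bound_u2 hd₁ hd₂)
  have h2 := h.add_const (1/2); rw [zero_add] at h2
  exact h2.congr (fun t => by ring)

include hd₁ hd₂ in
lemma T_rr : Tendsto (rr d₁ d₂) atTop (nhds (1/2)) := by
  have h := master0 (2*Real.exp 1) (min_pos hd₁ hd₂) _ (bound_rr hd₁ hd₂)
  have h2 := h.add_const (1/2); rw [zero_add] at h2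
  exact h2.congr (fun t => by ring)

include hd₁ hd₂ in
lemma T_cth : Tendsto (cth d₁ d₂) atTop (nhds 1) := by
  have h := master0 (2*Real.exp 1) (min_pos hd₁ hd₂) _ (bound_cth hd₁ hd₂)
  have h2 := h.add_const 1; rw [zero_add] at h2
  exact h2.congr (fun t => by ring)

include hd₁ hd₂ in
lemma Tw_q1 : Tendsto (fun t => t * (q1 d₁ d₂ t - 1/2)) atTop (nhds 0) := by
  simpa using master 1 (Real.exp 1) (min_pos hd₁ hd₂) _ (bound_q1 hd₁ hd₂)

include hd₁ hd₂ in
lemma Tw_q2 : Tendsto (fun t => t * (q2 d₁ d₂ t - 1/2)) atTop (nhds 0) := by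
  simpa using master 1 (Real.exp 1) (min_pos hd₁ hd₂) _ (bound_q2 hd₁ hd₂)

include hd₁ hd₂ in
lemma Tw_p1 : Tendsto (fun t => t * (p1 d₁ d₂ t - 1/2)) atTop (nhds 0) := by
  simpa using master 1 (Real.exp 1) (min_pos hd₁ hd₂) _ (bound_p1 hd₁ hd₂)

include hd₁ hd₂ in
lemma Tw_p2 : Tendsto (fun t => t * (p2 d₁ d₂ t - 1/2)) atTop (nhds 0) := by
  simpa using master 1 (Real.exp 1) (min_pos hd₁ hd₂) _ (bound_p2 hd₁ hd₂)

include hd₁ hd₂ in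
lemma Tw_tu : Tendsto (fun t => t * (tu d₁ d₂ t - 1)) atTop (nhds 0) := by
  simpa using master 1 (Real.exp 1) (min_pos hd₁ hd₂) _ (bound_tu hd₁ hd₂)

include hd₁ hd₂ in
lemma Tw2_dtu : Tendsto (fun t => t^2 * dtu d₁ d₂ t) atTop (nhds 0) := by
  simpa using master 2 (4*(d₁+d₂)) (min_pos hd₁ hd₂) _ (bound_dtu hd₁ hd₂)

include hd₁ hd₂ in
lemma T_drr : Tendsto (drr d₁ d₂) atTop (nhds 0) := by
  have H := (((T_u1 hd₁ hd₂).const_mul d₁).add ((T_u2 hd₁ hd₂).const_mul d₂)).sub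
    (((T_rr hd₁ hd₂).mul (T_cth hd₁ hd₂)).const_mul (d₁+d₂))
  have hval : (0:ℝ) = d₁ * (1/2) + d₂ * (1/2) - (d₁+d₂) * (1/2 * 1) := by ring
  rw [hval]
  exact H.congr (fun t => by unfold drr; ring)

lemma sinh_comp_hasDeriv (c t : ℝ) :
    HasDerivAt (fun s : ℝ => Real.sinh (s*c)) (Real.cosh (t*c) * c) t :=
  (Real.hasDerivAt_sinh (t*c)).comp (h₂ := Real.sinh) t (hasDerivAt_mul_const c)

lemma cosh_comp_hasDeriv (c t : ℝ) :
    HasDerivAt (fun s : ℝ => Real.cosh (s*c)) (Real.sinh (t*c) * c) t :=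
  (Real.hasDerivAt_cosh (t*c)).comp (h₂ := Real.cosh) t (hasDerivAt_mul_const c)

lemma hasDerivAt_p1 (t : ℝ) : HasDerivAt (p1 d₁ d₂) (dp1 d₁ d₂ t) t := by
  have hcD := Real.cosh_pos (t*(d₁+d₂))
  have h := ((sinh_comp_hasDeriv d₂ t).mul (cosh_comp_hasDeriv d₁ t)).div
    (cosh_comp_hasDeriv (d₁+d₂) t) (ne_of_gt hcD)
  refine h.congr_deriv (Eq.symm ?_)
  simp only [Pi.mul_apply]
  unfold dp1 q1 q2 p1 tu
  field_simp

lemma hasDerivAt_p2 (t : ℝ) : HasDerivAt (p2 d₁ d₂) (dp2 d₁ d₂ t) t := by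
  have hcD := Real.cosh_pos (t*(d₁+d₂))
  have h := ((sinh_comp_hasDeriv d₁ t).mul (cosh_comp_hasDeriv d₂ t)).div
    (cosh_comp_hasDeriv (d₁+d₂) t) (ne_of_gt hcD)
  refine h.congr_deriv (Eq.symm ?_)
  simp only [Pi.mul_apply]
  unfold dp2 q1 q2 p2 tu
  field_simp

lemma hasDerivAt_tu (t : ℝ) : HasDerivAt (tu d₁ d₂) (dtu d₁ d₂ t) t := by
  have hcD := Real.cosh_pos (t*(d₁+d₂))
  have h := (sinh_comp_hasDeriv (d₁+d₂) t).div
    (cosh_comp_hasDeriv (d₁+d₂) t) (ne_of_gt hcD)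
  refine h.congr_deriv (Eq.symm ?_)
  unfold dtu
  rw [div_eq_div_iff (by positivity) (by positivity)]
  linear_combination (-((d₁+d₂) * Real.cosh (t*(d₁+d₂))^2)) * Real.cosh_sq_sub_sinh_sq (t*(d₁+d₂))

lemma hasDerivAt_rr (t : ℝ) (hs : Real.sinh (t*(d₁+d₂)) ≠ 0) :
    HasDerivAt (rr d₁ d₂) (drr d₁ d₂ t) t := by
  have h := ((sinh_comp_hasDeriv d₁ t).mul (sinh_comp_hasDeriv d₂ t)).div
    (sinh_comp_hasDeriv (d₁+d₂) t) hs
  refine h.congr_deriv (Eq.symm ?_)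
  simp only [Pi.mul_apply]
  unfold drr u1 u2 rr cth
  field_simp

lemma sinh_pos' {x : ℝ} (hx : 0 < x) : 0 < Real.sinh x := by
  rw [show (0:ℝ) = Real.sinh 0 by simp]; exact Real.sinh_lt_sinh.mpr hx

noncomputable def Ader (d₁ d₂ γ₁ γ₂ t : ℝ) : ℝ :=
  1/t^2 * (γ₂*(t*d₂ + p1 d₁ d₂ t) + γ₁ * p2 d₁ d₂ t)
    - 1/t * (γ₂*(d₂ + dp1 d₁ d₂ t) + γ₁ * dp2 d₁ d₂ t)

noncomputable def Bder (d₁ d₂ g γ₁ γ₂ t : ℝ) : ℝ :=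
  dtu d₁ d₂ t * ((γ₂^2*d₂ - g)/t + γ₂*(γ₁-γ₂) * rr d₁ d₂ t / t^2)
  + tu d₁ d₂ t * (-((γ₂^2*d₂ - g)/t^2) + γ₂*(γ₁-γ₂) * (drr d₁ d₂ t / t^2 - 2 * rr d₁ d₂ t / t^3))

noncomputable def Cder (d₁ d₂ g γ₁ γ₂ t : ℝ) : ℝ :=
  g * dtu d₁ d₂ t * ((γ₁-γ₂) * rr d₁ d₂ t / t^2 + γ₂*d₂/t)
  + g * tu d₁ d₂ t * ((γ₁-γ₂) * (drr d₁ d₂ t / t^2 - 2 * rr d₁ d₂ t / t^3) - γ₂*d₂/t^2)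

lemma hasDerivAt_funA (d₁ d₂ γ₁ γ₂ t : ℝ) (ht : 0 < t) :
    HasDerivAt (funA d₁ d₂ γ₁ γ₂) (Ader d₁ d₂ γ₁ γ₂ t) t := by
  have heq : funA d₁ d₂ γ₁ γ₂
      = fun s => -(1/s) * (γ₂*(s*d₂ + p1 d₁ d₂ s) + γ₁ * p2 d₁ d₂ s) := by
    funext s; simp only [funA, p1, p2]; ring
  rw [heq]
  have hinv : HasDerivAt (fun s : ℝ => -(1/s)) (1/t^2) t := by
    simp only [one_div]
    have h := (hasDerivAt_inv (ne_of_gt ht)).neg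
    refine h.congr_deriv (Eq.symm ?_)
    rw [neg_neg]
  have hG : HasDerivAt (fun s => γ₂*(s*d₂ + p1 d₁ d₂ s) + γ₁ * p2 d₁ d₂ s)
      (γ₂*(d₂ + dp1 d₁ d₂ t) + γ₁ * dp2 d₁ d₂ t) t :=
    (((hasDerivAt_mul_const d₂).add (hasDerivAt_p1 (d₁ := d₁) (d₂ := d₂) t)).const_mul γ₂).add
      ((hasDerivAt_p2 (d₁ := d₁) (d₂ := d₂) t).const_mul γ₁)
  have h2 := hinv.mul hG
  refine h2.congr_deriv (Eq.symm ?_)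
  unfold Ader
  ring

lemma hasDerivAt_funB (d₁ d₂ g γ₁ γ₂ : ℝ) (hd₁ : 0 < d₁) (hd₂ : 0 < d₂) (t : ℝ) (ht : 0 < t) :
    HasDerivAt (funB d₁ d₂ g γ₁ γ₂) (Bder d₁ d₂ g γ₁ γ₂ t) t := by
  have hd : 0 < d₁+d₂ := by linarith
  have hsD : Real.sinh (t*(d₁+d₂)) ≠ 0 := ne_of_gt (sinh_pos' (by positivity))
  have h1 : HasDerivAt (fun s : ℝ => (γ₂^2*d₂ - g)/s) (-((γ₂^2*d₂ - g)/t^2)) t := by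
    simp only [div_eq_mul_inv]
    have h := (hasDerivAt_inv (ne_of_gt ht)).const_mul (γ₂^2*d₂ - g)
    refine h.congr_deriv (Eq.symm ?_)
    field_simp
  have h2 : HasDerivAt (fun s => rr d₁ d₂ s / s^2)
      ((drr d₁ d₂ t * t^2 - rr d₁ d₂ t * (2*t)) / (t^2)^2) t := by
    have h := (hasDerivAt_rr (d₁ := d₁) (d₂ := d₂) t hsD).div (hasDerivAt_pow 2 t) (by positivity)
    refine h.congr_deriv (Eq.symm ?_)
    norm_num
  have hG := (hasDerivAt_tu (d₁ := d₁) (d₂ := d₂) t).mul (h1.add (h2.const_mul (γ₂*(γ₁-γ₂))))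
  have hG2 : HasDerivAt
      (fun s => tu d₁ d₂ s * ((γ₂^2*d₂ - g)/s + γ₂*(γ₁-γ₂) * (rr d₁ d₂ s / s^2)))
      (Bder d₁ d₂ g γ₁ γ₂ t) t := by
    refine hG.congr_deriv (Eq.symm ?_)
    simp only [Pi.add_apply]
    unfold Bder
    field_simp
  apply hG2.congr_of_eventuallyEq
  filter_upwards [Ioi_mem_nhds ht] with s hs
  have hs0 : (s:ℝ) ≠ 0 := ne_of_gt hs
  have hsD2 : Real.sinh (s*(d₁+d₂)) ≠ 0 := ne_of_gt (sinh_pos' (mul_pos hs hd))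
  have hcD2 : Real.cosh (s*(d₁+d₂)) ≠ 0 := ne_of_gt (Real.cosh_pos _)
  simp only [funB, tu, rr, Real.tanh_eq_sinh_div_cosh]
  field_simp

lemma hasDerivAt_funC (d₁ d₂ g γ₁ γ₂ : ℝ) (hd₁ : 0 < d₁) (hd₂ : 0 < d₂) (t : ℝ) (ht : 0 < t) :
    HasDerivAt (funC d₁ d₂ g γ₁ γ₂) (Cder d₁ d₂ g γ₁ γ₂ t) t := by
  have hd : 0 < d₁+d₂ := by linarith
  have hsD : Real.sinh (t*(d₁+d₂)) ≠ 0 := ne_of_gt (sinh_pos' (by positivity))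
  have h1 : HasDerivAt (fun s : ℝ => γ₂*d₂/s) (-(γ₂*d₂/t^2)) t := by
    simp only [div_eq_mul_inv]
    have h := (hasDerivAt_inv (ne_of_gt ht)).const_mul (γ₂*d₂)
    refine h.congr_deriv (Eq.symm ?_)
    field_simp
  have h2 : HasDerivAt (fun s => rr d₁ d₂ s / s^2)
      ((drr d₁ d₂ t * t^2 - rr d₁ d₂ t * (2*t)) / (t^2)^2) t := by
    have h := (hasDerivAt_rr (d₁ := d₁) (d₂ := d₂) t hsD).div (hasDerivAt_pow 2 t) (by positivity)
    refine h.congr_deriv (Eq.symm ?_)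
    norm_num
  have hG := ((hasDerivAt_tu (d₁ := d₁) (d₂ := d₂) t).mul ((h2.const_mul (γ₁-γ₂)).add h1)).const_mul g
  have hG2 : HasDerivAt
      (fun s => g * (tu d₁ d₂ s * ((γ₁-γ₂) * (rr d₁ d₂ s / s^2) + γ₂*d₂/s)))
      (Cder d₁ d₂ g γ₁ γ₂ t) t := by
    refine hG.congr_deriv (Eq.symm ?_)
    simp only [Pi.add_apply]
    unfold Cder
    field_simp
    ring
  apply hG2.congr_of_eventuallyEq
  filter_upwards [Ioi_mem_nhds ht] with s hs
  have hs0 : (s:ℝ) ≠ 0 := ne_of_gt hs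
  have hsD2 : Real.sinh (s*(d₁+d₂)) ≠ 0 := ne_of_gt (sinh_pos' (mul_pos hs hd))
  have hcD2 : Real.cosh (s*(d₁+d₂)) ≠ 0 := ne_of_gt (Real.cosh_pos _)
  simp only [funC, tu, rr, Real.tanh_eq_sinh_div_cosh]
  field_simp

include hd₁ hd₂ in
lemma Tw_dp1 : Tendsto (fun t => t * dp1 d₁ d₂ t) atTop (nhds 0) := by
  have H := (((Tw_q1 hd₁ hd₂).const_mul d₂).add ((Tw_q2 hd₁ hd₂).const_mul d₁)).sub
    ((((Tw_p1 hd₁ hd₂).mul (T_tu hd₁ hd₂)).add ((Tw_tu hd₁ hd₂).mul_const (1/2))).const_mul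
      (d₁+d₂))
  have hval : (0:ℝ) = d₂ * 0 + d₁ * 0 - (d₁+d₂) * (0 * 1 + 0 * (1/2)) := by ring
  rw [hval]
  exact H.congr (fun t => by unfold dp1; ring)

include hd₁ hd₂ in
lemma Tw_dp2 : Tendsto (fun t => t * dp2 d₁ d₂ t) atTop (nhds 0) := by
  have H := (((Tw_q1 hd₁ hd₂).const_mul d₁).add ((Tw_q2 hd₁ hd₂).const_mul d₂)).sub
    ((((Tw_p2 hd₁ hd₂).mul (T_tu hd₁ hd₂)).add ((Tw_tu hd₁ hd₂).mul_const (1/2))).const_mul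
      (d₁+d₂))
  have hval : (0:ℝ) = d₁ * 0 + d₂ * 0 - (d₁+d₂) * (0 * 1 + 0 * (1/2)) := by ring
  rw [hval]
  exact H.congr (fun t => by unfold dp2; ring)

include hd₁ hd₂ in
lemma T_t2A (γ₁ γ₂ : ℝ) :
    Tendsto (fun t => t^2 * Ader d₁ d₂ γ₁ γ₂ t) atTop (nhds ((γ₂+γ₁)/2)) := by
  have H := (((T_p1 hd₁ hd₂).const_mul γ₂).add ((T_p2 hd₁ hd₂).const_mul γ₁)).sub
    (((Tw_dp1 hd₁ hd₂).const_mul γ₂).add ((Tw_dp2 hd₁ hd₂).const_mul γ₁))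
  have hval : ((γ₂+γ₁)/2 : ℝ) = γ₂ * (1/2) + γ₁ * (1/2) - (γ₂ * 0 + γ₁ * 0) := by ring
  rw [hval]
  refine Tendsto.congr' ?_ H
  filter_upwards [eventually_gt_atTop (0:ℝ)] with t ht
  have ht0 : (t:ℝ) ≠ 0 := ne_of_gt ht
  unfold Ader
  field_simp
  ring

include hd₁ hd₂ in
lemma T_t2B (g γ₁ γ₂ : ℝ) :
    Tendsto (fun t => t^2 * Bder d₁ d₂ g γ₁ γ₂ t) atTop (nhds (g - γ₂^2*d₂)) := by
  have tinv : Tendsto (fun t : ℝ => t⁻¹) atTop (nhds 0) := tendsto_inv_atTop_zero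
  have H := ((Tw2_dtu hd₁ hd₂).mul
      ((tinv.const_mul (γ₂^2*d₂ - g)).add
        (((T_rr hd₁ hd₂).mul (tinv.mul tinv)).const_mul (γ₂*(γ₁-γ₂))))).add
    ((T_tu hd₁ hd₂).mul
      ((tendsto_const_nhds (x := -(γ₂^2*d₂ - g)) (f := atTop)).add
        (((T_drr hd₁ hd₂).sub (((T_rr hd₁ hd₂).mul tinv).const_mul 2)).const_mul
          (γ₂*(γ₁-γ₂)))))
  have hval : (g - γ₂^2*d₂ : ℝ)
      = 0 * ((γ₂^2*d₂ - g) * 0 + γ₂*(γ₁-γ₂) * (1/2 * (0*0)))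
        + 1 * (-(γ₂^2*d₂ - g) + γ₂*(γ₁-γ₂) * (0 - 2 * (1/2 * 0))) := by ring
  rw [hval]
  refine Tendsto.congr' ?_ H
  filter_upwards [eventually_gt_atTop (0:ℝ)] with t ht
  have ht0 : (t:ℝ) ≠ 0 := ne_of_gt ht
  unfold Bder
  field_simp

include hd₁ hd₂ in
lemma T_t2C (g γ₁ γ₂ : ℝ) :
    Tendsto (fun t => t^2 * Cder d₁ d₂ g γ₁ γ₂ t) atTop (nhds (-(g * (γ₂*d₂)))) := by
  have tinv : Tendsto (fun t : ℝ => t⁻¹) atTop (nhds 0) := tendsto_inv_atTop_zero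
  have H := (((Tw2_dtu hd₁ hd₂).mul
      ((((T_rr hd₁ hd₂).mul (tinv.mul tinv)).const_mul (γ₁-γ₂)).add
        (tinv.const_mul (γ₂*d₂)))).const_mul g).add
    (((T_tu hd₁ hd₂).mul
      ((((T_drr hd₁ hd₂).sub (((T_rr hd₁ hd₂).mul tinv).const_mul 2)).const_mul (γ₁-γ₂)).sub
        (tendsto_const_nhds (x := γ₂*d₂) (f := atTop)))).const_mul g)
  have hval : (-(g * (γ₂*d₂)) : ℝ)
      = g * (0 * ((γ₁-γ₂) * (1/2 * (0*0)) + γ₂*d₂ * 0))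
        + g * (1 * ((γ₁-γ₂) * (0 - 2 * (1/2 * 0)) - γ₂*d₂)) := by ring
  rw [hval]
  refine Tendsto.congr' ?_ H
  filter_upwards [eventually_gt_atTop (0:ℝ)] with t ht
  have ht0 : (t:ℝ) ≠ 0 := ne_of_gt ht
  unfold Cder
  field_simp

lemma neg_comb {RA RB RC MA MB G x δ : ℝ} (hA : |RA| < MA) (hB : |RB| < MB)
    (hC : RC < -(G/2)) (hx0 : 0 < x) (hxδ : x ≤ δ) (hδ1 : δ ≤ 1) (hδpos : 0 < δ)
    (he4 : 4*(MA+MB+1)*δ ≤ G) : RA*x^2 + RB*x + RC < 0 := by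
  obtain ⟨hA1, hA2⟩ := abs_lt.mp hA
  obtain ⟨hB1, hB2⟩ := abs_lt.mp hB
  have hx2 : x^2 ≤ δ := by nlinarith
  have h1 : RA * x^2 ≤ MA * δ := by nlinarith [sq_nonneg x]
  have h2 : RB * x ≤ MB * δ := by nlinarith
  nlinarith

end Bounds
end DispAux

set_option maxHeartbeats 1000000 in
/-- at the middle root `Λ₂`, `∂Λφ(t,Λ₂(t)) < 0` eventually,
`t²·∂tφ(t,Λ₂(t)) → −gγ₂d₂`, and `Λ₂` is eventually strictly decreasing. -/
theorem middle_root_properties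
    (d₁ d₂ g γ₁ γ₂ : ℝ) (hd₁ : 0 < d₁) (hd₂ : 0 < d₂) (hg : 0 < g)
    (hγ₂ : 0 < γ₂) (hne : γ₁ ≠ γ₂) (Λ₁ Λ₂ Λ₃ : ℝ → ℝ)
    (hroots : ∀ᶠ t in atTop,
      Λ₃ t < Λ₂ t ∧ Λ₂ t < Λ₁ t ∧ 0 < Λ₂ t ∧ Λ₃ t < 0 ∧
      ∀ Λ : ℝ, phi d₁ d₂ g γ₁ γ₂ t Λ = (Λ - Λ₁ t) * (Λ - Λ₂ t) * (Λ - Λ₃ t))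
    (hlim1 : Tendsto Λ₁ atTop (nhds (γ₂ * d₂)))
    (hlim2 : Tendsto Λ₂ atTop (nhds 0))
    (hlim3 : Tendsto Λ₃ atTop (nhds 0)) :
    (∀ᶠ t in atTop,
      3 * Λ₂ t ^ 2 + 2 * funA d₁ d₂ γ₁ γ₂ t * Λ₂ t + funB d₁ d₂ g γ₁ γ₂ t < 0) ∧
    Tendsto (fun t : ℝ =>
        t ^ 2 * (deriv (funA d₁ d₂ γ₁ γ₂) t * Λ₂ t ^ 2
          + deriv (funB d₁ d₂ g γ₁ γ₂) t * Λ₂ t + deriv (funC d₁ d₂ g γ₁ γ₂) t))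
      atTop (nhds (-(g * (γ₂ * d₂)))) ∧
    ∃ t₀ > (0 : ℝ), StrictAntiOn Λ₂ (Set.Ici t₀) := by
  have hd : 0 < d₁ + d₂ := by linarith
  -- Part 1
  have part1 : ∀ᶠ t in atTop,
      3 * Λ₂ t ^ 2 + 2 * funA d₁ d₂ γ₁ γ₂ t * Λ₂ t + funB d₁ d₂ g γ₁ γ₂ t < 0 := by
    filter_upwards [hroots] with t ht
    obtain ⟨h32, h21, h2pos, h3neg, hfac⟩ := ht
    have h0 := hfac 0
    have h1 := hfac 1
    have hm1 := hfac (-1)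
    simp only [phi] at h0 h1 hm1
    have hA : funA d₁ d₂ γ₁ γ₂ t = -(Λ₁ t + Λ₂ t + Λ₃ t) := by
      linear_combination (h1 + hm1)/2 - h0
    have hB : funB d₁ d₂ g γ₁ γ₂ t = Λ₁ t*Λ₂ t + Λ₁ t*Λ₃ t + Λ₂ t*Λ₃ t := by
      linear_combination (h1 - hm1)/2
    have key : 3 * Λ₂ t ^ 2 + 2 * funA d₁ d₂ γ₁ γ₂ t * Λ₂ t + funB d₁ d₂ g γ₁ γ₂ t
        = (Λ₂ t - Λ₁ t) * (Λ₂ t - Λ₃ t) := by rw [hA, hB]; ring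
    rw [key]
    exact mul_neg_of_neg_of_pos (by linarith) (by linarith)
  -- eventual identification of the derivatives
  have hA' : ∀ᶠ t in atTop, deriv (funA d₁ d₂ γ₁ γ₂) t = DispAux.Ader d₁ d₂ γ₁ γ₂ t := by
    filter_upwards [eventually_gt_atTop (0:ℝ)] with t ht
    exact (DispAux.hasDerivAt_funA d₁ d₂ γ₁ γ₂ t ht).deriv
  have hB' : ∀ᶠ t in atTop, deriv (funB d₁ d₂ g γ₁ γ₂) t = DispAux.Bder d₁ d₂ g γ₁ γ₂ t := by
    filter_upwards [eventually_gt_atTop (0:ℝ)] with t ht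
    exact (DispAux.hasDerivAt_funB d₁ d₂ g γ₁ γ₂ hd₁ hd₂ t ht).deriv
  have hC' : ∀ᶠ t in atTop, deriv (funC d₁ d₂ g γ₁ γ₂) t = DispAux.Cder d₁ d₂ g γ₁ γ₂ t := by
    filter_upwards [eventually_gt_atTop (0:ℝ)] with t ht
    exact (DispAux.hasDerivAt_funC d₁ d₂ g γ₁ γ₂ hd₁ hd₂ t ht).deriv
  -- Part 2
  have part2 : Tendsto (fun t : ℝ =>
      t ^ 2 * (deriv (funA d₁ d₂ γ₁ γ₂) t * Λ₂ t ^ 2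
        + deriv (funB d₁ d₂ g γ₁ γ₂) t * Λ₂ t + deriv (funC d₁ d₂ g γ₁ γ₂) t))
      atTop (nhds (-(g * (γ₂ * d₂)))) := by
    have H := (((DispAux.T_t2A hd₁ hd₂ γ₁ γ₂).mul (hlim2.pow 2)).add
      ((DispAux.T_t2B hd₁ hd₂ g γ₁ γ₂).mul hlim2)).add (DispAux.T_t2C hd₁ hd₂ g γ₁ γ₂)
    have hval : (-(g * (γ₂ * d₂)) : ℝ)
        = ((γ₂+γ₁)/2 * 0^2 + (g - γ₂^2*d₂) * 0) + -(g * (γ₂*d₂)) := by ring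
    rw [hval]
    refine Tendsto.congr' ?_ H
    filter_upwards [hA', hB', hC'] with t e1 e2 e3
    rw [e1, e2, e3]; ring
  refine ⟨part1, part2, ?_⟩
  -- Part 3
  set G : ℝ := g * (γ₂ * d₂) with hG
  have hGpos : 0 < G := by positivity
  set MA : ℝ := |(γ₂+γ₁)/2| + 1 with hMA
  set MB : ℝ := |g - γ₂^2*d₂| + 1 with hMB
  have hMApos : 0 < MA := by positivity
  have hMBpos : 0 < MB := by positivity
  set δ : ℝ := min (G/(4*(MA+MB+1))) (min 1 (γ₂*d₂/2)) with hδ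
  have hδpos : 0 < δ := by
    apply lt_min (by positivity) (lt_min one_pos (by positivity))
  have hδ1 : δ ≤ 1 := le_trans (min_le_right _ _) (min_le_left _ _)
  have hδG : δ ≤ G/(4*(MA+MB+1)) := min_le_left _ _
  have hδd : δ < γ₂*d₂ := by
    have : δ ≤ γ₂*d₂/2 := le_trans (min_le_right _ _) (min_le_right _ _)
    nlinarith
  have evA : ∀ᶠ t in atTop, |t^2 * DispAux.Ader d₁ d₂ γ₁ γ₂ t| < MA :=
    (DispAux.T_t2A hd₁ hd₂ γ₁ γ₂).abs.eventually_lt_const (lt_add_one _)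
  have evB : ∀ᶠ t in atTop, |t^2 * DispAux.Bder d₁ d₂ g γ₁ γ₂ t| < MB :=
    (DispAux.T_t2B hd₁ hd₂ g γ₁ γ₂).abs.eventually_lt_const (lt_add_one _)
  have evC : ∀ᶠ t in atTop, t^2 * DispAux.Cder d₁ d₂ g γ₁ γ₂ t < -(G/2) :=
    (DispAux.T_t2C hd₁ hd₂ g γ₁ γ₂).eventually_lt_const (by rw [hG]; nlinarith)
  have evΛ₂ : ∀ᶠ t in atTop, |Λ₂ t| < δ := by
    have := hlim2.abs.eventually_lt_const (show |(0:ℝ)| < δ by simpa using hδpos)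
    simpa using this
  have evΛ₁ : ∀ᶠ t in atTop, δ < Λ₁ t := hlim1.eventually_const_lt hδd
  obtain ⟨T, hT⟩ := eventually_atTop.mp
    (hroots.and (evA.and (evB.and (evC.and (evΛ₂.and evΛ₁)))))
  set t₀ : ℝ := max T 1 with ht₀
  have ht₀pos : (0:ℝ) < t₀ := lt_of_lt_of_le one_pos (le_max_right _ _)
  refine ⟨t₀, ht₀pos, ?_⟩
  -- a uniform derivative bound for the "frozen" cubic coefficient functions
  have hpsi : ∀ x : ℝ, 0 < x → x ≤ δ → StrictAntiOn
      (fun r => phi d₁ d₂ g γ₁ γ₂ r x) (Set.Ici t₀) := by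
    intro x hx0 hxδ
    have hder : ∀ r ∈ Set.Ici t₀, HasDerivAt (fun r => phi d₁ d₂ g γ₁ γ₂ r x)
        (DispAux.Ader d₁ d₂ γ₁ γ₂ r * x^2 + DispAux.Bder d₁ d₂ g γ₁ γ₂ r * x
          + DispAux.Cder d₁ d₂ g γ₁ γ₂ r) r := by
      intro r hr
      have hr0 : 0 < r := lt_of_lt_of_le ht₀pos hr
      have heq : (fun r => phi d₁ d₂ g γ₁ γ₂ r x)
          = fun r => x^3 + funA d₁ d₂ γ₁ γ₂ r * x^2 + funB d₁ d₂ g γ₁ γ₂ r * x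
            + funC d₁ d₂ g γ₁ γ₂ r := by
        funext r; simp only [phi]
      rw [heq]
      have h := (((hasDerivAt_const r (x^3)).add
        ((DispAux.hasDerivAt_funA d₁ d₂ γ₁ γ₂ r hr0).mul_const (x^2))).add
        ((DispAux.hasDerivAt_funB d₁ d₂ g γ₁ γ₂ hd₁ hd₂ r hr0).mul_const x)).add
        (DispAux.hasDerivAt_funC d₁ d₂ g γ₁ γ₂ hd₁ hd₂ r hr0)
      refine h.congr_deriv (Eq.symm ?_)
      ring
    apply strictAntiOn_of_deriv_neg (convex_Ici t₀)
    · exact fun r hr => (hder r hr).continuousAt.continuousWithinAt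
    · intro r hr
      rw [interior_Ici] at hr
      have hrI : r ∈ Set.Ici t₀ := Set.mem_Ici.mpr (le_of_lt (Set.mem_Ioi.mp hr))
      have hr0 : 0 < r := lt_of_lt_of_le ht₀pos hrI
      have hrT : T ≤ r := le_trans (le_max_left _ _) hrI
      obtain ⟨_, hA1, hB1, hC1, _, _⟩ := hT r hrT
      rw [(hder r hrI).deriv]
      have e4 : 4*(MA+MB+1)*δ ≤ G := by
        have := (le_div_iff₀ (by positivity : (0:ℝ) < 4*(MA+MB+1))).mp hδG
        linarith
      have key : (r^2 * DispAux.Ader d₁ d₂ γ₁ γ₂ r) * x^2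
            + (r^2 * DispAux.Bder d₁ d₂ g γ₁ γ₂ r) * x
            + r^2 * DispAux.Cder d₁ d₂ g γ₁ γ₂ r < 0 :=
        DispAux.neg_comb hA1 hB1 hC1 hx0 hxδ hδ1 hδpos e4
      have key2 : r^2 * (DispAux.Ader d₁ d₂ γ₁ γ₂ r * x^2 + DispAux.Bder d₁ d₂ g γ₁ γ₂ r * x
          + DispAux.Cder d₁ d₂ g γ₁ γ₂ r) < 0 := by
        calc r^2 * (DispAux.Ader d₁ d₂ γ₁ γ₂ r * x^2 + DispAux.Bder d₁ d₂ g γ₁ γ₂ r * x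
            + DispAux.Cder d₁ d₂ g γ₁ γ₂ r)
            = (r^2 * DispAux.Ader d₁ d₂ γ₁ γ₂ r) * x^2
              + (r^2 * DispAux.Bder d₁ d₂ g γ₁ γ₂ r) * x
              + r^2 * DispAux.Cder d₁ d₂ g γ₁ γ₂ r := by ring
          _ < 0 := key
      by_contra hnn
      push_neg at hnn
      exact absurd key2 (not_lt.mpr (mul_nonneg (sq_nonneg r) hnn))
  -- conclude strict antitonicity of Λ₂
  intro s hs t ht hst
  have hsT : T ≤ s := le_trans (le_max_left _ _) hs
  have htT : T ≤ t := le_trans (le_max_left _ _) ht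
  obtain ⟨hs32, hs21, hs2pos, hs3neg, hsfac⟩ := (hT s hsT).1
  have hsdata : |Λ₂ s| < δ := (hT s hsT).2.2.2.2.1
  obtain ⟨ht32, ht21, ht2pos, ht3neg, htfac⟩ := (hT t htT).1
  have htΛ₂ : |Λ₂ t| < δ := (hT t htT).2.2.2.2.1
  have htΛ₁ : δ < Λ₁ t := (hT t htT).2.2.2.2.2
  have hxδ : Λ₂ s ≤ δ := le_of_lt (lt_of_le_of_lt (le_abs_self _) hsdata)
  have hanti := hpsi (Λ₂ s) hs2pos hxδ
  have hψs : phi d₁ d₂ g γ₁ γ₂ s (Λ₂ s) = 0 := by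
    rw [hsfac (Λ₂ s)]; simp
  have hψt : phi d₁ d₂ g γ₁ γ₂ t (Λ₂ s) < 0 := by
    have := hanti hs ht hst
    simpa [hψs] using this
  rw [htfac (Λ₂ s)] at hψt
  by_contra hcon
  push_neg at hcon
  have f1 : Λ₂ s - Λ₁ t < 0 := by linarith
  have f2 : Λ₂ s - Λ₂ t ≤ 0 := by linarith
  have f3 : 0 < Λ₂ s - Λ₃ t := by linarith
  have hp : 0 ≤ (Λ₂ s - Λ₁ t) * (Λ₂ s - Λ₂ t) := by nlinarith
  nlinarith [mul_nonneg hp (le_of_lt f3)]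
end

section
/- Assume γ₂ > 0, γ₁ ≠ γ₂, and let Λ₃(t) denote the smallest real root of φ(t,·) for large t. Then ∂Λφ(t,Λ₃(t)) > 0 for all sufficiently large t, t²·∂tφ(t,Λ₃(t)) → −g·γ₂d₂ as t → ∞, there exists t₀ > 0 such that Λ₃ is strictly increasing on [t₀,∞), and if γ₁d₁ + γ₂d₂ < 0 then (Λ₃(t) − γ₂d₂)·(Λ₃(t) − γ₁d₁ − γ₂d₂) ≤ 0 for all sufficiently large t. -/
open Real Filter Asymptotics

private lemma half_exp_le_cosh' (x : ℝ) : Real.exp x / 2 ≤ Real.cosh x := by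
  rw [Real.cosh_eq]; nlinarith [Real.exp_pos (-x)]

private lemma cosh_le_exp_abs' (x : ℝ) : Real.cosh x ≤ Real.exp |x| := by
  rw [Real.cosh_eq]
  nlinarith [Real.exp_le_exp.2 (neg_le_abs x), Real.exp_le_exp.2 (le_abs_self x)]

private lemma abs_sinh_le_cosh' (x : ℝ) : |Real.sinh x| ≤ Real.cosh x := by
  rw [abs_le]
  constructor
  · nlinarith [Real.sinh_lt_cosh (-x), Real.sinh_neg x, Real.cosh_neg x]
  · exact (Real.sinh_lt_cosh x).le

private lemma decay_exp (n : ℕ) (c : ℝ) (hc : 0 < c) :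
    Tendsto (fun t : ℝ => t ^ n * Real.exp (-(c * t))) atTop (nhds 0) := by
  have h1 : Tendsto (fun t : ℝ => c * t) atTop atTop :=
    Tendsto.const_mul_atTop hc tendsto_id
  have h2 := (Real.tendsto_pow_mul_exp_neg_atTop_nhds_zero n).comp h1
  have h3 := h2.const_mul ((c ^ n)⁻¹)
  rw [mul_zero] at h3
  refine h3.congr fun t => ?_
  have hcn : (c : ℝ) ^ n ≠ 0 := by positivity
  field_simp [Function.comp]
  simp only [Function.comp_apply]
  ring

private lemma decay_div_cosh (n : ℕ) (a b : ℝ) (hab : |a| < b) (f : ℝ → ℝ)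
    (hf : ∀ x, |f x| ≤ Real.cosh x) :
    Tendsto (fun t : ℝ => t ^ n * f (t * a) / Real.cosh (t * b)) atTop (nhds 0) := by
  have hb : 0 < b := lt_of_le_of_lt (abs_nonneg a) hab
  have key : Tendsto (fun t : ℝ => 2 * (t ^ n * Real.exp (-((b - |a|) * t)))) atTop (nhds 0) := by
    simpa using (decay_exp n (b - |a|) (by linarith)).const_mul 2
  apply squeeze_zero_norm' _ key
  filter_upwards [eventually_ge_atTop (0:ℝ)] with t ht
  have h4 : (0:ℝ) < Real.cosh (t * b) := Real.cosh_pos (t*b)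
  have h2 : |f (t * a)| ≤ Real.exp (|a| * t) := by
    refine (hf _).trans ((cosh_le_exp_abs' _).trans ?_)
    rw [abs_mul, abs_of_nonneg ht, mul_comm]
  have h3 : Real.exp (t * b) / 2 ≤ Real.cosh (t * b) := half_exp_le_cosh' _
  have hstep : |t ^ n * f (t * a) / Real.cosh (t * b)|
      ≤ t ^ n * Real.exp (|a| * t) / (Real.exp (t * b) / 2) := by
    rw [abs_div, abs_mul, abs_pow, abs_of_nonneg ht, abs_of_pos h4]
    exact div_le_div₀ (by positivity) (by nlinarith [pow_nonneg ht n, abs_nonneg (f (t*a))])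
      (by positivity) h3
  refine hstep.trans (le_of_eq ?_)
  rw [show -((b - |a|) * t) = |a| * t - t * b by ring, Real.exp_sub]
  field_simp

private lemma tendsto_tanh_mul {b : ℝ} (hb : 0 < b) :
    Tendsto (fun t : ℝ => Real.tanh (t * b)) atTop (nhds 1) := by
  have h1 : Tendsto (fun t : ℝ => (1:ℝ) / Real.cosh (t * b)) atTop (nhds 0) := by
    have := decay_div_cosh 0 0 b (by simpa using hb) (fun _ => 1)
      (fun x => by rw [abs_one]; exact Real.one_le_cosh x)
    simpa using this
  have h0 : Tendsto (fun t : ℝ => Real.exp (-(t * b)) / Real.cosh (t * b)) atTop (nhds 0) := by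
    apply squeeze_zero' (g := fun t => (1:ℝ) / Real.cosh (t * b))
    · filter_upwards with t; positivity
    · filter_upwards [eventually_ge_atTop (0:ℝ)] with t ht
      gcongr
      rw [← Real.exp_zero]
      exact Real.exp_le_exp.2 (by nlinarith)
    · exact h1
  have heq : ∀ t : ℝ, Real.tanh (t * b) = 1 - Real.exp (-(t * b)) / Real.cosh (t * b) := by
    intro t
    rw [Real.tanh_eq_sinh_div_cosh, eq_sub_iff_add_eq, ← add_div, div_eq_one_iff_eq
      (Real.cosh_pos (t*b)).ne']
    linarith [Real.cosh_sub_sinh (t * b)]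
  have h2 := (tendsto_const_nhds (x := (1:ℝ)) (f := atTop (α := ℝ))).sub h0
  rw [sub_zero] at h2
  exact h2.congr fun t => (heq t).symm

/-- `Du b t` is the derivative of `t ↦ tanh(t b)/t`. -/
noncomputable def Du (b t : ℝ) : ℝ :=
  (b * t / Real.cosh (t * b) ^ 2 - Real.tanh (t * b)) / t ^ 2

/-- `Hq e b t = cosh(t e)/cosh(t b)`. -/
noncomputable def Hq (e b t : ℝ) : ℝ := Real.cosh (t * e) / Real.cosh (t * b)

/-- derivative of `Hq`. -/
noncomputable def DH (e b t : ℝ) : ℝ :=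
  (e * Real.sinh (t * e) * Real.cosh (t * b) - b * Real.cosh (t * e) * Real.sinh (t * b)) /
    Real.cosh (t * b) ^ 2

/-- derivative of `t ↦ (1 - Hq e b t)/t²`. -/
noncomputable def Dv (e b t : ℝ) : ℝ := (-(DH e b t) * t - 2 * (1 - Hq e b t)) / t ^ 3

/-- derivative of `t ↦ sinh(t e)/(t cosh(t b))`. -/
noncomputable def Dw (e b t : ℝ) : ℝ :=
  (e * Real.cosh (t * e) * (t * Real.cosh (t * b))
    - Real.sinh (t * e) * (Real.cosh (t * b) + t * (b * Real.sinh (t * b)))) /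
    (t * Real.cosh (t * b)) ^ 2

private lemma hasDerivAt_mulconst (c t : ℝ) : HasDerivAt (fun x : ℝ => x * c) c t := by
  simpa using (hasDerivAt_id t).mul_const c

private lemma hasDerivAt_u {b t : ℝ} (ht : t ≠ 0) :
    HasDerivAt (fun t : ℝ => Real.tanh (t * b) / t) (Du b t) t := by
  have hC : Real.cosh (t * b) ≠ 0 := (Real.cosh_pos (t*b)).ne'
  have hS : HasDerivAt (fun t : ℝ => Real.sinh (t * b)) (Real.cosh (t * b) * b) t :=
    by have h := (Real.hasDerivAt_sinh (t*b)).comp t (hasDerivAt_mulconst b t); exact h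
  have hCb : HasDerivAt (fun t : ℝ => Real.cosh (t * b)) (Real.sinh (t * b) * b) t :=
    by have h := (Real.hasDerivAt_cosh (t*b)).comp t (hasDerivAt_mulconst b t); exact h
  have hD : HasDerivAt (fun t : ℝ => Real.cosh (t * b) * t)
      (Real.sinh (t * b) * b * t + Real.cosh (t * b) * 1) t := hCb.mul (hasDerivAt_id t)
  have h := hS.div hD (by positivity)
  have hfun : (fun t : ℝ => Real.tanh (t * b) / t)
      = fun t : ℝ => Real.sinh (t * b) / (Real.cosh (t * b) * t) := by
    funext x; rw [Real.tanh_eq_sinh_div_cosh, div_div]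
  rw [hfun]
  refine h.congr_deriv (Eq.symm ?_)
  have key := Real.cosh_sq_sub_sinh_sq (t * b)
  unfold Du
  rw [Real.tanh_eq_sinh_div_cosh]
  field_simp
  rw [mul_comm b t]
  linear_combination (-(b * t)) * key

private lemma hasDerivAt_Hq (e b t : ℝ) : HasDerivAt (Hq e b) (DH e b t) t := by
  have hC : Real.cosh (t * b) ≠ 0 := (Real.cosh_pos (t*b)).ne'
  have hCe : HasDerivAt (fun t : ℝ => Real.cosh (t * e)) (Real.sinh (t * e) * e) t :=
    by have h := (Real.hasDerivAt_cosh (t*e)).comp t (hasDerivAt_mulconst e t); exact h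
  have hCb : HasDerivAt (fun t : ℝ => Real.cosh (t * b)) (Real.sinh (t * b) * b) t :=
    by have h := (Real.hasDerivAt_cosh (t*b)).comp t (hasDerivAt_mulconst b t); exact h
  have h := hCe.div hCb hC
  refine h.congr_deriv (Eq.symm ?_)
  unfold DH
  ring

private lemma hasDerivAt_v {e b t : ℝ} (ht : t ≠ 0) :
    HasDerivAt (fun t : ℝ => (1 - Hq e b t) / t ^ 2) (Dv e b t) t := by
  have h1 : HasDerivAt (fun t : ℝ => 1 - Hq e b t) (-(DH e b t)) t :=
    (hasDerivAt_Hq e b t).const_sub 1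
  have h2 : HasDerivAt (fun t : ℝ => t ^ 2) (2 * t) t := by
    simpa using hasDerivAt_pow 2 t
  have h := h1.div h2 (pow_ne_zero 2 ht)
  refine h.congr_deriv (Eq.symm ?_)
  unfold Dv
  field_simp

private lemma hasDerivAt_w {e b t : ℝ} (ht : t ≠ 0) :
    HasDerivAt (fun t : ℝ => Real.sinh (t * e) / (t * Real.cosh (t * b))) (Dw e b t) t := by
  have hC : Real.cosh (t * b) ≠ 0 := (Real.cosh_pos (t*b)).ne'
  have hSe : HasDerivAt (fun t : ℝ => Real.sinh (t * e)) (Real.cosh (t * e) * e) t :=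
    by have h := (Real.hasDerivAt_sinh (t*e)).comp t (hasDerivAt_mulconst e t); exact h
  have hCb : HasDerivAt (fun t : ℝ => Real.cosh (t * b)) (Real.sinh (t * b) * b) t :=
    by have h := (Real.hasDerivAt_cosh (t*b)).comp t (hasDerivAt_mulconst b t); exact h
  have hD : HasDerivAt (fun t : ℝ => t * Real.cosh (t * b))
      (1 * Real.cosh (t * b) + t * (Real.sinh (t * b) * b)) t := (hasDerivAt_id t).mul hCb
  have h := hSe.div hD (by positivity)
  refine h.congr_deriv (Eq.symm ?_)
  unfold Dw
  ring

private lemma tendsto_Hq {e b : ℝ} (hab : |e| < b) :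
    Tendsto (Hq e b) atTop (nhds 0) := by
  have := decay_div_cosh 0 e b hab Real.cosh (fun x => by
    rw [abs_of_pos (Real.cosh_pos x)])
  exact (by simpa using this : Tendsto (fun t : ℝ => Real.cosh (t * e) / Real.cosh (t * b)) atTop (nhds 0))

private lemma tendsto_t_div_cosh {b : ℝ} (hb : 0 < b) (n : ℕ) :
    Tendsto (fun t : ℝ => t ^ n / Real.cosh (t * b)) atTop (nhds 0) := by
  have := decay_div_cosh n 0 b (by simpa using hb) (fun _ => 1)
    (fun x => by rw [abs_one]; exact Real.one_le_cosh x)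
  simpa using this

private lemma tendsto_Lu {b : ℝ} (hb : 0 < b) :
    Tendsto (fun t : ℝ => t ^ 2 * Du b t) atTop (nhds (-1)) := by
  have h1 : Tendsto (fun t : ℝ => b * t / Real.cosh (t * b) ^ 2) atTop (nhds 0) := by
    have key : Tendsto (fun t : ℝ => |b| * (t ^ 1 / Real.cosh (t * b))) atTop (nhds 0) := by
      simpa using (tendsto_t_div_cosh hb 1).const_mul |b|
    apply squeeze_zero_norm' _ key
    filter_upwards [eventually_ge_atTop (0:ℝ)] with t ht
    have hC := Real.cosh_pos (t * b)
    have hC1 := Real.one_le_cosh (t * b)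
    rw [Real.norm_eq_abs, abs_div, abs_mul, abs_of_nonneg ht, abs_of_pos (by positivity : (0:ℝ) < Real.cosh (t*b)^2)]
    rw [mul_div_assoc, pow_one]
    gcongr
    nlinarith
  have h2 := h1.sub (tendsto_tanh_mul hb)
  rw [zero_sub] at h2
  apply h2.congr'
  filter_upwards [eventually_gt_atTop (0:ℝ)] with t ht
  unfold Du
  field_simp

private lemma tendsto_DH {e b : ℝ} (hab : |e| < b) :
    Tendsto (DH e b) atTop (nhds 0) := by
  have hs : Tendsto (fun t : ℝ => Real.sinh (t * e) / Real.cosh (t * b)) atTop (nhds 0) := by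
    have := decay_div_cosh 0 e b hab Real.sinh abs_sinh_le_cosh'
    simpa using this
  have hy : Tendsto (fun t : ℝ => Real.cosh (t * e) * Real.sinh (t * b) / Real.cosh (t * b) ^ 2)
      atTop (nhds 0) := by
    have key : Tendsto (fun t : ℝ => Real.cosh (t * e) / Real.cosh (t * b)) atTop (nhds 0) :=
      tendsto_Hq hab
    apply squeeze_zero_norm' _ key
    filter_upwards with t
    have hC := Real.cosh_pos (t * b)
    have hCe := Real.cosh_pos (t * e)
    rw [Real.norm_eq_abs, abs_div, abs_mul, abs_of_pos hCe, abs_of_pos (by positivity : (0:ℝ) < Real.cosh (t*b)^2)]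
    rw [pow_two]
    rw [div_le_div_iff₀ (by positivity) (by positivity)]
    have := abs_sinh_le_cosh' (t * b)
    nlinarith [mul_le_mul_of_nonneg_left this (mul_pos hCe hC).le]
  have h := (hs.const_mul e).sub (hy.const_mul b)
  rw [mul_zero, mul_zero, sub_zero] at h
  apply h.congr
  intro t
  have hC : Real.cosh (t * b) ≠ 0 := (Real.cosh_pos (t*b)).ne'
  unfold DH
  field_simp

private lemma tendsto_Lv {e b : ℝ} (hab : |e| < b) :
    Tendsto (fun t : ℝ => t ^ 2 * Dv e b t) atTop (nhds 0) := by
  have hb : 0 < b := lt_of_le_of_lt (abs_nonneg e) hab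
  have h1 : Tendsto (fun t : ℝ => 2 * ((1 - Hq e b t) * t⁻¹)) atTop (nhds 0) := by
    have := ((tendsto_const_nhds (x := (1:ℝ)) (f := atTop (α := ℝ))).sub
      (tendsto_Hq hab)).mul tendsto_inv_atTop_zero
    simpa using this.const_mul 2
  have h := ((tendsto_DH hab).neg.sub h1)
  rw [neg_zero, sub_zero] at h
  apply h.congr'
  filter_upwards [eventually_gt_atTop (0:ℝ)] with t ht
  unfold Dv
  field_simp

private lemma tendsto_Lw {e b : ℝ} (hab : |e| < b) :
    Tendsto (fun t : ℝ => t ^ 2 * Dw e b t) atTop (nhds 0) := by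
  have hb : 0 < b := lt_of_le_of_lt (abs_nonneg e) hab
  have h1 : Tendsto (fun t : ℝ => t ^ 1 * Real.cosh (t * e) / Real.cosh (t * b)) atTop (nhds 0) :=
    decay_div_cosh 1 e b hab Real.cosh (fun x => by rw [abs_of_pos (Real.cosh_pos x)])
  have h2 : Tendsto (fun t : ℝ => Real.sinh (t * e) / Real.cosh (t * b)) atTop (nhds 0) := by
    simpa using decay_div_cosh 0 e b hab Real.sinh abs_sinh_le_cosh'
  have h3 : Tendsto (fun t : ℝ => t ^ 1 * Real.sinh (t * e) / Real.cosh (t * b)) atTop (nhds 0) :=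
    decay_div_cosh 1 e b hab Real.sinh abs_sinh_le_cosh'
  have h4 := h3.mul (tendsto_tanh_mul hb)
  rw [zero_mul] at h4
  have h := ((h1.const_mul e).sub h2).sub (h4.const_mul b)
  rw [mul_zero, mul_zero, sub_zero, sub_zero] at h
  apply h.congr'
  filter_upwards [eventually_gt_atTop (0:ℝ)] with t ht
  have hC : Real.cosh (t * b) ≠ 0 := (Real.cosh_pos (t*b)).ne'
  unfold Dw
  rw [Real.tanh_eq_sinh_div_cosh]
  field_simp
  ring

section scratch
variable {d₁ d₂ g γ₁ γ₂ : ℝ}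

private lemma funA_eq (hd₁ : 0 < d₁) (hd₂ : 0 < d₂) {t : ℝ} (ht : t ∈ Set.Ioi (0:ℝ)) :
    funA d₁ d₂ γ₁ γ₂ t = -(γ₂ * d₂) - ((γ₁ + γ₂) / 2 * (Real.tanh (t * (d₁ + d₂)) / t)
      + (γ₂ - γ₁) / 2 * (Real.sinh (t * (d₂ - d₁)) / (t * Real.cosh (t * (d₁ + d₂))))) := by
  have ht' : (0:ℝ) < t := ht
  have h1 : t * (d₁ + d₂) = t * d₁ + t * d₂ := by ring
  have h2 : t * (d₂ - d₁) = t * d₂ - t * d₁ := by ring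
  have hC : Real.cosh (t * d₁ + t * d₂) ≠ 0 := (Real.cosh_pos _).ne'
  unfold funA
  rw [h1, h2, Real.tanh_eq_sinh_div_cosh, Real.sinh_sub, Real.sinh_add, Real.cosh_add] at *
  field_simp
  ring

private lemma funB_eq (hd₁ : 0 < d₁) (hd₂ : 0 < d₂) {t : ℝ} (ht : t ∈ Set.Ioi (0:ℝ)) :
    funB d₁ d₂ g γ₁ γ₂ t = (γ₂ ^ 2 * d₂ - g) * (Real.tanh (t * (d₁ + d₂)) / t)
      + (γ₂ * (γ₁ - γ₂) / 2) *
        ((1 - Real.cosh (t * (d₂ - d₁)) / Real.cosh (t * (d₁ + d₂))) / t ^ 2) := by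
  have ht' : (0:ℝ) < t := ht
  have h1 : t * (d₁ + d₂) = t * d₁ + t * d₂ := by ring
  have h2 : t * (d₂ - d₁) = t * d₂ - t * d₁ := by ring
  have hC : Real.cosh (t * d₁ + t * d₂) ≠ 0 := (Real.cosh_pos _).ne'
  have hS : Real.sinh (t * d₁ + t * d₂) ≠ 0 := by
    refine (Real.sinh_pos_iff.2 ?_).ne'
    positivity
  unfold funB
  rw [h1, h2, Real.tanh_eq_sinh_div_cosh, Real.cosh_sub, Real.sinh_add, Real.cosh_add] at *
  field_simp
  ring

private lemma funC_eq (hd₁ : 0 < d₁) (hd₂ : 0 < d₂) {t : ℝ} (ht : t ∈ Set.Ioi (0:ℝ)) :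
    funC d₁ d₂ g γ₁ γ₂ t = (g * (γ₂ * d₂)) * (Real.tanh (t * (d₁ + d₂)) / t)
      + (g * (γ₁ - γ₂) / 2) *
        ((1 - Real.cosh (t * (d₂ - d₁)) / Real.cosh (t * (d₁ + d₂))) / t ^ 2) := by
  have ht' : (0:ℝ) < t := ht
  have h1 : t * (d₁ + d₂) = t * d₁ + t * d₂ := by ring
  have h2 : t * (d₂ - d₁) = t * d₂ - t * d₁ := by ring
  have hC : Real.cosh (t * d₁ + t * d₂) ≠ 0 := (Real.cosh_pos _).ne'
  have hS : Real.sinh (t * d₁ + t * d₂) ≠ 0 := by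
    refine (Real.sinh_pos_iff.2 ?_).ne'
    positivity
  unfold funC
  rw [h1, h2, Real.tanh_eq_sinh_div_cosh, Real.cosh_sub, Real.sinh_add, Real.cosh_add] at *
  field_simp
  ring

end scratch

noncomputable def DA (d₁ d₂ γ₁ γ₂ t : ℝ) : ℝ :=
  -((γ₁ + γ₂) / 2 * Du (d₁ + d₂) t + (γ₂ - γ₁) / 2 * Dw (d₂ - d₁) (d₁ + d₂) t)

noncomputable def DB (d₁ d₂ g γ₁ γ₂ t : ℝ) : ℝ :=
  (γ₂ ^ 2 * d₂ - g) * Du (d₁ + d₂) t + γ₂ * (γ₁ - γ₂) / 2 * Dv (d₂ - d₁) (d₁ + d₂) t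

noncomputable def DC (d₁ d₂ g γ₁ γ₂ t : ℝ) : ℝ :=
  g * (γ₂ * d₂) * Du (d₁ + d₂) t + g * (γ₁ - γ₂) / 2 * Dv (d₂ - d₁) (d₁ + d₂) t

section derivs
variable {d₁ d₂ g γ₁ γ₂ : ℝ}

private lemma hasDerivAt_funA (hd₁ : 0 < d₁) (hd₂ : 0 < d₂) {t : ℝ} (ht : 0 < t) :
    HasDerivAt (funA d₁ d₂ γ₁ γ₂) (DA d₁ d₂ γ₁ γ₂ t) t := by
  have hu := hasDerivAt_u (b := d₁ + d₂) ht.ne'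
  have hw := hasDerivAt_w (e := d₂ - d₁) (b := d₁ + d₂) ht.ne'
  have h := ((hu.const_mul ((γ₁ + γ₂) / 2)).add (hw.const_mul ((γ₂ - γ₁) / 2))).const_sub
    (-(γ₂ * d₂))
  refine HasDerivAt.congr_of_eventuallyEq ?_
    (Filter.eventuallyEq_of_mem (isOpen_Ioi.mem_nhds ht) (fun s hs => funA_eq hd₁ hd₂ hs))
  convert h using 1
  all_goals rfl

private lemma hasDerivAt_funB (hd₁ : 0 < d₁) (hd₂ : 0 < d₂) {t : ℝ} (ht : 0 < t) :
    HasDerivAt (funB d₁ d₂ g γ₁ γ₂) (DB d₁ d₂ g γ₁ γ₂ t) t := by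
  have hu := hasDerivAt_u (b := d₁ + d₂) ht.ne'
  have hv := hasDerivAt_v (e := d₂ - d₁) (b := d₁ + d₂) ht.ne'
  have h := (hu.const_mul (γ₂ ^ 2 * d₂ - g)).add (hv.const_mul (γ₂ * (γ₁ - γ₂) / 2))
  refine HasDerivAt.congr_of_eventuallyEq ?_
    (Filter.eventuallyEq_of_mem (isOpen_Ioi.mem_nhds ht) (fun s hs => funB_eq hd₁ hd₂ hs))
  exact h

private lemma hasDerivAt_funC (hd₁ : 0 < d₁) (hd₂ : 0 < d₂) {t : ℝ} (ht : 0 < t) :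
    HasDerivAt (funC d₁ d₂ g γ₁ γ₂) (DC d₁ d₂ g γ₁ γ₂ t) t := by
  have hu := hasDerivAt_u (b := d₁ + d₂) ht.ne'
  have hv := hasDerivAt_v (e := d₂ - d₁) (b := d₁ + d₂) ht.ne'
  have h := (hu.const_mul (g * (γ₂ * d₂))).add (hv.const_mul (g * (γ₁ - γ₂) / 2))
  refine HasDerivAt.congr_of_eventuallyEq ?_
    (Filter.eventuallyEq_of_mem (isOpen_Ioi.mem_nhds ht) (fun s hs => funC_eq hd₁ hd₂ hs))
  exact h

private lemma tendsto_t2DA (hd₁ : 0 < d₁) (hd₂ : 0 < d₂) :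
    Tendsto (fun t : ℝ => t ^ 2 * DA d₁ d₂ γ₁ γ₂ t) atTop (nhds ((γ₁ + γ₂) / 2)) := by
  have hb : 0 < d₁ + d₂ := by linarith
  have he : |d₂ - d₁| < d₁ + d₂ := abs_lt.2 ⟨by linarith, by linarith⟩
  have h := (((tendsto_Lu hb).const_mul ((γ₁ + γ₂) / 2)).add
    ((tendsto_Lw he).const_mul ((γ₂ - γ₁) / 2))).neg
  rw [show -((γ₁ + γ₂) / 2 * (-1) + (γ₂ - γ₁) / 2 * 0) = (γ₁ + γ₂) / 2 by ring] at h
  exact h.congr fun t => by unfold DA; ring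

private lemma tendsto_t2DB (hd₁ : 0 < d₁) (hd₂ : 0 < d₂) :
    Tendsto (fun t : ℝ => t ^ 2 * DB d₁ d₂ g γ₁ γ₂ t) atTop (nhds (-(γ₂ ^ 2 * d₂ - g))) := by
  have hb : 0 < d₁ + d₂ := by linarith
  have he : |d₂ - d₁| < d₁ + d₂ := abs_lt.2 ⟨by linarith, by linarith⟩
  have h := ((tendsto_Lu hb).const_mul (γ₂ ^ 2 * d₂ - g)).add
    ((tendsto_Lv he).const_mul (γ₂ * (γ₁ - γ₂) / 2))
  rw [show (γ₂ ^ 2 * d₂ - g) * (-1) + γ₂ * (γ₁ - γ₂) / 2 * 0 = -(γ₂ ^ 2 * d₂ - g) by ring] at h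
  exact h.congr fun t => by unfold DB; ring

private lemma tendsto_t2DC (hd₁ : 0 < d₁) (hd₂ : 0 < d₂) :
    Tendsto (fun t : ℝ => t ^ 2 * DC d₁ d₂ g γ₁ γ₂ t) atTop (nhds (-(g * (γ₂ * d₂)))) := by
  have hb : 0 < d₁ + d₂ := by linarith
  have he : |d₂ - d₁| < d₁ + d₂ := abs_lt.2 ⟨by linarith, by linarith⟩
  have h := ((tendsto_Lu hb).const_mul (g * (γ₂ * d₂))).add
    ((tendsto_Lv he).const_mul (g * (γ₁ - γ₂) / 2))
  rw [show g * (γ₂ * d₂) * (-1) + g * (γ₁ - γ₂) / 2 * 0 = -(g * (γ₂ * d₂)) by ring] at h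
  exact h.congr fun t => by unfold DC; ring

end derivs


set_option maxHeartbeats 1000000 in
private lemma part3_aux (d₁ d₂ g γ₁ γ₂ : ℝ) (hd₁ : 0 < d₁) (hd₂ : 0 < d₂)
    (Λ₁ Λ₂ Λ₃ : ℝ → ℝ) (MA MB c δ T : ℝ)
    (hMA : 1 ≤ MA) (hMB : 1 ≤ MB) (hc : 0 < c) (hδ0 : 0 < δ) (hδ1 : δ ≤ 1)
    (hδ2 : δ * (2 * (MA + MB + 1)) ≤ c)
    (hT : ∀ b ≥ T, (Λ₃ b < Λ₂ b ∧ Λ₂ b < Λ₁ b ∧ 0 < Λ₂ b ∧ Λ₃ b < 0 ∧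
        ∀ Λ : ℝ, phi d₁ d₂ g γ₁ γ₂ b Λ = (Λ - Λ₁ b) * (Λ - Λ₂ b) * (Λ - Λ₃ b)) ∧
      |b ^ 2 * DA d₁ d₂ γ₁ γ₂ b| < MA ∧ |b ^ 2 * DB d₁ d₂ g γ₁ γ₂ b| < MB ∧
      b ^ 2 * DC d₁ d₂ g γ₁ γ₂ b < -(c / 2) ∧ |Λ₃ b| < δ ∧ 1 ≤ b) :
    StrictMonoOn Λ₃ (Set.Ici (max T 1)) := by
  intro t ht s hs hts
  simp only [Set.mem_Ici] at ht hs
  have htT : T ≤ t := le_trans (le_max_left _ _) ht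
  have ht1 : (1:ℝ) ≤ t := le_trans (le_max_right _ _) ht
  have ht0 : (0:ℝ) < t := lt_of_lt_of_le one_pos ht1
  obtain ⟨hrt, _, _, _, hxδ, _⟩ := hT t htT
  have hx0 : Λ₃ t < 0 := hrt.2.2.2.1
  have hψderiv : ∀ r : ℝ, 0 < r → HasDerivAt (fun r => phi d₁ d₂ g γ₁ γ₂ r (Λ₃ t))
      (DA d₁ d₂ γ₁ γ₂ r * Λ₃ t ^ 2 + DB d₁ d₂ g γ₁ γ₂ r * Λ₃ t + DC d₁ d₂ g γ₁ γ₂ r) r := by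
    intro r hr
    have h1 := (((hasDerivAt_funA (γ₁ := γ₁) (γ₂ := γ₂) hd₁ hd₂ hr).mul_const
      (Λ₃ t ^ 2)).const_add (Λ₃ t ^ 3)).add
      ((hasDerivAt_funB (g := g) (γ₁ := γ₁) (γ₂ := γ₂) hd₁ hd₂ hr).mul_const (Λ₃ t))
    have h2 := h1.add (hasDerivAt_funC (g := g) (γ₁ := γ₁) (γ₂ := γ₂) hd₁ hd₂ hr)
    exact h2
  have hψneg : ∀ r : ℝ, T ≤ r → 1 ≤ r →
      DA d₁ d₂ γ₁ γ₂ r * Λ₃ t ^ 2 + DB d₁ d₂ g γ₁ γ₂ r * Λ₃ t + DC d₁ d₂ g γ₁ γ₂ r < 0 := by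
    intro r hrT hr1
    have hr0 : (0:ℝ) < r := lt_of_lt_of_le one_pos hr1
    obtain ⟨_, hA', hB', hC', _, _⟩ := hT r hrT
    have hx2 : |Λ₃ t| ^ 2 ≤ δ ^ 2 := by nlinarith [abs_nonneg (Λ₃ t)]
    have e1 : r ^ 2 * DA d₁ d₂ γ₁ γ₂ r * Λ₃ t ^ 2 ≤ MA * δ ^ 2 := by
      refine (le_abs_self _).trans ?_
      rw [abs_mul, abs_pow]
      exact mul_le_mul hA'.le hx2 (by positivity) (by linarith)
    have e2 : r ^ 2 * DB d₁ d₂ g γ₁ γ₂ r * Λ₃ t ≤ MB * δ := by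
      refine (le_abs_self _).trans ?_
      rw [abs_mul]
      exact mul_le_mul hB'.le hxδ.le (abs_nonneg _) (by linarith)
    have hδsq : δ ^ 2 ≤ δ := by nlinarith
    have efin : MA * δ ^ 2 + MB * δ - c / 2 < 0 := by
      have h1 : MA * δ ^ 2 ≤ MA * δ := mul_le_mul_of_nonneg_left hδsq (by linarith)
      nlinarith
    have hsum : r ^ 2 * (DA d₁ d₂ γ₁ γ₂ r * Λ₃ t ^ 2 + DB d₁ d₂ g γ₁ γ₂ r * Λ₃ t
        + DC d₁ d₂ g γ₁ γ₂ r) < 0 := by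
      have hring : r ^ 2 * (DA d₁ d₂ γ₁ γ₂ r * Λ₃ t ^ 2 + DB d₁ d₂ g γ₁ γ₂ r * Λ₃ t
          + DC d₁ d₂ g γ₁ γ₂ r) = r ^ 2 * DA d₁ d₂ γ₁ γ₂ r * Λ₃ t ^ 2
          + r ^ 2 * DB d₁ d₂ g γ₁ γ₂ r * Λ₃ t + r ^ 2 * DC d₁ d₂ g γ₁ γ₂ r := by ring
      rw [hring]
      linarith
    by_contra hcon
    push_neg at hcon
    nlinarith [mul_nonneg (by positivity : (0:ℝ) ≤ r ^ 2) hcon]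
  have hanti : StrictAntiOn (fun r => phi d₁ d₂ g γ₁ γ₂ r (Λ₃ t)) (Set.Ici t) := by
    apply strictAntiOn_of_deriv_neg (convex_Ici t)
    · intro r hr
      exact (hψderiv r (lt_of_lt_of_le ht0 hr)).continuousAt.continuousWithinAt
    · intro r hr
      rw [interior_Ici, Set.mem_Ioi] at hr
      rw [(hψderiv r (lt_trans ht0 hr)).deriv]
      exact hψneg r (le_trans htT hr.le) (le_trans ht1 hr.le)
  have hkey := hanti (Set.self_mem_Ici) (Set.mem_Ici.2 hts.le) hts
  have hψt : phi d₁ d₂ g γ₁ γ₂ t (Λ₃ t) = 0 := by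
    rw [hrt.2.2.2.2 (Λ₃ t)]
    ring
  simp only [hψt] at hkey
  obtain ⟨hrs, _, _, _, _, _⟩ := hT s (le_trans htT hts.le)
  obtain ⟨hs32, hs21, hs2pos, hs3neg, hsfac⟩ := hrs
  rw [hsfac (Λ₃ t)] at hkey
  by_contra hcon
  push_neg at hcon
  have hp := mul_pos_of_neg_of_neg (show Λ₃ t - Λ₁ s < 0 by nlinarith)
    (show Λ₃ t - Λ₂ s < 0 by nlinarith)
  nlinarith [mul_nonneg hp.le (show (0:ℝ) ≤ Λ₃ t - Λ₃ s by linarith [hcon])]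


/-- properties of the smallest root `Λ₃`: `∂Λφ(t,Λ₃(t)) > 0`
eventually, `t²·∂tφ(t,Λ₃(t)) → −gγ₂d₂`, `Λ₃` is eventually strictly
increasing, and bottom-layer stagnation holds when `γ₁d₁ + γ₂d₂ < 0`. -/
theorem smallest_root_properties
    (d₁ d₂ g γ₁ γ₂ : ℝ) (hd₁ : 0 < d₁) (hd₂ : 0 < d₂) (hg : 0 < g)
    (hγ₂ : 0 < γ₂) (hne : γ₁ ≠ γ₂) (Λ₁ Λ₂ Λ₃ : ℝ → ℝ)
    (hroots : ∀ᶠ t in atTop,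
      Λ₃ t < Λ₂ t ∧ Λ₂ t < Λ₁ t ∧ 0 < Λ₂ t ∧ Λ₃ t < 0 ∧
      ∀ Λ : ℝ, phi d₁ d₂ g γ₁ γ₂ t Λ = (Λ - Λ₁ t) * (Λ - Λ₂ t) * (Λ - Λ₃ t))
    (hlim2 : Tendsto Λ₂ atTop (nhds 0))
    (hlim3 : Tendsto Λ₃ atTop (nhds 0)) :
    (∀ᶠ t in atTop,
      0 < 3 * Λ₃ t ^ 2 + 2 * funA d₁ d₂ γ₁ γ₂ t * Λ₃ t + funB d₁ d₂ g γ₁ γ₂ t) ∧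
    Tendsto (fun t : ℝ =>
        t ^ 2 * (deriv (funA d₁ d₂ γ₁ γ₂) t * Λ₃ t ^ 2
          + deriv (funB d₁ d₂ g γ₁ γ₂) t * Λ₃ t + deriv (funC d₁ d₂ g γ₁ γ₂) t))
      atTop (nhds (-(g * (γ₂ * d₂)))) ∧
    (∃ t₀ > (0 : ℝ), StrictMonoOn Λ₃ (Set.Ici t₀)) ∧
    (γ₁ * d₁ + γ₂ * d₂ < 0 → ∀ᶠ t in atTop,
      (Λ₃ t - γ₂ * d₂) * (Λ₃ t - γ₁ * d₁ - γ₂ * d₂) ≤ 0) := by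
  have LA := tendsto_t2DA (γ₁ := γ₁) (γ₂ := γ₂) hd₁ hd₂
  have LB := tendsto_t2DB (g := g) (γ₁ := γ₁) (γ₂ := γ₂) hd₁ hd₂
  have LC := tendsto_t2DC (g := g) (γ₁ := γ₁) (γ₂ := γ₂) hd₁ hd₂
  refine ⟨?_, ?_, ?_, ?_⟩
  · -- Part 1
    filter_upwards [hroots] with t h
    obtain ⟨h32, h21, h2pos, h3neg, hfac⟩ := h
    have e0 := hfac 0
    have e1 := hfac 1
    have e2 := hfac (-1)
    simp only [phi] at e0 e1 e2
    have hA : funA d₁ d₂ γ₁ γ₂ t = -(Λ₁ t + Λ₂ t + Λ₃ t) := by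
      linear_combination (e1 + e2) / 2 - e0
    have hB : funB d₁ d₂ g γ₁ γ₂ t = Λ₁ t * Λ₂ t + Λ₁ t * Λ₃ t + Λ₂ t * Λ₃ t := by
      linear_combination (e1 - e2) / 2
    rw [hA, hB]
    nlinarith [mul_pos_of_neg_of_neg (show Λ₃ t - Λ₁ t < 0 by linarith)
      (show Λ₃ t - Λ₂ t < 0 by linarith)]
  · -- Part 2
    have hsq : Tendsto (fun t => Λ₃ t ^ 2) atTop (nhds 0) := by
      have h := hlim3.mul hlim3
      rw [mul_zero] at h
      exact h.congr fun t => (sq (Λ₃ t)).symm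
    have main := ((LA.mul hsq).add (LB.mul hlim3)).add LC
    rw [show (γ₁ + γ₂) / 2 * 0 + -(γ₂ ^ 2 * d₂ - g) * 0 + -(g * (γ₂ * d₂))
      = -(g * (γ₂ * d₂)) by ring] at main
    refine Tendsto.congr' ?_ main
    filter_upwards [eventually_gt_atTop (0 : ℝ)] with t ht
    rw [(hasDerivAt_funA (γ₁ := γ₁) (γ₂ := γ₂) hd₁ hd₂ ht).deriv,
      (hasDerivAt_funB (g := g) (γ₁ := γ₁) (γ₂ := γ₂) hd₁ hd₂ ht).deriv,
      (hasDerivAt_funC (g := g) (γ₁ := γ₁) (γ₂ := γ₂) hd₁ hd₂ ht).deriv]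
    ring
  · -- Part 3
    obtain ⟨MA, hMA, hAbd⟩ : ∃ M : ℝ, 1 ≤ M ∧
        ∀ᶠ t in atTop, |t ^ 2 * DA d₁ d₂ γ₁ γ₂ t| < M :=
      ⟨_, le_add_of_nonneg_left (abs_nonneg _), LA.abs.eventually_lt_const (lt_add_one _)⟩
    obtain ⟨MB, hMB, hBbd⟩ : ∃ M : ℝ, 1 ≤ M ∧
        ∀ᶠ t in atTop, |t ^ 2 * DB d₁ d₂ g γ₁ γ₂ t| < M :=
      ⟨_, le_add_of_nonneg_left (abs_nonneg _), LB.abs.eventually_lt_const (lt_add_one _)⟩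
    have hc : 0 < g * (γ₂ * d₂) := by positivity
    have hCbd : ∀ᶠ t in atTop, t ^ 2 * DC d₁ d₂ g γ₁ γ₂ t < -(g * (γ₂ * d₂) / 2) :=
      LC.eventually_lt_const (by linarith)
    obtain ⟨δ, hδ0, hδ1, hδ2⟩ : ∃ δ : ℝ, 0 < δ ∧ δ ≤ 1 ∧
        δ * (2 * (MA + MB + 1)) ≤ g * (γ₂ * d₂) := by
      refine ⟨min 1 (g * (γ₂ * d₂) / (2 * (MA + MB + 1))), ?_, min_le_left _ _, ?_⟩
      · exact lt_min one_pos (by positivity)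
      · have h := min_le_right (1:ℝ) (g * (γ₂ * d₂) / (2 * (MA + MB + 1)))
        rw [le_div_iff₀ (by linarith)] at h
        exact h
    have hsmall : ∀ᶠ t in atTop, |Λ₃ t| < δ := by
      have h := hlim3.abs
      rw [abs_zero] at h
      exact h.eventually_lt_const hδ0
    obtain ⟨T, hT⟩ := eventually_atTop.1
      (hroots.and (hAbd.and (hBbd.and (hCbd.and (hsmall.and (eventually_ge_atTop (1:ℝ)))))))
    refine ⟨max T 1, lt_of_lt_of_le one_pos (le_max_right _ _), ?_⟩
    refine part3_aux d₁ d₂ g γ₁ γ₂ hd₁ hd₂ Λ₁ Λ₂ Λ₃ MA MB (g * (γ₂ * d₂)) δ T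
      hMA hMB hc hδ0 hδ1 hδ2 ?_
    intro b hb
    obtain ⟨h1, h2, h3, h4, h5, h6⟩ := hT b hb
    exact ⟨h1, h2, h3, h4, h5, h6⟩
  · -- Part 4
    intro hcond
    have h1 : ∀ᶠ t in atTop, Λ₃ t < γ₂ * d₂ := hlim3.eventually_lt_const (by positivity)
    have h2 : ∀ᶠ t in atTop, γ₁ * d₁ + γ₂ * d₂ < Λ₃ t := hlim3.eventually_const_lt hcond
    filter_upwards [h1, h2] with t ha hb
    apply mul_nonpos_of_nonpos_of_nonneg (by linarith) (by linarith)
end
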